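/- arXiv:math-ph/9909023 — 5 statements merged into one kernel-verified Lean document; each statement's English description precedes it below -/
import Mathlib

section
/- Fix an integer m ≥ 2. For every positive integer d and every partition λ of d, the rational number f^{(m)}(λ) := −(1/m²) · (coefficient of y^{m+1} in ∏_{i=1}^{m}(1+(d−i+1/2)y) · ∏_{i=1}^{d}(1−(m+λ̃_i)y)·(1−λ̃_i y)^{−1} ∈ ℚ[[y]]) can be written as φ_m(p_1(λ), p_2(λ), …, p_m(λ)) for a single polynomial φ_m ∈ ℚ[Y_1,…,Y_m] that is independent of d and λ. That is, there exists φ_m ∈ ℚ[Y_1,…,Y_m] such that f^{(m)}(λ) = φ_m(p_1(λ),…,p_m(λ)) for all d ≥ 1 and all partitions λ of d. -/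
open Finset

/-- The shifted parts `λ̃ᵢ = λᵢ - i + 1/2` of a partition (with `i` one-based;
here the index `i : Fin d` is zero-based, so the `i`-th part is `λ_{i+1}`). -/
noncomputable def shiftedPart (d : ℕ) (lam : Fin d → ℕ) (i : Fin d) : ℚ :=
  (lam i : ℚ) - ((i : ℕ) + 1) + 1 / 2

/-- The shifted power sum `p_k(λ) = Σᵢ (λ̃ᵢ^k − (−i+1/2)^k)`. -/
noncomputable def shiftedPowerSum (d : ℕ) (lam : Fin d → ℕ) (k : ℕ) : ℚ :=
  ∑ i : Fin d, (shiftedPart d lam i ^ k - (-(((i : ℕ) : ℚ) + 1) + 1 / 2) ^ k)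

/-- `f^{(m)}(λ) = −(1/m²) · [y^{m+1}] ∏_{i=1}^{m}(1+(d−i+1/2)y) ·
∏_{i=1}^{d}(1−(m+λ̃ᵢ)y)·(1−λ̃ᵢ y)⁻¹` in `ℚ[[y]]`. -/
noncomputable def charValue (m d : ℕ) (lam : Fin d → ℕ) : ℚ :=
  -(1 / (m : ℚ) ^ 2) * (PowerSeries.coeff (R := ℚ) (m + 1))
    ((∏ t : Fin m, (1 + PowerSeries.C (R := ℚ) ((d : ℚ) - ((t : ℕ) + 1) + 1 / 2) * PowerSeries.X)) *
      ∏ i : Fin d,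
        ((1 - PowerSeries.C (R := ℚ) ((m : ℚ) + shiftedPart d lam i) * PowerSeries.X) *
          (1 - PowerSeries.C (R := ℚ) (shiftedPart d lam i) * PowerSeries.X)⁻¹))

open PowerSeries
noncomputable def geo (a : ℚ) : ℚ⟦X⟧ := PowerSeries.mk (fun n => a ^ n)

lemma geo_mul (a : ℚ) : geo a * (1 - PowerSeries.C (R := ℚ) a * X) = 1 := by
  ext n
  cases n with
  | zero => simp [geo]
  | succ k =>
    simp [geo, mul_sub, mul_one, ← mul_assoc, mul_comm (PowerSeries.mk fun n => a ^ n) (PowerSeries.C (R := ℚ) a), coeff_succ_mul_X, map_sub, pow_succ, mul_comm a]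


lemma inv_one_sub (a : ℚ) : (1 - PowerSeries.C (R := ℚ) a * X)⁻¹ = geo a := by
  symm
  rw [PowerSeries.eq_inv_iff_mul_eq_one (by simp)]
  exact geo_mul a

lemma geo_sq_coeff (a : ℚ) (n : ℕ) :
    (PowerSeries.coeff (R := ℚ) n) (geo a * geo a) = (n + 1 : ℚ) * a ^ n := by
  rw [PowerSeries.coeff_mul]
  have hc : ∀ p ∈ Finset.HasAntidiagonal.antidiagonal n,
      (PowerSeries.coeff (R := ℚ) p.1) (geo a) * (PowerSeries.coeff (R := ℚ) p.2) (geo a) = a ^ n := by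
    intro p hp
    rw [Finset.HasAntidiagonal.mem_antidiagonal] at hp
    simp only [geo, coeff_mk]
    rw [← pow_add, hp]
  rw [Finset.sum_congr rfl hc, Finset.sum_const, Finset.Nat.card_antidiagonal]
  push_cast
  ring

lemma coeff_derivativeFun' (f : ℚ⟦X⟧) (n : ℕ) :
    PowerSeries.coeff (R := ℚ) n f.derivativeFun = PowerSeries.coeff (R := ℚ) (n + 1) f * (n + 1) :=
  PowerSeries.coeff_derivative f n

lemma geo_deriv (a : ℚ) : (geo a).derivativeFun = PowerSeries.C (R := ℚ) a * (geo a * geo a) := by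
  ext n
  rw [coeff_derivativeFun', PowerSeries.coeff_C_mul, geo_sq_coeff]
  simp only [geo, coeff_mk]
  push_cast
  ring

/-- derivative of a finite product, given per-factor logarithmic derivatives -/
lemma deriv_prod {ι : Type*} (s : Finset ι) (G L : ι → ℚ⟦X⟧)
    (h : ∀ i ∈ s, (G i).derivativeFun = G i * L i) :
    (∏ i ∈ s, G i).derivativeFun = (∏ i ∈ s, G i) * ∑ i ∈ s, L i := by
  classical
  induction s using Finset.induction_on with
  | empty => simp [PowerSeries.derivativeFun_one]
  | @insert x s' hx ih =>
    rw [Finset.prod_insert hx, Finset.sum_insert hx, PowerSeries.derivativeFun_mul,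
      ih (fun i hi => h i (Finset.mem_insert_of_mem hi)), h x (Finset.mem_insert_self x s')]
    simp only [smul_eq_mul]
    ring

lemma lin_deriv (c : ℚ) : (1 + PowerSeries.C (R := ℚ) c * X : ℚ⟦X⟧).derivativeFun = PowerSeries.C (R := ℚ) c := by
  ext n
  rw [coeff_derivativeFun']
  cases n with
  | zero => simp
  | succ k => simp [PowerSeries.coeff_C, PowerSeries.coeff_X]

noncomputable def factorA (c : ℚ) : ℚ⟦X⟧ := 1 + PowerSeries.C (R := ℚ) c * X
noncomputable def LA (c : ℚ) : ℚ⟦X⟧ := PowerSeries.C (R := ℚ) c * geo (-c)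

lemma factorA_deriv (c : ℚ) : (factorA c).derivativeFun = factorA c * LA c := by
  have hg : geo (-c) * (1 + PowerSeries.C (R := ℚ) c * X) = 1 := by
    simpa [map_neg, sub_neg_eq_add] using geo_mul (-c)
  rw [factorA, lin_deriv, LA]
  linear_combination (-PowerSeries.C (R := ℚ) c) * hg

noncomputable def factorF (b a : ℚ) : ℚ⟦X⟧ := (1 - PowerSeries.C (R := ℚ) b * X) * geo a
noncomputable def LF (b a : ℚ) : ℚ⟦X⟧ :=
  PowerSeries.C (R := ℚ) a * geo a - PowerSeries.C (R := ℚ) b * geo b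

lemma one_sub_deriv (c : ℚ) :
    (1 - PowerSeries.C (R := ℚ) c * X : ℚ⟦X⟧).derivativeFun = PowerSeries.C (R := ℚ) (-c) := by
  have h : (1 - PowerSeries.C (R := ℚ) c * X : ℚ⟦X⟧) = 1 + PowerSeries.C (R := ℚ) (-c) * X := by
    simp [map_neg]; ring
  rw [h, lin_deriv]

lemma factorF_deriv (b a : ℚ) : (factorF b a).derivativeFun = factorF b a * LF b a := by
  rw [factorF, PowerSeries.derivativeFun_mul, geo_deriv, one_sub_deriv, LF]
  simp only [smul_eq_mul, map_neg]
  linear_combination (PowerSeries.C (R := ℚ) b * geo a) * geo_mul b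

noncomputable def Hs (m d : ℕ) (a : Fin d → ℚ) : ℚ⟦X⟧ :=
  (∏ t : Fin m, factorA ((d : ℚ) - ((t : ℕ) + 1) + 1 / 2)) *
    ∏ i : Fin d, factorF ((m : ℚ) + a i) (a i)

noncomputable def Ls (m d : ℕ) (a : Fin d → ℚ) : ℚ⟦X⟧ :=
  (∑ t : Fin m, LA ((d : ℚ) - ((t : ℕ) + 1) + 1 / 2)) +
    ∑ i : Fin d, LF ((m : ℚ) + a i) (a i)

lemma Hs_deriv (m d : ℕ) (a : Fin d → ℚ) :
    (Hs m d a).derivativeFun = Hs m d a * Ls m d a := by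
  rw [Hs, Ls, PowerSeries.derivativeFun_mul,
    deriv_prod Finset.univ (fun t : Fin m => factorA ((d : ℚ) - ((t : ℕ) + 1) + 1 / 2))
      (fun t : Fin m => LA ((d : ℚ) - ((t : ℕ) + 1) + 1 / 2)) (fun t _ => factorA_deriv _),
    deriv_prod Finset.univ (fun i : Fin d => factorF ((m : ℚ) + a i) (a i))
      (fun i : Fin d => LF ((m : ℚ) + a i) (a i)) (fun i _ => factorF_deriv _ _)]
  simp only [smul_eq_mul]
  ring

lemma coeff_succ_Hs (m d : ℕ) (a : Fin d → ℚ) (n : ℕ) :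
    PowerSeries.coeff (R := ℚ) (n + 1) (Hs m d a) * ((n : ℚ) + 1) =
      ∑ p ∈ Finset.HasAntidiagonal.antidiagonal n,
        PowerSeries.coeff (R := ℚ) p.1 (Hs m d a) * PowerSeries.coeff (R := ℚ) p.2 (Ls m d a) := by
  have h := congrArg (PowerSeries.coeff (R := ℚ) n) (Hs_deriv m d a)
  rwa [coeff_derivativeFun', PowerSeries.coeff_mul] at h

lemma coeff_zero_Hs (m d : ℕ) (a : Fin d → ℚ) : PowerSeries.coeff (R := ℚ) 0 (Hs m d a) = 1 := by
  simp [Hs, factorA, factorF, geo, PowerSeries.coeff_zero_eq_constantCoeff]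

lemma coeff_LA (c : ℚ) (n : ℕ) : PowerSeries.coeff (R := ℚ) n (LA c) = c * (-c) ^ n := by
  simp [LA, geo]

lemma coeff_LF (b a : ℚ) (n : ℕ) :
    PowerSeries.coeff (R := ℚ) n (LF b a) = a ^ (n + 1) - b ^ (n + 1) := by
  simp [LF, geo, pow_succ, mul_comm]

noncomputable def vals (m d : ℕ) (a : Fin d → ℚ) : Fin (m + 1) → ℚ :=
  fun k => ∑ i : Fin d, a i ^ (k : ℕ)

noncomputable def ccP (m : ℕ) (t : Fin m) : MvPolynomial (Fin (m + 1)) ℚ :=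
  MvPolynomial.X 0 - MvPolynomial.C ((t : ℕ) + 1 : ℚ) + MvPolynomial.C (1 / 2)

noncomputable def ΛP (m n : ℕ) : MvPolynomial (Fin (m + 1)) ℚ :=
  (∑ t : Fin m, ccP m t * (-ccP m t) ^ n) -
    ∑ j ∈ Finset.range (n + 1),
      MvPolynomial.C (((n + 1).choose j : ℚ) * (m : ℚ) ^ (n + 1 - j)) *
        MvPolynomial.X (if h : j < m + 1 then ⟨j, h⟩ else 0)

lemma vals_apply (m d : ℕ) (a : Fin d → ℚ) (j : ℕ) (h : j < m + 1) :
    vals m d a ⟨j, h⟩ = ∑ i : Fin d, a i ^ j := rfl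

lemma vals_zero (m d : ℕ) (a : Fin d → ℚ) : vals m d a 0 = d := by
  simp [vals]

lemma eval_ccP (m d : ℕ) (a : Fin d → ℚ) (t : Fin m) :
    MvPolynomial.eval (vals m d a) (ccP m t) = (d : ℚ) - ((t : ℕ) + 1) + 1 / 2 := by
  simp [ccP, vals_zero]

lemma coeff_Ls_eval (m d : ℕ) (a : Fin d → ℚ) (n : ℕ) (hn : n ≤ m) :
    PowerSeries.coeff (R := ℚ) n (Ls m d a) = MvPolynomial.eval (vals m d a) (ΛP m n) := by
  rw [Ls, map_add, map_sum, map_sum, ΛP, map_sub, map_sum, map_sum]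
  have hA : ∀ t : Fin m, t ∈ Finset.univ →
      PowerSeries.coeff (R := ℚ) n (LA ((d : ℚ) - ((t : ℕ) + 1) + 1 / 2)) =
        MvPolynomial.eval (vals m d a) (ccP m t * (-ccP m t) ^ n) := by
    intro t _
    rw [coeff_LA, map_mul, map_pow, map_neg, eval_ccP]
  rw [Finset.sum_congr rfl hA]
  have hbin : ∀ i : Fin d, PowerSeries.coeff (R := ℚ) n (LF ((m : ℚ) + a i) (a i)) =
      -∑ j ∈ Finset.range (n + 1),
        ((n + 1).choose j : ℚ) * (m : ℚ) ^ (n + 1 - j) * a i ^ j := by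
    intro i
    rw [coeff_LF, add_comm (m : ℚ) (a i), add_pow, Finset.sum_range_succ]
    simp only [Nat.sub_self, pow_zero, Nat.choose_self, Nat.cast_one, mul_one]
    have hS : ∑ j ∈ Finset.range (n + 1), a i ^ j * (m : ℚ) ^ (n + 1 - j) * ((n + 1).choose j : ℚ)
        = ∑ j ∈ Finset.range (n + 1), ((n + 1).choose j : ℚ) * (m : ℚ) ^ (n + 1 - j) * a i ^ j :=
      Finset.sum_congr rfl (fun j _ => by ring)
    rw [hS]
    ring
  rw [Finset.sum_congr rfl (fun i _ => hbin i)]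
  have hRB : ∀ j ∈ Finset.range (n + 1),
      MvPolynomial.eval (vals m d a)
        (MvPolynomial.C (((n + 1).choose j : ℚ) * (m : ℚ) ^ (n + 1 - j)) *
          MvPolynomial.X (if h : j < m + 1 then ⟨j, h⟩ else 0)) =
        ((n + 1).choose j : ℚ) * (m : ℚ) ^ (n + 1 - j) * ∑ i : Fin d, a i ^ j := by
    intro j hj
    rw [Finset.mem_range] at hj
    have hjm : j < m + 1 := by omega
    rw [dif_pos hjm, map_mul, MvPolynomial.eval_C, MvPolynomial.eval_X, vals_apply]
  rw [Finset.sum_congr rfl hRB, Finset.sum_neg_distrib, Finset.sum_comm]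
  have hms : ∀ j ∈ Finset.range (n + 1),
      (∑ i : Fin d, ((n + 1).choose j : ℚ) * (m : ℚ) ^ (n + 1 - j) * a i ^ j) =
        ((n + 1).choose j : ℚ) * (m : ℚ) ^ (n + 1 - j) * ∑ i : Fin d, a i ^ j :=
    fun j _ => (Finset.mul_sum _ _ _).symm
  rw [Finset.sum_congr rfl hms]
  ring

lemma main_exists (m : ℕ) : ∀ n : ℕ, n ≤ m + 1 → ∃ Ψ : MvPolynomial (Fin (m + 1)) ℚ,
    ∀ (d : ℕ) (a : Fin d → ℚ),
      PowerSeries.coeff (R := ℚ) n (Hs m d a) = MvPolynomial.eval (vals m d a) Ψ := by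
  intro n
  induction n using Nat.strong_induction_on with
  | _ n ih =>
    intro hn
    match n with
    | 0 => exact ⟨1, fun d a => by rw [coeff_zero_Hs]; simp⟩
    | (k + 1) =>
      have ih' : ∀ j : ℕ, ∃ Ψ : MvPolynomial (Fin (m + 1)) ℚ, j ≤ k →
          ∀ (d : ℕ) (a : Fin d → ℚ),
            PowerSeries.coeff (R := ℚ) j (Hs m d a) = MvPolynomial.eval (vals m d a) Ψ := by
        intro j
        by_cases hj : j ≤ k
        · obtain ⟨Ψ, hΨ⟩ := ih j (by omega) (by omega)
          exact ⟨Ψ, fun _ => hΨ⟩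
        · exact ⟨0, fun h => absurd h hj⟩
      choose Ψf hΨf using ih'
      refine ⟨MvPolynomial.C (1 / ((k : ℚ) + 1)) *
        ∑ p ∈ Finset.HasAntidiagonal.antidiagonal k, Ψf p.1 * ΛP m p.2, fun d a => ?_⟩
      have hrec := coeff_succ_Hs m d a k
      have hterm : ∀ p ∈ Finset.HasAntidiagonal.antidiagonal k,
          PowerSeries.coeff (R := ℚ) p.1 (Hs m d a) * PowerSeries.coeff (R := ℚ) p.2 (Ls m d a) =
            MvPolynomial.eval (vals m d a) (Ψf p.1 * ΛP m p.2) := by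
        intro p hp
        rw [Finset.HasAntidiagonal.mem_antidiagonal] at hp
        rw [map_mul, hΨf p.1 (by omega) d a, coeff_Ls_eval m d a p.2 (by omega)]
      rw [Finset.sum_congr rfl hterm] at hrec
      rw [map_mul, MvPolynomial.eval_C, map_sum, ← hrec]
      have hk : ((k : ℚ) + 1) ≠ 0 := by positivity
      field_simp

lemma charValue_eq (m d : ℕ) (lam : Fin d → ℕ) :
    charValue m d lam =
      -(1 / (m : ℚ) ^ 2) *
        PowerSeries.coeff (R := ℚ) (m + 1) (Hs m d (shiftedPart d lam)) := by
  unfold charValue Hs factorA factorF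
  simp only [inv_one_sub]

lemma sum_shift_poly (k : ℕ) (r : ℚ) : ∃ q : Polynomial ℚ, ∀ n : ℕ,
    Polynomial.eval (n : ℚ) q = ∑ i ∈ Finset.range n, ((i : ℚ) + r) ^ k := by
  refine ⟨∑ j ∈ Finset.range (k + 1), Polynomial.C (r ^ (k - j) * (k.choose j : ℚ)) *
      ∑ l ∈ Finset.range (j + 1),
        Polynomial.C (bernoulli l * ((j + 1).choose l : ℚ) / ((j : ℚ) + 1)) *
          Polynomial.X ^ (j + 1 - l), fun n => ?_⟩
  rw [Polynomial.eval_finset_sum]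
  have hL : ∀ j ∈ Finset.range (k + 1),
      Polynomial.eval (n : ℚ) (Polynomial.C (r ^ (k - j) * (k.choose j : ℚ)) *
        ∑ l ∈ Finset.range (j + 1),
          Polynomial.C (bernoulli l * ((j + 1).choose l : ℚ) / ((j : ℚ) + 1)) *
            Polynomial.X ^ (j + 1 - l)) =
      r ^ (k - j) * (k.choose j : ℚ) * ∑ i ∈ Finset.range n, (i : ℚ) ^ j := by
    intro j _
    rw [Polynomial.eval_mul, Polynomial.eval_C, Polynomial.eval_finset_sum,
      _root_.sum_range_pow n j]
    congr 1
    refine Finset.sum_congr rfl (fun l _ => ?_)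
    rw [Polynomial.eval_mul, Polynomial.eval_C, Polynomial.eval_pow, Polynomial.eval_X]
    push_cast
    ring
  rw [Finset.sum_congr rfl hL]
  have hR : ∀ i ∈ Finset.range n, ((i : ℚ) + r) ^ k =
      ∑ j ∈ Finset.range (k + 1), r ^ (k - j) * (k.choose j : ℚ) * (i : ℚ) ^ j := by
    intro i _
    rw [add_pow]
    exact Finset.sum_congr rfl (fun j _ => by ring)
  rw [Finset.sum_congr rfl hR, Finset.sum_comm]
  refine Finset.sum_congr rfl (fun j _ => ?_)
  rw [Finset.mul_sum]

lemma sum_negshift (k : ℕ) : ∃ q : Polynomial ℚ, ∀ n : ℕ,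
    Polynomial.eval (n : ℚ) q = ∑ i ∈ Finset.range n, (-((i : ℚ) + 1) + 1 / 2) ^ k := by
  obtain ⟨q, hq⟩ := sum_shift_poly k (1 / 2)
  refine ⟨Polynomial.C ((-1 : ℚ) ^ k) * q, fun n => ?_⟩
  rw [Polynomial.eval_mul, Polynomial.eval_C, hq, Finset.mul_sum]
  refine Finset.sum_congr rfl (fun i _ => ?_)
  have hb : (-((i : ℚ) + 1) + 1 / 2) = (-1) * ((i : ℚ) + 1 / 2) := by ring
  rw [hb, mul_pow]

lemma mv_aeval_eq_eval {n : ℕ} (pv : Fin n → ℚ) (y : MvPolynomial (Fin n) ℚ) :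
    MvPolynomial.aeval pv y = MvPolynomial.eval pv y := by
  rw [MvPolynomial.aeval_def, Algebra.algebraMap_self]
  rfl

lemma eval_polyaeval {n : ℕ} (pv : Fin n → ℚ) (x : MvPolynomial (Fin n) ℚ) (p : Polynomial ℚ) :
    MvPolynomial.eval pv (Polynomial.aeval x p) =
      Polynomial.eval (MvPolynomial.eval pv x) p := by
  rw [← mv_aeval_eq_eval, ← mv_aeval_eq_eval, ← Polynomial.aeval_algHom_apply]
  exact congrFun (Polynomial.coe_aeval_eq_eval _) p

lemma eval_bind₁' {n n' : ℕ} (pv : Fin n → ℚ) (g : Fin n' → MvPolynomial (Fin n) ℚ)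
    (Ψ : MvPolynomial (Fin n') ℚ) :
    MvPolynomial.eval pv (MvPolynomial.bind₁ g Ψ) =
      MvPolynomial.eval (fun i => MvPolynomial.eval pv (g i)) Ψ := by
  rw [← mv_aeval_eq_eval, MvPolynomial.aeval_bind₁]
  simp only [mv_aeval_eq_eval]


/-- There is one polynomial `φ_m ∈ ℚ[Y₁,…,Y_m]`, independent of `d` and `λ`, with
`f^{(m)}(λ) = φ_m(p₁(λ),…,p_m(λ))` for all `d ≥ 1` and all partitions `λ` of `d`. -/
theorem statement0 (m : ℕ) (hm : 2 ≤ m) :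
    ∃ φ : MvPolynomial (Fin m) ℚ,
      ∀ d : ℕ, 1 ≤ d → ∀ lam : Fin d → ℕ,
        (∀ i j : Fin d, i ≤ j → lam j ≤ lam i) → (∑ i, lam i) = d →
          charValue m d lam =
            MvPolynomial.eval (fun k : Fin m => shiftedPowerSum d lam ((k : ℕ) + 1)) φ := by
  obtain ⟨Ψ, hΨ⟩ := main_exists m (m + 1) le_rfl
  choose q hq using sum_negshift
  have hm0 : 0 < m := by omega
  set σ : Fin (m + 1) → MvPolynomial (Fin m) ℚ :=
    fun k => if (k : ℕ) = 0 then MvPolynomial.X ⟨0, hm0⟩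
      else MvPolynomial.X ⟨(k : ℕ) - 1, by have := k.isLt; omega⟩ +
        Polynomial.aeval (MvPolynomial.X (⟨0, hm0⟩ : Fin m)) (q (k : ℕ)) with hσ
  refine ⟨MvPolynomial.C (-(1 / (m : ℚ) ^ 2)) * MvPolynomial.bind₁ σ Ψ, ?_⟩
  intro d _hd lam _hmono hsum
  set a : Fin d → ℚ := shiftedPart d lam with ha
  set pv : Fin m → ℚ := fun k => shiftedPowerSum d lam ((k : ℕ) + 1) with hpv
  have hp1 : pv ⟨0, hm0⟩ = (d : ℚ) := by
    rw [hpv]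
    simp only [shiftedPowerSum]
    have h1 : ∀ i ∈ (Finset.univ : Finset (Fin d)),
        shiftedPart d lam i ^ ((0 : ℕ) + 1) - (-(((i : ℕ) : ℚ) + 1) + 1 / 2) ^ ((0 : ℕ) + 1)
          = (lam i : ℚ) := by
      intro i _
      simp only [pow_one, shiftedPart]
      ring
    rw [Finset.sum_congr rfl h1, ← Nat.cast_sum, hsum]
  have hσval : ∀ k : Fin (m + 1), MvPolynomial.eval pv (σ k) = vals m d a k := by
    intro k
    by_cases h0 : (k : ℕ) = 0
    · rw [hσ]
      simp only [h0, if_pos, MvPolynomial.eval_X]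
      rw [hp1]
      simp [vals, h0]
    · rw [hσ]
      simp only [h0, if_neg, MvPolynomial.eval_add, MvPolynomial.eval_X, eval_polyaeval,
        if_false]
      rw [hp1, hq (k : ℕ) d]
      have hk1 : (k : ℕ) - 1 + 1 = (k : ℕ) := by omega
      rw [hpv]
      simp only []
      rw [hk1]
      have hsps : shiftedPowerSum d lam (k : ℕ) =
          (∑ i : Fin d, a i ^ (k : ℕ)) - ∑ i : Fin d, (-(((i : ℕ) : ℚ) + 1) + 1 / 2) ^ (k : ℕ) := by
        rw [shiftedPowerSum, Finset.sum_sub_distrib, ha]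
      rw [hsps, vals]
      have hfr : ∑ i ∈ Finset.range d, (-((i : ℚ) + 1) + 1 / 2) ^ (k : ℕ) =
          ∑ i : Fin d, (-(((i : ℕ) : ℚ) + 1) + 1 / 2) ^ (k : ℕ) :=
        (Fin.sum_univ_eq_sum_range (fun i => (-((i : ℚ) + 1) + 1 / 2) ^ (k : ℕ)) d).symm
      rw [hfr]
      ring
  rw [charValue_eq, map_mul, MvPolynomial.eval_C, eval_bind₁']
  have : (fun i => MvPolynomial.eval pv (σ i)) = vals m d a := funext hσval
  rw [this, ← hΨ d a, ha]
end

section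
/- For every positive integer d and every partition λ of d: (a) for m = 2, −(1/4) · (coefficient of y^3 in ∏_{i=1}^{2}(1+(d−i+1/2)y) · ∏_{i=1}^{d}(1−(2+λ̃_i)y)·(1−λ̃_i y)^{−1}) = p_2(λ)/2; (b) for m = 3, −(1/9) · (coefficient of y^4 in ∏_{i=1}^{3}(1+(d−i+1/2)y) · ∏_{i=1}^{d}(1−(3+λ̃_i)y)·(1−λ̃_i y)^{−1}) = p_3(λ)/3 − p_1(λ)²/2 + (5/12)p_1(λ); (c) for m = 4, −(1/16) · (coefficient of y^5 in ∏_{i=1}^{4}(1+(d−i+1/2)y) · ∏_{i=1}^{d}(1−(4+λ̃_i)y)·(1−λ̃_i y)^{−1}) = p_4(λ)/4 − p_1(λ)p_2(λ) + (11/8)p_2(λ). -/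
open Finset PowerSeries

noncomputable def G (m c : ℚ) : PowerSeries ℚ :=
  PowerSeries.mk fun n => if n = 0 then 1 else -m * c ^ (n - 1)

lemma inv_one_sub_CX (c : ℚ) :
    (1 - PowerSeries.C (R := ℚ) c * X)⁻¹ = PowerSeries.mk fun n => c ^ n := by
  rw [PowerSeries.inv_eq_iff_mul_eq_one (by simp)]
  ext n
  cases n with
  | zero => simp
  | succ n =>
    rw [mul_sub, mul_one, map_sub, mul_left_comm, PowerSeries.coeff_C_mul,
      PowerSeries.coeff_succ_mul_X]
    simp [pow_succ, mul_comm]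

lemma factor_eq (m c : ℚ) :
    (1 - PowerSeries.C (R := ℚ) (m + c) * X) * (1 - PowerSeries.C (R := ℚ) c * X)⁻¹ = G m c := by
  rw [inv_one_sub_CX]
  ext n
  cases n with
  | zero => simp [G]
  | succ n =>
    rw [sub_mul, one_mul, map_sub, mul_assoc, PowerSeries.coeff_C_mul,
      PowerSeries.coeff_succ_X_mul]
    simp only [G, PowerSeries.coeff_mk, Nat.succ_ne_zero, if_false, Nat.add_sub_cancel]
    ring

lemma linS (a : ℚ) (ψ : PowerSeries ℚ) (n : ℕ) :
    PowerSeries.coeff (R := ℚ) (n+1) ((1 + PowerSeries.C (R := ℚ) a * PowerSeries.X) * ψ) =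
      PowerSeries.coeff (R := ℚ) (n+1) ψ + a * PowerSeries.coeff (R := ℚ) n ψ := by
  rw [add_mul, one_mul, map_add, mul_assoc, PowerSeries.coeff_C_mul,
    PowerSeries.coeff_succ_X_mul]

lemma linC (a : ℚ) (ψ : PowerSeries ℚ) (n : ℕ) :
    PowerSeries.coeff (R := ℚ) n ((1 + PowerSeries.C (R := ℚ) a * PowerSeries.X) * ψ) =
      PowerSeries.coeff (R := ℚ) n ψ + a * (if n = 0 then 0 else PowerSeries.coeff (R := ℚ) (n-1) ψ) := by
  cases n with
  | zero => simp [PowerSeries.coeff_zero_eq_constantCoeff, map_mul, map_add]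
  | succ n => rw [linS]; simp

lemma prodG_coeffs {ι : Type*} (m : ℚ) (s : Finset ι) (c : ι → ℚ) :
    (PowerSeries.coeff (R := ℚ) 0) (∏ i ∈ s, G m (c i)) = 1 ∧
    (PowerSeries.coeff (R := ℚ) 1) (∏ i ∈ s, G m (c i)) = -m * (s.card : ℚ) ∧
    (PowerSeries.coeff (R := ℚ) 2) (∏ i ∈ s, G m (c i)) =
      -m * (∑ i ∈ s, c i) - (1/2 : ℚ) * m^2 * (s.card : ℚ) +
      (1/2 : ℚ) * m^2 * (s.card : ℚ)^2 ∧
    (PowerSeries.coeff (R := ℚ) 3) (∏ i ∈ s, G m (c i)) =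
      -m * (∑ i ∈ s, c i ^ 2) - m^2 * (∑ i ∈ s, c i) + m^2 * (s.card : ℚ) * (∑ i ∈ s, c i)
      - (1/3 : ℚ) * m^3 * (s.card : ℚ) + (1/2 : ℚ) * m^3 * (s.card : ℚ)^2
      - (1/6 : ℚ) * m^3 * (s.card : ℚ)^3 ∧
    (PowerSeries.coeff (R := ℚ) 4) (∏ i ∈ s, G m (c i)) =
      -m * (∑ i ∈ s, c i ^ 3) - (3/2 : ℚ) * m^2 * (∑ i ∈ s, c i ^ 2)
      + (1/2 : ℚ) * m^2 * (∑ i ∈ s, c i)^2 + m^2 * (s.card : ℚ) * (∑ i ∈ s, c i ^ 2)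
      - m^3 * (∑ i ∈ s, c i) + (3/2 : ℚ) * m^3 * (s.card : ℚ) * (∑ i ∈ s, c i)
      - (1/2 : ℚ) * m^3 * (s.card : ℚ)^2 * (∑ i ∈ s, c i)
      - (1/4 : ℚ) * m^4 * (s.card : ℚ) + (11/24 : ℚ) * m^4 * (s.card : ℚ)^2
      - (1/4 : ℚ) * m^4 * (s.card : ℚ)^3 + (1/24 : ℚ) * m^4 * (s.card : ℚ)^4 ∧
    (PowerSeries.coeff (R := ℚ) 5) (∏ i ∈ s, G m (c i)) =
      -m * (∑ i ∈ s, c i ^ 4) - (2 : ℚ) * m^2 * (∑ i ∈ s, c i ^ 3)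
      + m^2 * (∑ i ∈ s, c i) * (∑ i ∈ s, c i ^ 2) + m^2 * (s.card : ℚ) * (∑ i ∈ s, c i ^ 3)
      - (2 : ℚ) * m^3 * (∑ i ∈ s, c i ^ 2) + m^3 * (∑ i ∈ s, c i)^2
      + (2 : ℚ) * m^3 * (s.card : ℚ) * (∑ i ∈ s, c i ^ 2)
      - (1/2 : ℚ) * m^3 * (s.card : ℚ) * (∑ i ∈ s, c i)^2
      - (1/2 : ℚ) * m^3 * (s.card : ℚ)^2 * (∑ i ∈ s, c i ^ 2)
      - m^4 * (∑ i ∈ s, c i) + (11/6 : ℚ) * m^4 * (s.card : ℚ) * (∑ i ∈ s, c i)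
      - m^4 * (s.card : ℚ)^2 * (∑ i ∈ s, c i)
      + (1/6 : ℚ) * m^4 * (s.card : ℚ)^3 * (∑ i ∈ s, c i)
      - (1/5 : ℚ) * m^5 * (s.card : ℚ) + (5/12 : ℚ) * m^5 * (s.card : ℚ)^2
      - (7/24 : ℚ) * m^5 * (s.card : ℚ)^3 + (1/12 : ℚ) * m^5 * (s.card : ℚ)^4
      - (1/120 : ℚ) * m^5 * (s.card : ℚ)^5 := by
  induction s using Finset.cons_induction with
  | empty => simp
  | cons a s ha ih =>
    obtain ⟨h0, h1, h2, h3, h4, h5⟩ := ih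
    have e : ∀ n : ℕ, (PowerSeries.coeff (R := ℚ) n) (∏ i ∈ Finset.cons a s ha, G m (c i)) =
        ∑ j ∈ Finset.range (n+1),
          (if j = 0 then 1 else -m * c a ^ (j-1)) *
            (PowerSeries.coeff (R := ℚ) (n - j)) (∏ i ∈ s, G m (c i)) := by
      intro n
      rw [Finset.prod_cons, PowerSeries.coeff_mul,
        Finset.Nat.sum_antidiagonal_eq_sum_range_succ_mk]
      simp [G]
    refine ⟨?_, ?_, ?_, ?_, ?_, ?_⟩ <;>
      simp only [e, Finset.sum_range_succ, Finset.sum_range_zero, Finset.card_cons,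
        Finset.sum_cons, Nat.cast_add, Nat.cast_one] <;>
      norm_num [h0, h1, h2, h3, h4, h5] <;>
      ring

lemma tsum1 (d : ℕ) : ∑ i : Fin d, (-(((i : ℕ) : ℚ) + 1) + 1/2) = -(d:ℚ)^2/2 := by
  induction d with
  | zero => simp
  | succ n ih => rw [Fin.sum_univ_castSucc]; simp only [Fin.coe_castSucc, Fin.val_last, ih]
                 push_cast; ring

lemma tsum2 (d : ℕ) : ∑ i : Fin d, (-(((i : ℕ) : ℚ) + 1) + 1/2)^2 = (d:ℚ)^3/3 - (d:ℚ)/12 := by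
  induction d with
  | zero => simp
  | succ n ih => rw [Fin.sum_univ_castSucc]; simp only [Fin.coe_castSucc, Fin.val_last, ih]
                 push_cast; ring

lemma tsum3 (d : ℕ) : ∑ i : Fin d, (-(((i : ℕ) : ℚ) + 1) + 1/2)^3 = (d:ℚ)^2/8 - (d:ℚ)^4/4 := by
  induction d with
  | zero => simp
  | succ n ih => rw [Fin.sum_univ_castSucc]; simp only [Fin.coe_castSucc, Fin.val_last, ih]
                 push_cast; ring

lemma tsum4 (d : ℕ) : ∑ i : Fin d, (-(((i : ℕ) : ℚ) + 1) + 1/2)^4 =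
    (d:ℚ)^5/5 - (d:ℚ)^3/6 + 7*(d:ℚ)/240 := by
  induction d with
  | zero => simp
  | succ n ih => rw [Fin.sum_univ_castSucc]; simp only [Fin.coe_castSucc, Fin.val_last, ih]
                 push_cast; ring


/-- The explicit polynomials `φ₂ = Y₂/2`, `φ₃ = Y₃/3 − Y₁²/2 + (5/12)Y₁`,
`φ₄ = Y₄/4 − Y₁Y₂ + (11/8)Y₂` expressing the normalized character value. -/
theorem statement2 (d : ℕ) (hd : 1 ≤ d) (lam : Fin d → ℕ)
    (hmono : ∀ i j : Fin d, i ≤ j → lam j ≤ lam i) (hsum : (∑ i, lam i) = d) :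
    charValue 2 d lam = shiftedPowerSum d lam 2 / 2 ∧
    charValue 3 d lam =
      shiftedPowerSum d lam 3 / 3 - shiftedPowerSum d lam 1 ^ 2 / 2 +
        (5 / 12) * shiftedPowerSum d lam 1 ∧
    charValue 4 d lam =
      shiftedPowerSum d lam 4 / 4 - shiftedPowerSum d lam 1 * shiftedPowerSum d lam 2 +
        (11 / 8) * shiftedPowerSum d lam 2 := by
  have P1 : shiftedPowerSum d lam 1 = (d : ℚ) := by
    unfold shiftedPowerSum shiftedPart
    simp only [pow_one]
    have h : ∀ i ∈ (Finset.univ : Finset (Fin d)),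
        ((lam i : ℚ) - ((i:ℕ)+1) + 1/2) - (-(((i:ℕ):ℚ)+1) + 1/2) = (lam i : ℚ) :=
      fun i _ => by ring
    rw [Finset.sum_congr rfl h, ← Nat.cast_sum, hsum]
  have Ssub : ∀ k : ℕ, ∑ i : Fin d, shiftedPart d lam i ^ k =
      shiftedPowerSum d lam k + ∑ i : Fin d, (-(((i:ℕ):ℚ)+1)+1/2)^k := by
    intro k
    unfold shiftedPowerSum
    rw [Finset.sum_sub_distrib]
    ring
  have S1 : ∑ i : Fin d, shiftedPart d lam i = (d:ℚ) - (d:ℚ)^2/2 := by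
    have h := Ssub 1
    simp only [pow_one] at h
    rw [h, P1, tsum1]; ring
  have S2 : ∑ i : Fin d, shiftedPart d lam i ^ 2 =
      shiftedPowerSum d lam 2 + ((d:ℚ)^3/3 - (d:ℚ)/12) := by rw [Ssub 2, tsum2]
  have S3 : ∑ i : Fin d, shiftedPart d lam i ^ 3 =
      shiftedPowerSum d lam 3 + ((d:ℚ)^2/8 - (d:ℚ)^4/4) := by rw [Ssub 3, tsum3]
  have S4 : ∑ i : Fin d, shiftedPart d lam i ^ 4 =
      shiftedPowerSum d lam 4 + ((d:ℚ)^5/5 - (d:ℚ)^3/6 + 7*(d:ℚ)/240) := by rw [Ssub 4, tsum4]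
  refine ⟨?_, ?_, ?_⟩
  · have hQ : (∏ i : Fin d,
        ((1 - PowerSeries.C (R := ℚ) ((2:ℚ) + shiftedPart d lam i) * PowerSeries.X) *
          (1 - PowerSeries.C (R := ℚ) (shiftedPart d lam i) * PowerSeries.X)⁻¹)) =
        ∏ i : Fin d, G (2:ℚ) (shiftedPart d lam i) :=
      Finset.prod_congr rfl fun i _ => factor_eq _ _
    obtain ⟨g0, g1, g2, g3, g4, g5⟩ := prodG_coeffs (2:ℚ) Finset.univ (shiftedPart d lam)
    unfold charValue
    simp only [Nat.cast_ofNat]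
    rw [hQ, Fin.prod_univ_two, mul_assoc]
    simp only [linC]
    norm_num [g0, g1, g2, g3, S1, S2, Finset.card_univ, Fintype.card_fin]
    ring
  · have hQ : (∏ i : Fin d,
        ((1 - PowerSeries.C (R := ℚ) ((3:ℚ) + shiftedPart d lam i) * PowerSeries.X) *
          (1 - PowerSeries.C (R := ℚ) (shiftedPart d lam i) * PowerSeries.X)⁻¹)) =
        ∏ i : Fin d, G (3:ℚ) (shiftedPart d lam i) :=
      Finset.prod_congr rfl fun i _ => factor_eq _ _
    obtain ⟨g0, g1, g2, g3, g4, g5⟩ := prodG_coeffs (3:ℚ) Finset.univ (shiftedPart d lam)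
    unfold charValue
    simp only [Nat.cast_ofNat]
    rw [hQ, Fin.prod_univ_three, mul_assoc, mul_assoc]
    simp only [linC]
    norm_num [show ((2:Fin 3):ℕ) = 2 from rfl, g0, g1, g2, g3, g4, S1, S2, S3, P1, Finset.card_univ, Fintype.card_fin]
    ring
  · have hQ : (∏ i : Fin d,
        ((1 - PowerSeries.C (R := ℚ) ((4:ℚ) + shiftedPart d lam i) * PowerSeries.X) *
          (1 - PowerSeries.C (R := ℚ) (shiftedPart d lam i) * PowerSeries.X)⁻¹)) =
        ∏ i : Fin d, G (4:ℚ) (shiftedPart d lam i) :=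
      Finset.prod_congr rfl fun i _ => factor_eq _ _
    obtain ⟨g0, g1, g2, g3, g4, g5⟩ := prodG_coeffs (4:ℚ) Finset.univ (shiftedPart d lam)
    unfold charValue
    simp only [Nat.cast_ofNat]
    rw [hQ, Fin.prod_univ_four, mul_assoc, mul_assoc, mul_assoc]
    simp only [linC]
    norm_num [show ((2:Fin 4):ℕ) = 2 from rfl, show ((3:Fin 4):ℕ) = 3 from rfl, g0, g1, g2, g3, g4, g5, S1, S2, S3, S4, P1, Finset.card_univ, Fintype.card_fin]
    ring
end

section
/- Let d ≥ m ≥ 2 be integers, let c ⊆ S_d be the conjugacy class of permutations of cycle type (m,1^{d−m}) (a single m-cycle), and let γ₀ ∈ c. For every integer b ≥ 0, the number of tuples (α, β, γ_1, …, γ_b) ∈ S_d × S_d × c^b with γ_1 γ_2 ⋯ γ_b = α β α^{−1} β^{−1} equals d! · Σ_χ (|c| · χ(γ₀) / χ(1))^b, where the sum ranges over the irreducible complex characters χ of the symmetric group S_d. -/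
open Finset CategoryTheory

section FrobeniusAux

open FDRep
open scoped Classical



variable {G : Type} [Group G] [Fintype G]

lemma char_one_ne_zero (V : FDRep ℂ G) [Simple V] : V.character 1 ≠ 0 := by
  rw [FDRep.char_one]
  have hn : Nontrivial V := by
    by_contra h
    rw [not_nontrivial_iff_subsingleton] at h
    have : (𝟙 V) = (0 : V ⟶ V) := by
      apply Action.Hom.ext; ext v; exact Subsingleton.elim (α := V) _ _
    exact CategoryTheory.id_nonzero V this
  simpa using Module.finrank_pos.ne'

lemma comm_eq_smul_id (V : FDRep ℂ G) [Simple V] (f : Module.End ℂ V)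
    (h : ∀ g : G, f * (V.ρ g : Module.End ℂ V) = V.ρ g * f) :
    f = (LinearMap.trace ℂ V f / V.character 1) • 1 := by
  let φ : V ⟶ V := ⟨FGModuleCat.ofHom f, fun g => by ext v; exact congrFun (congrArg (⇑) (h g)) v⟩
  obtain ⟨c, hc⟩ := endomorphism_simple_eq_smul_id ℂ φ
  have hc' : c • (LinearMap.id : V →ₗ[ℂ] V) = f := congrArg (fun φ : V ⟶ V => φ.hom.hom.hom) hc
  have ht : LinearMap.trace ℂ V f = c * V.character 1 := by
    rw [← hc']
    simp [FDRep.char_one, mul_comm]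
  rw [ht, mul_div_assoc, div_self (char_one_ne_zero V), mul_one]
  exact hc'.symm

lemma conjSum_eq (V : FDRep ℂ G) [Simple V] (a : G) :
    ∑ β : G, (V.ρ (β * a * β⁻¹) : Module.End ℂ V) =
      (((Fintype.card G : ℂ) * V.character a) / V.character 1) • (1 : Module.End ℂ V) := by
  have h : ∀ g : G, (∑ β : G, (V.ρ (β * a * β⁻¹) : Module.End ℂ V)) * V.ρ g
      = (V.ρ g : Module.End ℂ V) * ∑ β : G, (V.ρ (β * a * β⁻¹) : Module.End ℂ V) := by
    intro g
    rw [Finset.sum_mul, Finset.mul_sum]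
    simp_rw [← map_mul]
    refine (Fintype.sum_equiv (Equiv.mulLeft g) _ _ fun β => ?_).symm
    congr 1
    simp only [Equiv.coe_mulLeft]
    group
  have := comm_eq_smul_id V _ h
  rw [this]
  congr 2
  rw [map_sum]
  show ∑ x : G, V.character (x * a * x⁻¹) = _
  rw [Finset.sum_congr rfl fun β _ => V.char_conj a β, Finset.sum_const, Finset.card_univ,
    nsmul_eq_mul]

lemma charSum_eq (V : FDRep ℂ G) [Simple V] [inst : Invertible (Fintype.card G : ℂ)] :
    ∑ α : G, V.character α • (V.ρ α⁻¹ : Module.End ℂ V) =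
      ((Fintype.card G : ℂ) / V.character 1) • (1 : Module.End ℂ V) := by
  have h : ∀ g : G, (∑ α : G, V.character α • (V.ρ α⁻¹ : Module.End ℂ V)) * V.ρ g
      = (V.ρ g : Module.End ℂ V) * ∑ α : G, V.character α • (V.ρ α⁻¹ : Module.End ℂ V) := by
    intro g
    rw [Finset.sum_mul, Finset.mul_sum]
    simp_rw [smul_mul_assoc, mul_smul_comm, ← map_mul]
    refine (Fintype.sum_equiv (Equiv.mulRight g⁻¹ |>.trans (Equiv.mulLeft g)) _ _ fun α => ?_).symm
    simp only [Equiv.trans_apply, Equiv.coe_mulLeft, Equiv.coe_mulRight]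
    have e1 : V.character (g * (α * g⁻¹)) = V.character α := by
      rw [← mul_assoc]; exact V.char_conj α g
    have e2 : (g * (α * g⁻¹))⁻¹ * g = g * α⁻¹ := by group
    rw [e1, e2]
  have := comm_eq_smul_id V _ h
  rw [this]
  congr 2
  rw [map_sum]
  have h2 : ∀ α : G, LinearMap.trace ℂ V (V.character α • (V.ρ α⁻¹ : Module.End ℂ V))
      = V.character α * V.character α⁻¹ := fun α => by
    rw [map_smul]; rfl
  rw [Finset.sum_congr rfl fun α _ => h2 α]
  letI : Invertible ((Nat.card G : ℂ)) := by rw [Nat.card_eq_fintype_card]; exact inst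
  have horth : ⅟(Fintype.card G : ℂ) • ∑ g : G, V.character g * V.character g⁻¹ = 1 := by
    have horth0 := FDRep.char_orthonormal V V
    rw [if_pos ⟨Iso.refl V⟩] at horth0
    rw [Nat.card_eq_fintype_card] at horth0
    rw [invOf_eq_inv, smul_eq_mul]
    exact_mod_cast horth0
  have hcard : (Fintype.card G : ℂ) ≠ 0 := by
    simpa using Nat.cast_ne_zero.mpr Fintype.card_ne_zero
  calc ∑ α : G, V.character α * V.character α⁻¹
      = (Fintype.card G : ℂ) * (⅟(Fintype.card G : ℂ) • ∑ g : G, V.character g * V.character g⁻¹) := by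
        rw [smul_eq_mul, ← mul_assoc, mul_invOf_self, one_mul]
    _ = (Fintype.card G : ℂ) := by rw [horth]; norm_num

lemma commSum_eq (V : FDRep ℂ G) [Simple V] [Invertible (Fintype.card G : ℂ)] :
    ∑ α : G, ∑ β : G, (V.ρ ((α * β * α⁻¹ * β⁻¹)⁻¹) : Module.End ℂ V) =
      ((Fintype.card G : ℂ)^2 / (V.character 1)^2) • (1 : Module.End ℂ V) := by
  have key : ∀ α β : G, (α * β * α⁻¹ * β⁻¹)⁻¹ = (β * α * β⁻¹) * α⁻¹ := by intro α β; group
  calc ∑ α : G, ∑ β : G, (V.ρ ((α * β * α⁻¹ * β⁻¹)⁻¹) : Module.End ℂ V)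
      = ∑ α : G, (∑ β : G, (V.ρ (β * α * β⁻¹) : Module.End ℂ V)) * V.ρ α⁻¹ := by
        refine Finset.sum_congr rfl fun α _ => ?_
        rw [Finset.sum_mul]
        exact Finset.sum_congr rfl fun β _ => by rw [key, map_mul]
    _ = ∑ α : G, (((Fintype.card G : ℂ) * V.character α) / V.character 1) • (V.ρ α⁻¹ : Module.End ℂ V) := by
        refine Finset.sum_congr rfl fun α _ => ?_
        rw [conjSum_eq, smul_mul_assoc, one_mul]
    _ = ((Fintype.card G : ℂ) / V.character 1) • ∑ α : G, V.character α • (V.ρ α⁻¹ : Module.End ℂ V) := by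
        rw [Finset.smul_sum]
        refine Finset.sum_congr rfl fun α _ => ?_
        rw [smul_smul]
        congr 1
        field_simp
    _ = ((Fintype.card G : ℂ)^2 / (V.character 1)^2) • (1 : Module.End ℂ V) := by
        rw [charSum_eq, smul_smul]
        congr 1
        field_simp

lemma classSum_eq (V : FDRep ℂ G) [Simple V] (c : Finset G)
    (hconj : ∀ (g σ : G), σ ∈ c → g * σ * g⁻¹ ∈ c)
    (γ₀ : G) (hchar : ∀ σ ∈ c, V.character σ = V.character γ₀) :
    ∑ σ ∈ c, (V.ρ σ : Module.End ℂ V) =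
      ((c.card : ℂ) * V.character γ₀ / V.character 1) • 1 := by
  have h : ∀ g : G, (∑ σ ∈ c, (V.ρ σ : Module.End ℂ V)) * V.ρ g
      = (V.ρ g : Module.End ℂ V) * ∑ σ ∈ c, (V.ρ σ : Module.End ℂ V) := by
    intro g
    rw [Finset.sum_mul, Finset.mul_sum]
    simp_rw [← map_mul]
    refine Finset.sum_nbij' (fun σ => g⁻¹ * σ * g) (fun σ => g * σ * g⁻¹) ?_ ?_ ?_ ?_ ?_
    · intro σ hσ; simpa using hconj g⁻¹ σ hσ
    · intro σ hσ; exact hconj g σ hσ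
    · intro σ _; group
    · intro σ _; group
    · intro σ _; congr 1; group
  have := comm_eq_smul_id V _ h
  rw [this]
  congr 2
  rw [map_sum]
  show ∑ σ ∈ c, V.character σ = _
  rw [Finset.sum_congr rfl hchar, Finset.sum_const, nsmul_eq_mul]

lemma tupleSum_eq (V : FDRep ℂ G) (p : G → Prop) [DecidablePred p] (b : ℕ) :
    ∑ γ ∈ Finset.univ.filter (fun γ : Fin b → G => ∀ i, p (γ i)),
        (V.ρ ((List.ofFn γ).prod) : Module.End ℂ V)
      = (∑ σ ∈ Finset.univ.filter p, (V.ρ σ : Module.End ℂ V)) ^ b := by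
  induction b with
  | zero =>
    rw [pow_zero]
    rw [Finset.sum_filter]
    rw [Fintype.sum_unique]
    simp
  | succ b ih =>
    rw [pow_succ']
    rw [← ih]
    rw [Finset.sum_filter, Finset.sum_filter, Finset.sum_filter]
    rw [← Equiv.sum_comp (Fin.consEquiv (fun _ : Fin (b+1) => G))]
    rw [Fintype.sum_prod_type]
    rw [Finset.sum_mul_sum]
    refine Finset.sum_congr rfl fun a _ => Finset.sum_congr rfl fun γ _ => ?_
    rw [ite_zero_mul_ite_zero]
    have hcond : (∀ i, p ((Fin.consEquiv (fun _ : Fin (b+1) => G)) (a, γ) i)) ↔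
        (p a ∧ ∀ i, p (γ i)) := by
      simp [Fin.consEquiv, Fin.forall_fin_succ]
    have hprod : (List.ofFn ((Fin.consEquiv (fun _ : Fin (b+1) => G)) (a, γ))).prod
        = a * (List.ofFn γ).prod := by
      simp [Fin.consEquiv, List.ofFn_succ, Function.comp]
    rw [if_congr hcond rfl rfl, hprod, map_mul]

noncomputable def regρ (G : Type) [Group G] [Fintype G] :
    Representation ℂ G (MonoidAlgebra ℂ G) where
  toFun g := LinearMap.mulLeft ℂ (MonoidAlgebra.of ℂ G g)
  map_one' := by ext x; simp
  map_mul' g h := by ext x; simp [mul_assoc]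

noncomputable instance : FiniteDimensional ℂ (MonoidAlgebra ℂ G) :=
  FiniteDimensional.of_injective
    ((Finsupp.linearEquivFunOnFinite ℂ ℂ G).toLinearMap ∘ₗ (MonoidAlgebra.coeffLinearEquiv ℂ).toLinearMap)
      ((Finsupp.linearEquivFunOnFinite ℂ ℂ G).injective.comp (MonoidAlgebra.coeffLinearEquiv ℂ (S := ℂ) (M := G)).injective)

noncomputable def regBasis (G : Type) [Group G] [Fintype G] :
    Module.Basis G ℂ (MonoidAlgebra ℂ G) :=
  Finsupp.basisSingleOne.map (MonoidAlgebra.coeffLinearEquiv ℂ).symm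

lemma regρ_trace (G : Type) [Group G] [Fintype G] (g : G) :
    LinearMap.trace ℂ (MonoidAlgebra ℂ G) (regρ G g)
      = if g = 1 then (Fintype.card G : ℂ) else 0 := by
  rw [LinearMap.trace_eq_matrix_trace ℂ (regBasis G)]
  rw [Matrix.trace]
  have key : ∀ h : G, (LinearMap.toMatrix (regBasis G) (regBasis G) (regρ G g)) h h
      = if g = 1 then 1 else 0 := by
    intro h
    rw [LinearMap.toMatrix_apply]
    show ((regBasis G).repr ((MonoidAlgebra.of ℂ G g) * (MonoidAlgebra.single h 1))) h = _
    rw [MonoidAlgebra.of_apply, MonoidAlgebra.single_mul_single, one_mul]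
    show (Finsupp.single (g * h) (1:ℂ)) h = _
    rw [Finsupp.single_apply]
    congr 1
    simp only [eq_iff_iff]
    constructor
    · intro hh; exact mul_right_cancel (by rw [one_mul, hh])
    · intro hh; rw [hh, one_mul]
  simp_rw [Matrix.diag_apply, key]
  simp [Finset.card_univ]

noncomputable def toASub (p : Submodule ℂ (MonoidAlgebra ℂ G))
    (hp : ∀ (g : G), ∀ x ∈ p, (MonoidAlgebra.of ℂ G g) * x ∈ p) :
    Submodule (MonoidAlgebra ℂ G) (MonoidAlgebra ℂ G) where
  carrier := p
  add_mem' := p.add_mem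
  zero_mem' := p.zero_mem
  smul_mem' := by
    intro a x hx
    rw [smul_eq_mul]
    induction a using MonoidAlgebra.induction_linear with
    | zero => rw [zero_mul]; exact p.zero_mem
    | add a a' ha ha' => rw [add_mul]; exact p.add_mem ha ha'
    | single g r =>
      have key : MonoidAlgebra.single g r * x = r • ((MonoidAlgebra.of ℂ G g) * x) := by
        rw [← smul_mul_assoc, MonoidAlgebra.of_apply, MonoidAlgebra.smul_single', mul_one]
      rw [key]
      exact p.smul_mem _ (hp g x hx)

lemma toASub_carrier (p : Submodule ℂ (MonoidAlgebra ℂ G)) (hp) (x : MonoidAlgebra ℂ G) :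
    x ∈ toASub p hp ↔ x ∈ p := Iff.rfl

/-- Restriction of a representation to an invariant subspace. -/
noncomputable def resρ {M : Type} [AddCommGroup M] [Module ℂ M]
    (ρ : Representation ℂ G M) (p : Submodule ℂ M)
    (hp : ∀ (g : G), ∀ x ∈ p, ρ g x ∈ p) : Representation ℂ G ↥p where
  toFun g := (ρ g).restrict (hp g)
  map_one' := by ext x; simp [LinearMap.restrict_apply]
  map_mul' g h := by ext x; simp [LinearMap.restrict_apply]

lemma resρ_apply {M : Type} [AddCommGroup M] [Module ℂ M]
    (ρ : Representation ℂ G M) (p : Submodule ℂ M) (hp) (g : G) (x : ↥p) :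
    (resρ ρ p hp g x : M) = ρ g x := rfl

lemma simple_of_invariant_subspaces (W : FDRep ℂ G) (hnt : Nontrivial W)
    (h : ∀ q : Submodule ℂ W, (∀ (g : G), ∀ x ∈ q, W.ρ g x ∈ q) → q = ⊥ ∨ q = ⊤) :
    Simple W := by
  constructor
  intro Y f _
  constructor
  · intro hiso h0
    have : (𝟙 W : W ⟶ W) = 0 := by
      rw [← IsIso.inv_hom_id f]
      rw [congrArg (fun g => inv f ≫ g) h0]
      simp
    have hid : (LinearMap.id : W →ₗ[ℂ] W) = 0 := congrArg (fun φ : W ⟶ W => φ.hom.hom.hom) this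
    obtain ⟨x, y, hxy⟩ := hnt.exists_pair_ne
    apply hxy
    have hx : x = 0 := by simpa using congrFun (congrArg (⇑) hid) x
    have hy : y = 0 := by simpa using congrFun (congrArg (⇑) hid) y
    rw [hx, hy]
  · intro hf
    have hfhom : f.hom.hom.hom ≠ 0 := fun h0 => hf (Action.Hom.ext (FGModuleCat.hom_ext h0))
    have hcomm : ∀ (g : G), ∀ y : Y, f.hom (Y.ρ g y) = W.ρ g (f.hom y) := fun g y =>
      congrFun (congrArg (⇑) (f.comm g)) y
    have hrangeInv : ∀ (g : G), ∀ x ∈ LinearMap.range f.hom.hom.hom,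
        W.ρ g x ∈ LinearMap.range f.hom.hom.hom := by
      rintro g x ⟨y, rfl⟩
      exact ⟨Y.ρ g y, hcomm g y⟩
    have hrange : LinearMap.range f.hom.hom.hom = ⊤ := by
      rcases h (LinearMap.range f.hom.hom.hom) hrangeInv with hb | ht
      · exact absurd (LinearMap.range_eq_bot.mp hb) hfhom
      · exact ht
    have hkerInv : ∀ (g : G), ∀ x ∈ LinearMap.ker f.hom.hom.hom,
        Y.ρ g x ∈ LinearMap.ker f.hom.hom.hom := by
      intro g x hx
      rw [LinearMap.mem_ker] at hx ⊢
      have h2 : f.hom ((Y.ρ g) x) = W.ρ g (f.hom x) := hcomm g x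
      exact h2.trans (by rw [show f.hom x = 0 from hx, map_zero])
    have hker : LinearMap.ker f.hom.hom.hom = ⊥ := by
      set K := LinearMap.ker f.hom.hom.hom with hK
      let K' : FDRep ℂ G := FDRep.of (resρ Y.ρ K hkerInv)
      let ι : K' ⟶ Y := ⟨FGModuleCat.ofHom K.subtype, fun g => by ext x; rfl⟩
      have hcomp : ι ≫ f = (0 : K' ⟶ Y) ≫ f := by
        apply Action.Hom.ext
        ext x
        show f.hom (K.subtype x) = ((0 : K' ⟶ Y) ≫ f).hom x
        have h1 : f.hom (K.subtype x) = 0 := x.2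
        rw [h1]
        simp [Action.comp_hom, Action.zero_hom, LinearMap.zero_apply]
        rfl
      have hι0 : ι = 0 := by
        haveI : Mono f := ‹_›
        exact (cancel_mono f).mp hcomp
      rw [eq_bot_iff]
      intro x hx
      have h0 : (ι.hom) (⟨x, hx⟩ : K) = 0 := by rw [hι0]; rfl
      exact h0
    have hbij : Function.Bijective f.hom.hom.hom :=
      ⟨LinearMap.ker_eq_bot.mp hker, LinearMap.range_eq_top.mp hrange⟩
    let e : Y ≃ₗ[ℂ] W := LinearEquiv.ofBijective f.hom.hom.hom hbij
    have hsymm : ∀ (g : G) (w : W), e.symm (W.ρ g w) = Y.ρ g (e.symm w) := by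
      intro g w
      apply e.injective
      rw [e.apply_symm_apply]
      show W.ρ g w = f.hom (Y.ρ g (e.symm w))
      rw [hcomm g]
      congr 1
      exact (e.apply_symm_apply w).symm
    let ginv : W ⟶ Y := ⟨FGModuleCat.ofHom e.symm.toLinearMap, fun g => by
      ext w; exact hsymm g w⟩
    refine ⟨⟨ginv, ?_, ?_⟩⟩
    · apply Action.Hom.ext
      ext y
      show e.symm (f.hom y) = y
      exact e.symm_apply_apply y
    · apply Action.Hom.ext
      ext w
      show f.hom (e.symm w) = w
      exact e.apply_symm_apply w

set_option maxHeartbeats 1000000 in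
lemma exists_char_decomp (G : Type) [Group G] [Fintype G] :
    ∃ (κ : Type) (_ : Fintype κ) (W : κ → FDRep ℂ G), (∀ j, Simple (W j)) ∧
      ∀ g : G, (if g = 1 then (Fintype.card G : ℂ) else 0) = ∑ j, (W j).character g := by
  haveI : NeZero (Fintype.card G : ℂ) :=
    ⟨Nat.cast_ne_zero.mpr Fintype.card_ne_zero⟩
  obtain ⟨s, hindep, hsup, hsimple⟩ :=
    IsSemisimpleModule.exists_sSupIndep_sSup_simples_eq_top (MonoidAlgebra ℂ G) (MonoidAlgebra ℂ G)
  have hatom : ∀ p ∈ s, IsAtom p := fun p hp => isSimpleModule_iff_isAtom.mp (hsimple p hp)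
  haveI : IsNoetherian (MonoidAlgebra ℂ G) (MonoidAlgebra ℂ G) :=
    isNoetherian_of_tower ℂ inferInstance
  have hfin : s.Finite := WellFoundedGT.finite_of_sSupIndep hindep
  letI : Fintype ↥s := hfin.fintype
  set N : ↥s → Submodule ℂ (MonoidAlgebra ℂ G) :=
    fun i => (i : Submodule (MonoidAlgebra ℂ G) (MonoidAlgebra ℂ G)).restrictScalars ℂ with hN
  have hNInv : ∀ (i : ↥s) (g : G), ∀ x ∈ N i, (regρ G g) x ∈ N i := by
    intro i g x hx
    show (MonoidAlgebra.of ℂ G g) * x ∈ _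
    rw [← smul_eq_mul]
    exact Submodule.smul_mem _ _ hx
  have hindep' : iSupIndep (fun i : ↥s => (i : Submodule (MonoidAlgebra ℂ G) (MonoidAlgebra ℂ G))) :=
    (sSupIndep_iff s).mp hindep
  have hNindep : iSupIndep N := by
    intro i
    have hle : (⨆ j, ⨆ (_ : j ≠ i), N j) ≤
        ((⨆ j, ⨆ (_ : j ≠ i), (j : Submodule (MonoidAlgebra ℂ G) (MonoidAlgebra ℂ G))).restrictScalars ℂ) := by
      refine iSup₂_le fun j hj => ?_
      intro x hx
      rw [Submodule.restrictScalars_mem]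
      exact Submodule.mem_iSup_of_mem j (Submodule.mem_iSup_of_mem hj hx)
    rw [disjoint_iff_inf_le]
    intro x hx
    have h1 : x ∈ N i := hx.1
    have h2 : x ∈ (⨆ j, ⨆ (_ : j ≠ i), N j) := hx.2
    have := Submodule.disjoint_def.mp (hindep' i) x h1 (hle h2)
    simpa using this
  have hA : (⨆ i : ↥s, (i : Submodule (MonoidAlgebra ℂ G) (MonoidAlgebra ℂ G))) = ⊤ := by
    rw [← sSup_eq_iSup']; exact hsup
  have hNtop : (⨆ i, N i) = ⊤ := by
    rw [eq_top_iff]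
    intro x _
    have hx : x ∈ ⨆ i : ↥s, (i : Submodule (MonoidAlgebra ℂ G) (MonoidAlgebra ℂ G)) := by
      rw [hA]; trivial
    refine Submodule.iSup_induction _ (motive := fun y => y ∈ ⨆ i, N i) hx ?_ ?_ ?_
    · intro i y hy
      exact Submodule.mem_iSup_of_mem i hy
    · exact Submodule.zero_mem _
    · intro a b ha hb; exact Submodule.add_mem _ ha hb
  have hInternal : DirectSum.IsInternal N :=
    DirectSum.isInternal_submodule_of_iSupIndep_of_iSup_eq_top hNindep hNtop
  set Wrep : ↥s → FDRep ℂ G := fun i => FDRep.of (resρ (regρ G) (N i) (hNInv i)) with hWrep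
  have hSimple : ∀ i, Simple (Wrep i) := by
    intro i
    haveI hNon : Nontrivial ↥(N i) := by
      rw [Submodule.nontrivial_iff_ne_bot]
      intro hbot
      exact (hatom _ i.2).1 (by
        rw [← Submodule.restrictScalars_eq_bot_iff (S := ℂ)]; exact hbot)
    apply simple_of_invariant_subspaces (Wrep i) hNon
    intro q hq
    have hq₀Inv : ∀ (g : G), ∀ x ∈ q.map (N i).subtype,
        (MonoidAlgebra.of ℂ G g) * x ∈ q.map (N i).subtype := by
      rintro g x ⟨y, hy, rfl⟩
      exact ⟨resρ (regρ G) (N i) (hNInv i) g y, hq g y hy,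
        resρ_apply (regρ G) (N i) (hNInv i) g y⟩
    set q₀' := toASub (q.map (N i).subtype) hq₀Inv with hq₀'
    have hle : q₀' ≤ (i : Submodule (MonoidAlgebra ℂ G) (MonoidAlgebra ℂ G)) := by
      intro x hx
      rw [toASub_carrier] at hx
      exact Submodule.map_subtype_le (N i) q hx
    have hinj := Submodule.map_injective_of_injective (N i).injective_subtype
    rcases lt_or_eq_of_le hle with hlt | heq
    · left
      have hb : q₀' = ⊥ := (hatom _ i.2).2 _ hlt
      apply hinj
      rw [Submodule.map_bot]
      rw [eq_bot_iff]
      intro x hx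
      have : x ∈ q₀' := by rw [toASub_carrier]; exact hx
      rw [hb] at this
      simpa using this
    · right
      apply hinj
      rw [Submodule.map_top, Submodule.range_subtype]
      ext x
      rw [← toASub_carrier (Submodule.map (N i).subtype q) hq₀Inv x]
      rw [show toASub (Submodule.map (N i).subtype q) hq₀Inv = q₀' from rfl, heq]
      exact Iff.rfl
  refine ⟨↥s, inferInstance, Wrep, hSimple, ?_⟩
  intro g
  rw [← regρ_trace G g]
  have hMaps : ∀ i, Set.MapsTo (regρ G g) (N i) (N i) := fun i x hx => hNInv i g x hx
  rw [LinearMap.trace_eq_sum_trace_restrict hInternal hMaps]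
  exact Finset.sum_congr rfl fun i _ => rfl


lemma colOrth (ι : Type) [Fintype ι] (V : ι → FDRep ℂ G)
    (hirr : ∀ i, Simple (V i))
    (hdist : ∀ i j, i ≠ j → ¬ Nonempty (V i ≅ V j))
    (hall : ∀ W : FDRep ℂ G, Simple W → ∃ i, Nonempty (W ≅ V i)) (g : G) :
    ∑ i, (V i).character 1 * (V i).character g
      = if g = 1 then (Fintype.card G : ℂ) else 0 := by
  have hcard : (Fintype.card G : ℂ) ≠ 0 := Nat.cast_ne_zero.mpr Fintype.card_ne_zero
  haveI inst : Invertible (Fintype.card G : ℂ) := invertibleOfNonzero hcard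
  letI : Invertible ((Nat.card G : ℂ)) := by rw [Nat.card_eq_fintype_card]; exact inst
  obtain ⟨κ, hκ, W, hWsimple, hWchar⟩ := exists_char_decomp G
  letI := hκ
  haveI := fun j => hWsimple j
  replace hWchar : ∀ g : G, (if g = 1 then (Fintype.card G : ℂ) else 0)
      = ∑ j, (W j).character g := hWchar
  choose F hF using fun j => hall (W j) (hWsimple j)
  have hchar : ∀ g : G, (if g = 1 then (Fintype.card G : ℂ) else 0)
      = ∑ j, (V (F j)).character g := by
    intro g
    rw [hWchar g]
    exact Finset.sum_congr rfl fun j _ => by rw [FDRep.char_iso (hF j).some]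
  -- orthonormality between the given family members
  have horth : ∀ i j : ι,
      ⅟(Fintype.card G : ℂ) • ∑ g : G, (V i).character g * (V j).character g⁻¹
        = if i = j then 1 else 0 := by
    intro i j
    haveI := hirr i; haveI := hirr j
    have h0 := FDRep.char_orthonormal (V i) (V j)
    have h1 : ⅟(Fintype.card G : ℂ) • ∑ g : G, (V i).character g * (V j).character g⁻¹
        = if Nonempty (V i ≅ V j) then (1:ℂ) else 0 := by
      rw [Nat.card_eq_fintype_card] at h0
      rw [invOf_eq_inv, smul_eq_mul]
      exact_mod_cast h0
    rw [h1]
    by_cases hij : i = j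
    · subst hij; rw [if_pos ⟨Iso.refl _⟩, if_pos rfl]
    · rw [if_neg (hdist i j hij), if_neg hij]
  -- multiplicities
  have hm : ∀ i₀ : ι, ((Finset.univ.filter (fun j => F j = i₀)).card : ℂ)
      = (V i₀).character 1 := by
    intro i₀
    have lhs1 : ⅟(Fintype.card G : ℂ) •
        ∑ g : G, (if g = 1 then (Fintype.card G : ℂ) else 0) * (V i₀).character g⁻¹
        = (V i₀).character 1 := by
      rw [Finset.sum_eq_single (1 : G)]
      · rw [if_pos rfl, inv_one, invOf_eq_inv, smul_eq_mul, ← mul_assoc,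
          inv_mul_cancel₀ hcard, one_mul]
      · intro b _ hb; rw [if_neg hb, zero_mul]
      · intro h; exact absurd (Finset.mem_univ 1) h
    have lhs2 : ⅟(Fintype.card G : ℂ) •
        ∑ g : G, (if g = 1 then (Fintype.card G : ℂ) else 0) * (V i₀).character g⁻¹
        = ((Finset.univ.filter (fun j => F j = i₀)).card : ℂ) := by
      calc ⅟(Fintype.card G : ℂ) •
          ∑ g : G, (if g = 1 then (Fintype.card G : ℂ) else 0) * (V i₀).character g⁻¹
          = ⅟(Fintype.card G : ℂ) • ∑ g : G, ∑ j, (V (F j)).character g * (V i₀).character g⁻¹ := by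
            congr 1
            refine Finset.sum_congr rfl fun g _ => ?_
            rw [hchar g, Finset.sum_mul]
        _ = ∑ j, ⅟(Fintype.card G : ℂ) • ∑ g : G, (V (F j)).character g * (V i₀).character g⁻¹ := by
            rw [Finset.sum_comm, Finset.smul_sum]
        _ = ∑ j, if F j = i₀ then (1:ℂ) else 0 := Finset.sum_congr rfl fun j _ => horth (F j) i₀
        _ = ((Finset.univ.filter (fun j => F j = i₀)).card : ℂ) := by
            rw [Finset.sum_boole]
    rw [← lhs2, lhs1]
  -- final computation
  calc ∑ i, (V i).character 1 * (V i).character g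
      = ∑ i, ∑ j ∈ Finset.univ.filter (fun j => F j = i), (V (F j)).character g := by
        refine Finset.sum_congr rfl fun i _ => ?_
        rw [← hm i]
        rw [Finset.sum_congr rfl (fun j hj => by
          rw [(Finset.mem_filter.mp hj).2])]
        rw [Finset.sum_const, nsmul_eq_mul]
    _ = ∑ j, (V (F j)).character g := by
        exact Finset.sum_fiberwise_of_maps_to (fun j _ => Finset.mem_univ (F j)) _
    _ = if g = 1 then (Fintype.card G : ℂ) else 0 := (hchar g).symm

end FrobeniusAux

/-- Frobenius's counting formula for the number of tuples
`(α, β, γ₁, …, γ_b) ∈ S_d × S_d × c^b` with `γ₁⋯γ_b = αβα⁻¹β⁻¹`, where `c` is the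
conjugacy class of cycle type `(m, 1^{d−m})`: it equals
`d! · Σ_χ (|c|·χ(γ₀)/χ(1))^b`, the sum being over the irreducible complex
characters of `S_d` (given here by a complete family `V` of pairwise non-isomorphic
irreducible representations). -/
theorem statement4 (d m : ℕ) (hm : 2 ≤ m) (hmd : m ≤ d)
    (γ₀ : Equiv.Perm (Fin d)) (hγ₀ : γ₀.cycleType = {m}) (b : ℕ)
    (ι : Type) [Fintype ι] (V : ι → FDRep ℂ (Equiv.Perm (Fin d)))
    (hirr : ∀ i, Simple (V i))
    (hdist : ∀ i j, i ≠ j → ¬ Nonempty (V i ≅ V j))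
    (hall : ∀ W : FDRep ℂ (Equiv.Perm (Fin d)), Simple W → ∃ i, Nonempty (W ≅ V i)) :
    (Nat.card {t : Equiv.Perm (Fin d) × Equiv.Perm (Fin d) × (Fin b → Equiv.Perm (Fin d)) //
        (∀ i, (t.2.2 i).cycleType = {m}) ∧
        (List.ofFn t.2.2).prod = t.1 * t.2.1 * t.1⁻¹ * t.2.1⁻¹} : ℂ) =
      (Nat.factorial d : ℂ) *
        ∑ i, (((Nat.card {σ : Equiv.Perm (Fin d) // σ.cycleType = {m}}) : ℂ) *
            (V i).character γ₀ / (V i).character 1) ^ b := by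
  classical
  haveI : ∀ i, Simple (V i) := hirr
  have hcardn : (Fintype.card (Equiv.Perm (Fin d)) : ℂ) ≠ 0 :=
    Nat.cast_ne_zero.mpr Fintype.card_ne_zero
  haveI : Invertible (Fintype.card (Equiv.Perm (Fin d)) : ℂ) := invertibleOfNonzero hcardn
  set n : ℂ := (Fintype.card (Equiv.Perm (Fin d)) : ℂ) with hn
  set c : Finset (Equiv.Perm (Fin d)) :=
    Finset.univ.filter (fun σ => σ.cycleType = {m}) with hc
  have hcol := colOrth ι V hirr hdist hall
  -- character constancy on c
  have hcharconst : ∀ i : ι, ∀ σ ∈ c, (V i).character σ = (V i).character γ₀ := by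
    intro i σ hσ
    have hσ' : σ.cycleType = {m} := (Finset.mem_filter.mp hσ).2
    obtain ⟨v, hv⟩ := isConj_iff.mp
      (Equiv.Perm.isConj_of_cycleType_eq (hγ₀.trans hσ'.symm))
    rw [← hv]
    exact (V i).char_conj γ₀ v
  -- conjugation closure
  have hconj : ∀ (g σ : Equiv.Perm (Fin d)), σ ∈ c → g * σ * g⁻¹ ∈ c := by
    intro g σ hσ
    rw [hc, Finset.mem_filter]
    refine ⟨Finset.mem_univ _, ?_⟩
    rw [Equiv.Perm.cycleType_conj]
    exact (Finset.mem_filter.mp hσ).2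
  -- cardinalities
  have hNatc : ((Nat.card {σ : Equiv.Perm (Fin d) // σ.cycleType = {m}}) : ℂ) = (c.card : ℂ) := by
    rw [Nat.card_eq_fintype_card, Fintype.card_subtype]
  set ω : ι → ℂ := fun i => (c.card : ℂ) * (V i).character γ₀ / (V i).character 1 with hω
  set u : Equiv.Perm (Fin d) × Equiv.Perm (Fin d) × (Fin b → Equiv.Perm (Fin d)) → Equiv.Perm (Fin d) :=
    fun t => (List.ofFn t.2.2).prod * (t.1 * t.2.1 * t.1⁻¹ * t.2.1⁻¹)⁻¹ with hu
  set S₁ : Finset (Equiv.Perm (Fin d) × Equiv.Perm (Fin d) × (Fin b → Equiv.Perm (Fin d))) :=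
    Finset.univ.filter (fun t => ∀ k, (t.2.2 k).cycleType = {m}) with hS₁
  have htrace : ∀ i : ι,
      ∑ t ∈ S₁, (V i).character (u t) = ω i ^ b * (n ^ 2 / (V i).character 1) := by
    intro i
    have hop : ∑ t ∈ S₁, ((V i).ρ (u t) : Module.End ℂ (V i))
        = ((ω i ^ b) * (n ^ 2 / ((V i).character 1) ^ 2)) • 1 := by
      calc ∑ t ∈ S₁, ((V i).ρ (u t) : Module.End ℂ (V i))
          = ∑ t : Equiv.Perm (Fin d) × Equiv.Perm (Fin d) × (Fin b → Equiv.Perm (Fin d)),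
              if (∀ k, (t.2.2 k).cycleType = {m})
              then ((V i).ρ (u t) : Module.End ℂ (V i)) else 0 := by
            rw [hS₁, Finset.sum_filter]
        _ = ∑ α : Equiv.Perm (Fin d), ∑ β : Equiv.Perm (Fin d), ∑ γ ∈ Finset.univ.filter
              (fun γ : Fin b → Equiv.Perm (Fin d) => ∀ k, (γ k).cycleType = {m}),
              ((V i).ρ ((List.ofFn γ).prod) : Module.End ℂ (V i)) *
                (V i).ρ ((α * β * α⁻¹ * β⁻¹)⁻¹) := by
            rw [Fintype.sum_prod_type]
            refine Finset.sum_congr rfl fun α _ => ?_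
            rw [Fintype.sum_prod_type]
            refine Finset.sum_congr rfl fun β _ => ?_
            rw [Finset.sum_filter]
            refine Finset.sum_congr rfl fun γ _ => ?_
            rw [hu]
            simp only [map_mul]
        _ = (∑ γ ∈ Finset.univ.filter
              (fun γ : Fin b → Equiv.Perm (Fin d) => ∀ k, (γ k).cycleType = {m}),
              ((V i).ρ ((List.ofFn γ).prod) : Module.End ℂ (V i))) *
            (∑ α : Equiv.Perm (Fin d), ∑ β : Equiv.Perm (Fin d),
              ((V i).ρ ((α * β * α⁻¹ * β⁻¹)⁻¹) : Module.End ℂ (V i))) := by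
            rw [Finset.mul_sum]
            refine Finset.sum_congr rfl fun α _ => ?_
            rw [Finset.mul_sum]
            refine Finset.sum_congr rfl fun β _ => ?_
            rw [Finset.sum_mul]
        _ = ((ω i ^ b) * (n ^ 2 / ((V i).character 1) ^ 2)) • 1 := by
            rw [tupleSum_eq (V i) (fun σ => σ.cycleType = {m}) b]
            rw [show Finset.univ.filter (fun σ : Equiv.Perm (Fin d) => σ.cycleType = {m}) = c
              from rfl]
            rw [classSum_eq (V i) c hconj γ₀ (hcharconst i)]
            rw [commSum_eq (V i)]
            rw [smul_pow, one_pow, smul_mul_smul_comm, one_mul]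
    have htr : LinearMap.trace ℂ (V i) (∑ t ∈ S₁, ((V i).ρ (u t) : Module.End ℂ (V i)))
        = ∑ t ∈ S₁, (V i).character (u t) := by
      rw [map_sum]; rfl
    rw [← htr, hop, map_smul]
    have h1 : LinearMap.trace ℂ (V i) (1 : Module.End ℂ (V i)) = (V i).character 1 := by
      rw [FDRep.char_one]
      exact LinearMap.trace_id ℂ (V i)
    rw [h1, smul_eq_mul]
    have hχ := char_one_ne_zero (V i)
    rw [FDRep.char_one] at hχ ⊢
    field_simp
  -- counting
  have hcount : ((Nat.card {t : Equiv.Perm (Fin d) × Equiv.Perm (Fin d) × (Fin b → Equiv.Perm (Fin d)) //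
        (∀ i, (t.2.2 i).cycleType = {m}) ∧
        (List.ofFn t.2.2).prod = t.1 * t.2.1 * t.1⁻¹ * t.2.1⁻¹}) : ℂ)
      = ∑ t ∈ S₁, (if u t = 1 then (1:ℂ) else 0) := by
    rw [Nat.card_eq_fintype_card, Fintype.card_subtype]
    have hfe : Finset.univ.filter
        (fun t : Equiv.Perm (Fin d) × Equiv.Perm (Fin d) × (Fin b → Equiv.Perm (Fin d)) =>
          (∀ k, (t.2.2 k).cycleType = {m}) ∧
          (List.ofFn t.2.2).prod = t.1 * t.2.1 * t.1⁻¹ * t.2.1⁻¹)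
        = S₁.filter (fun t => u t = 1) := by
      rw [hS₁, Finset.filter_filter]
      apply Finset.filter_congr
      intro t _
      constructor
      · rintro ⟨h1, h2⟩; exact ⟨h1, mul_inv_eq_one.mpr h2⟩
      · rintro ⟨h1, h2⟩; exact ⟨h1, mul_inv_eq_one.mp h2⟩
    rw [hfe, Finset.card_filter]
    push_cast
    rfl
  have key : n * (∑ t ∈ S₁, (if u t = 1 then (1:ℂ) else 0)) = n ^ 2 * ∑ i, ω i ^ b := by
    calc n * (∑ t ∈ S₁, (if u t = 1 then (1:ℂ) else 0))
        = ∑ t ∈ S₁, (if u t = 1 then n else 0) := by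
          rw [Finset.mul_sum]
          exact Finset.sum_congr rfl fun t _ => by rw [mul_ite, mul_one, mul_zero]
      _ = ∑ t ∈ S₁, ∑ i, (V i).character 1 * (V i).character (u t) := by
          refine Finset.sum_congr rfl fun t _ => ?_
          rw [hcol (u t)]
          congr
      _ = ∑ i, ∑ t ∈ S₁, (V i).character 1 * (V i).character (u t) := Finset.sum_comm
      _ = ∑ i, (V i).character 1 * ∑ t ∈ S₁, (V i).character (u t) := by
          exact Finset.sum_congr rfl fun i _ => (Finset.mul_sum _ _ _).symm
      _ = ∑ i, (V i).character 1 * (ω i ^ b * (n ^ 2 / (V i).character 1)) :=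
          Finset.sum_congr rfl fun i _ => by rw [htrace i]
      _ = ∑ i, n ^ 2 * ω i ^ b := by
          refine Finset.sum_congr rfl fun i _ => ?_
          have hχ := char_one_ne_zero (V i)
          rw [FDRep.char_one] at hχ ⊢
          field_simp
      _ = n ^ 2 * ∑ i, ω i ^ b := by rw [Finset.mul_sum]
  have hfinal : (∑ t ∈ S₁, (if u t = 1 then (1:ℂ) else 0)) = n * ∑ i, ω i ^ b := by
    apply mul_left_cancel₀ hcardn
    rw [key]
    ring
  have hnfact : n = (Nat.factorial d : ℂ) := by
    rw [hn]
    norm_cast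
    simp [Fintype.card_perm]
  rw [hcount, hfinal, hnfact]
  congr 1
  refine Finset.sum_congr rfl fun i _ => ?_
  rw [hNatc]
end

section
/- For all complex numbers w and z with |w| < 1 and z ≠ 0, the following Jacobi triple product identity holds: ∏_{n≥1} (1 − w^{2n})(1 + z·w^{2n−1})(1 + z^{−1}·w^{2n−1}) = Σ_{n∈ℤ} z^n · w^{n²}, where the infinite product converges and the bilateral series converges absolutely. -/
open Finset

namespace JTP

noncomputable section

variable {t : ℂ}

def Dp (t : ℂ) (m : ℕ) : ℂ := ∏ i ∈ Finset.range m, (1 - t ^ (i + 1))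

lemma Dp_zero : Dp t 0 = 1 := by simp [Dp]

lemma Dp_succ (m : ℕ) : Dp t (m + 1) = Dp t m * (1 - t ^ (m + 1)) := by
  simp [Dp, Finset.prod_range_succ]

lemma Dp_ne_zero (ht : ∀ i : ℕ, t ^ (i + 1) ≠ 1) (m : ℕ) : Dp t m ≠ 0 :=
  Finset.prod_ne_zero_iff.2 fun i _ => sub_ne_zero.2 (fun h => ht i h.symm)

def hc (t : ℂ) (a k : ℕ) : ℂ := Dp t (a + k) / (Dp t a * Dp t k)

lemma hc_zero_right (a : ℕ) (ht : ∀ i : ℕ, t ^ (i + 1) ≠ 1) : hc t a 0 = 1 := by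
  simp [hc, Dp_zero, Dp_ne_zero ht a]

lemma hc_zero_left (k : ℕ) (ht : ∀ i : ℕ, t ^ (i + 1) ≠ 1) : hc t 0 k = 1 := by
  simp [hc, Dp_zero, Dp_ne_zero ht k]

lemma hc_pascal (ht : ∀ i : ℕ, t ^ (i + 1) ≠ 1) (a k : ℕ) :
    hc t (a + 1) (k + 1) = hc t (a + 1) k + t ^ (k + 1) * hc t a (k + 1) := by
  have h1 : a + 1 + (k + 1) = (a + (k + 1)) + 1 := by ring
  have h2 : a + (k + 1) = (a + 1) + k := by ring
  rw [hc, hc, hc, h1, Dp_succ, h2, Dp_succ k, Dp_succ a]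
  have D1 := Dp_ne_zero ht (a + 1 + k)
  have D2 := Dp_ne_zero ht a
  have D3 := Dp_ne_zero ht k
  have e1 : (1 : ℂ) - t ^ (k + 1) ≠ 0 := sub_ne_zero.2 fun h => ht k h.symm
  have e2 : (1 : ℂ) - t ^ (a + 1) ≠ 0 := sub_ne_zero.2 fun h => ht a h.symm
  field_simp
  ring_nf

/-- coefficients in the Gauss binomial expansion -/
def gc (t : ℂ) (N k : ℕ) : ℂ := if k ≤ N then t ^ (k.choose 2) * hc t (N - k) k else 0

lemma two_mul_choose_two (k : ℕ) : 2 * k.choose 2 + k = k * k := by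
  induction k with
  | zero => rfl
  | succ n ih =>
    rw [Nat.choose_succ_succ, Nat.choose_one_right]
    ring_nf
    ring_nf at ih
    omega

lemma gc_zero (N : ℕ) (ht : ∀ i : ℕ, t ^ (i + 1) ≠ 1) : gc t N 0 = 1 := by
  simp [gc, hc_zero_right _ ht]

lemma gc_top (N : ℕ) (ht : ∀ i : ℕ, t ^ (i + 1) ≠ 1) :
    gc t N N = t ^ (N.choose 2) := by
  simp [gc, hc_zero_left _ ht]

lemma choose_succ_two (k : ℕ) : (k+1).choose 2 = k.choose 2 + k := by
  have := Nat.choose_succ_succ k 1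
  simpa [Nat.choose_one_right, Nat.add_comm] using this

lemma gc_pascal (ht : ∀ i : ℕ, t ^ (i + 1) ≠ 1) {N k : ℕ} (hk : k ≤ N) :
    gc t (N + 1) (k + 1) = t ^ (k + 1) * gc t N (k + 1) + t ^ k * gc t N k := by
  have hch := choose_succ_two k
  rcases eq_or_lt_of_le hk with rfl | hlt
  · rw [show gc t (k+1) (k+1) = t^((k+1).choose 2) from gc_top _ ht,
      gc_top _ ht, show gc t k (k+1) = 0 by rw [gc, if_neg (by omega)], hch, pow_add]
    ring
  · obtain ⟨a, ha⟩ : ∃ a, N - (k+1) = a := ⟨N - (k+1), rfl⟩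
    have h1 : N + 1 - (k + 1) = a + 1 := by omega
    have h2 : N - k = a + 1 := by omega
    rw [gc, if_pos (by omega), gc, if_pos (by omega), gc, if_pos hk, h1, ha, h2,
      hc_pascal ht, hch, pow_add, pow_add]
    ring

/-- Gauss's q-binomial theorem. -/
lemma gauss (ht : ∀ i : ℕ, t ^ (i + 1) ≠ 1) (N : ℕ) (x : ℂ) :
    ∏ n ∈ Finset.range N, (1 + x * t ^ n) =
      ∑ k ∈ Finset.range (N + 1), gc t N k * x ^ k := by
  induction N generalizing x with
  | zero => simp [gc_zero 0 ht]
  | succ N ih =>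
    have key : ∏ n ∈ Finset.range (N+1), (1 + x * t ^ n)
        = (1 + x) * ∏ n ∈ Finset.range N, (1 + (t * x) * t ^ n) := by
      rw [Finset.prod_range_succ' (fun n => 1 + x * t ^ n)]
      rw [Finset.prod_congr rfl (fun n _ => show 1 + x * t^(n+1) = 1 + (t*x) * t^n by ring)]
      rw [pow_zero, mul_one, mul_comm]
    have expand : (∑ k ∈ Finset.range (N+1), gc t N k * (t*x)^k)
        = ∑ k ∈ Finset.range (N+1), gc t N k * t^k * x^k :=
      Finset.sum_congr rfl fun k _ => by rw [mul_pow]; ring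
    rw [key, ih, expand, add_mul, one_mul, Finset.mul_sum]
    rw [Finset.sum_range_succ' (fun k => gc t (N+1) k * x ^ k)]
    rw [Finset.sum_range_succ' (fun k => gc t N k * t ^ k * x ^ k)]
    have htop : gc t N (N + 1) = 0 := by rw [gc, if_neg (by omega)]
    have step2 : ∑ k ∈ Finset.range N, gc t N (k+1) * t ^ (k+1) * x ^ (k+1)
        = ∑ k ∈ Finset.range (N+1), gc t N (k+1) * t ^ (k+1) * x ^ (k+1) := by
      rw [Finset.sum_range_succ, htop]; simp
    rw [step2, gc_zero _ ht, gc_zero _ ht]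
    have congrsum : ∑ k ∈ Finset.range (N+1), gc t (N+1) (k+1) * x ^ (k+1)
        = ∑ k ∈ Finset.range (N+1),
            (gc t N (k+1) * t ^ (k+1) * x ^ (k+1) + x * (gc t N k * t ^ k * x ^ k)) := by
      refine Finset.sum_congr rfl fun k hk => ?_
      rw [gc_pascal ht (Nat.lt_succ_iff.mp (Finset.mem_range.mp hk))]
      ring
    rw [congrsum, Finset.sum_add_distrib]
    ring

section Star

variable {q z : ℂ}

/-- the finite Jacobi triple product identity -/
lemma star (hq : q ≠ 0) (hz : z ≠ 0) (ht : ∀ i : ℕ, (q^2) ^ (i + 1) ≠ 1) (M : ℕ) :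
    (∏ m ∈ Finset.range (M+1), (1 + z * q^(2*m+1))) *
      (∏ m ∈ Finset.range (M+1), (1 + z⁻¹ * q^(2*m+1)))
    = ∑ j ∈ Finset.Icc (-(M+1 : ℤ)) (M+1),
        hc (q^2) ((M+1 : ℤ) - j).toNat ((M+1 : ℤ) + j).toNat * z ^ j * q ^ (j^2) := by
  have hq2 : (q:ℂ)^2 ≠ 0 := pow_ne_zero _ hq
  set t : ℂ := q^2 with htdef
  -- Step 1: Gauss with x = z / q^(2M+1), cleared of denominators
  have hx : ∀ n : ℕ, q^(2*M+1) * (1 + (z * (q^(2*M+1))⁻¹) * t ^ n) = q^(2*M+1) + z * q^(2*n) := by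
    intro n
    have h1 : t ^ n = q ^ (2*n) := by rw [htdef, ← pow_mul]
    rw [h1]
    field_simp
  have G := gauss ht (2*M+2) (z * (q^(2*M+1))⁻¹)
  have B1 : ∏ n ∈ Finset.range (2*M+2), (q^(2*M+1) + z * q^(2*n))
      = q^((2*M+1)*(2*M+2)) *
        ∏ n ∈ Finset.range (2*M+2), (1 + (z * (q^(2*M+1))⁻¹) * t ^ n) := by
    calc ∏ n ∈ Finset.range (2*M+2), (q^(2*M+1) + z * q^(2*n))
        = ∏ n ∈ Finset.range (2*M+2), (q^(2*M+1) * (1 + (z * (q^(2*M+1))⁻¹) * t ^ n)) :=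
          Finset.prod_congr rfl fun n _ => (hx n).symm
      _ = q^((2*M+1)*(2*M+2)) *
          ∏ n ∈ Finset.range (2*M+2), (1 + (z * (q^(2*M+1))⁻¹) * t ^ n) := by
          rw [Finset.prod_mul_distrib, Finset.prod_const, Finset.card_range, ← pow_mul]
  -- Step 2: simplify RHS of Gauss, cleared of denominators
  have B2 : q^((2*M+1)*(2*M+2)) *
        (∑ k ∈ Finset.range (2*M+3), gc t (2*M+2) k * (z * (q^(2*M+1))⁻¹)^k)
      = ∑ k ∈ Finset.range (2*M+3),
          hc t (2*M+2-k) k * z^k * q^(2*(k.choose 2) + (2*M+1)*(2*M+2-k)) := by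
    rw [Finset.mul_sum]
    refine Finset.sum_congr rfl fun k hk => ?_
    have hk' : k ≤ 2*M+2 := by have := Finset.mem_range.mp hk; omega
    rw [gc, if_pos hk']
    have e1 : t ^ (k.choose 2) = q^(2*(k.choose 2)) := by rw [htdef, ← pow_mul]
    have e2 : (z * (q^(2*M+1))⁻¹)^k = z^k * (q^((2*M+1)*k))⁻¹ := by
      rw [mul_pow, inv_pow, ← pow_mul]
    have e3 : q^((2*M+1)*(2*M+2)) = q^((2*M+1)*(2*M+2-k)) * q^((2*M+1)*k) := by
      rw [← pow_add, ← Nat.mul_add, Nat.sub_add_cancel hk']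
    rw [e1, e2, e3, pow_add]
    have : q^((2*M+1)*k) ≠ 0 := pow_ne_zero _ hq
    field_simp
  -- Step 3: split the product
  have split : ∏ n ∈ Finset.range (2*M+2), (q^(2*M+1) + z * q^(2*n))
      = (z^(M+1) * q^(M*(M+1)) * ∏ m ∈ Finset.range (M+1), (1 + z⁻¹ * q^(2*m+1)))
        * (q^((2*M+1)*(M+1)) * ∏ m ∈ Finset.range (M+1), (1 + z * q^(2*m+1))) := by
    rw [show 2*M+2 = (M+1)+(M+1) by ring, Finset.prod_range_add]
    congr 1
    · rw [← Finset.prod_range_reflect]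
      calc ∏ j ∈ Finset.range (M+1), (q^(2*M+1) + z * q^(2*(M+1-1-j)))
          = ∏ j ∈ Finset.range (M+1), (z * q^(2*(M-j)) * (1 + z⁻¹ * q^(2*j+1))) := by
            refine Finset.prod_congr rfl fun j hj => ?_
            have hj' : j ≤ M := by have := Finset.mem_range.mp hj; omega
            have h0 : 2*(M+1-1-j) = 2*(M-j) := by omega
            have hpow : q^(2*(M-j)) * q^(2*j+1) = q^(2*M+1) := by
              rw [← pow_add]; congr 1; omega
            rw [h0, ← hpow]
            field_simp
            ring
        _ = z^(M+1) * q^(M*(M+1)) * ∏ j ∈ Finset.range (M+1), (1 + z⁻¹ * q^(2*j+1)) := by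
            rw [Finset.prod_mul_distrib, Finset.prod_mul_distrib, Finset.prod_const,
              Finset.card_range, Finset.prod_pow_eq_pow_sum]
            have hsum : ∑ j ∈ Finset.range (M+1), 2*(M-j) = M*(M+1) := by
              have h1 : ∑ j ∈ Finset.range (M+1), 2*(M+1-1-j)
                  = ∑ j ∈ Finset.range (M+1), 2*j :=
                Finset.sum_range_reflect (fun j => 2*j) (M+1)
              have h2 : (∑ i ∈ Finset.range (M+1), i) * 2 = (M+1)*M :=
                Finset.sum_range_id_mul_two (M+1)
              have h3 : ∑ j ∈ Finset.range (M+1), 2*(M-j)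
                  = ∑ j ∈ Finset.range (M+1), 2*(M+1-1-j) := by
                refine Finset.sum_congr rfl fun j hj => ?_
                omega
              have h4 : ∑ j ∈ Finset.range (M+1), 2*j
                  = 2 * ∑ j ∈ Finset.range (M+1), j := by
                rw [Finset.mul_sum]
              rw [h3, h1, h4]
              rw [show M*(M+1) = (M+1)*M by ring, ← h2]
              ring
            rw [hsum]
    · calc ∏ m ∈ Finset.range (M+1), (q^(2*M+1) + z * q^(2*((M+1)+m)))
          = ∏ m ∈ Finset.range (M+1), (q^(2*M+1) * (1 + z * q^(2*m+1))) := by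
            refine Finset.prod_congr rfl fun m _ => ?_
            have h0 : q^(2*((M+1)+m)) = q^(2*M+1) * q^(2*m+1) := by
              rw [← pow_add]; congr 1; omega
            rw [h0]; ring
        _ = q^((2*M+1)*(M+1)) * ∏ m ∈ Finset.range (M+1), (1 + z * q^(2*m+1)) := by
            rw [Finset.prod_mul_distrib, Finset.prod_const, Finset.card_range, ← pow_mul]
  -- Step 4: the key identity
  have key : z^(M+1) * q^((2*M+1)*(M+1) + M*(M+1)) *
        ((∏ m ∈ Finset.range (M+1), (1 + z * q^(2*m+1))) *
          (∏ m ∈ Finset.range (M+1), (1 + z⁻¹ * q^(2*m+1))))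
      = ∑ k ∈ Finset.range (2*M+3),
          hc t (2*M+2-k) k * z^k * q^(2*(k.choose 2) + (2*M+1)*(2*M+2-k)) := by
    calc z^(M+1) * q^((2*M+1)*(M+1) + M*(M+1)) *
        ((∏ m ∈ Finset.range (M+1), (1 + z * q^(2*m+1))) *
          (∏ m ∈ Finset.range (M+1), (1 + z⁻¹ * q^(2*m+1))))
        = (z^(M+1) * q^(M*(M+1)) * ∏ m ∈ Finset.range (M+1), (1 + z⁻¹ * q^(2*m+1)))
          * (q^((2*M+1)*(M+1)) * ∏ m ∈ Finset.range (M+1), (1 + z * q^(2*m+1))) := by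
          rw [pow_add]; ring
      _ = ∏ n ∈ Finset.range (2*M+2), (q^(2*M+1) + z * q^(2*n)) := split.symm
      _ = q^((2*M+1)*(2*M+2)) *
          ∏ n ∈ Finset.range (2*M+2), (1 + (z * (q^(2*M+1))⁻¹) * t ^ n) := B1
      _ = q^((2*M+1)*(2*M+2)) *
          (∑ k ∈ Finset.range (2*M+3), gc t (2*M+2) k * (z * (q^(2*M+1))⁻¹)^k) := by
          rw [G]
      _ = ∑ k ∈ Finset.range (2*M+3),
          hc t (2*M+2-k) k * z^k * q^(2*(k.choose 2) + (2*M+1)*(2*M+2-k)) := B2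
  -- Step 5: reindex
  have reindex : z^(M+1) * q^((2*M+1)*(M+1) + M*(M+1)) *
        (∑ j ∈ Finset.Icc (-(M+1 : ℤ)) (M+1),
          hc t ((M+1 : ℤ) - j).toNat ((M+1 : ℤ) + j).toNat * z ^ j * q ^ (j^2))
      = ∑ k ∈ Finset.range (2*M+3),
          hc t (2*M+2-k) k * z^k * q^(2*(k.choose 2) + (2*M+1)*(2*M+2-k)) := by
    rw [Finset.mul_sum]
    refine Finset.sum_bij' (fun (j : ℤ) _ => ((M+1 : ℤ) + j).toNat)
      (fun (k : ℕ) _ => (k : ℤ) - (M+1)) ?_ ?_ ?_ ?_ ?_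
    · intro j hj
      simp only [Finset.mem_Icc] at hj
      simp only [Finset.mem_range]
      omega
    · intro k hk
      simp only [Finset.mem_range] at hk
      simp only [Finset.mem_Icc]
      omega
    · intro j hj
      simp only [Finset.mem_Icc] at hj
      omega
    · intro k hk
      simp only [Finset.mem_range] at hk
      omega
    · intro j hj
      simp only [Finset.mem_Icc] at hj
      set kk : ℕ := ((M+1 : ℤ) + j).toNat with hkk
      have hkz : (kk : ℤ) = (M+1 : ℤ) + j := by omega
      have hk2 : kk ≤ 2*M+2 := by omega
      have hA : ((M+1 : ℤ) - j).toNat = 2*M+2 - kk := by omega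
      have hzpart : z^(M+1) * z^j = z^(kk : ℤ) := by
        rw [← zpow_natCast z (M+1), ← zpow_add₀ hz, hkz]
        push_cast
        ring_nf
      have h2c : 2 * ((kk.choose 2 : ℕ) : ℤ) + kk = (kk : ℤ) * kk := by
        exact_mod_cast two_mul_choose_two kk
      have hqpart : q^((2*M+1)*(M+1) + M*(M+1)) * q^(j^2)
          = q^((2*(kk.choose 2) + (2*M+1)*(2*M+2-kk) : ℕ)) := by
        rw [← zpow_natCast q ((2*M+1)*(M+1) + M*(M+1)), ← zpow_add₀ hq,
          ← zpow_natCast q (2*(kk.choose 2) + (2*M+1)*(2*M+2-kk))]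
        congr 1
        have hcast : ((2*(kk.choose 2) + (2*M+1)*(2*M+2-kk) : ℕ) : ℤ)
            = 2 * ((kk.choose 2 : ℕ) : ℤ) + (2*(M:ℤ)+1)*(2*M+2-(kk : ℤ)) := by
          push_cast [Nat.cast_sub hk2]
          ring
        rw [hcast, hkz] at *
        push_cast
        rw [hkz] at h2c
        linear_combination -h2c
      rw [hA]
      calc z ^ (M+1) * q ^ ((2*M+1)*(M+1) + M*(M+1)) *
            (hc t (2*M+2-kk) kk * z ^ j * q ^ (j^2))
          = hc t (2*M+2-kk) kk * (z^(M+1) * z^j) *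
              (q^((2*M+1)*(M+1) + M*(M+1)) * q^(j^2)) := by ring
        _ = hc t (2*M+2-kk) kk * z^(kk : ℤ) *
              q^((2*(kk.choose 2) + (2*M+1)*(2*M+2-kk) : ℕ)) := by rw [hzpart, hqpart]
        _ = hc t (2*M+2-kk) kk * z^kk *
              q^(2*(kk.choose 2) + (2*M+1)*(2*M+2-kk)) := by rw [zpow_natCast]
  -- conclude
  have hcan : z^(M+1) * q^((2*M+1)*(M+1) + M*(M+1)) ≠ 0 :=
    mul_ne_zero (pow_ne_zero _ hz) (pow_ne_zero _ hq)
  apply mul_left_cancel₀ hcan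
  exact key.trans reindex.symm

end Star

section Analytic

open Filter Topology

lemma hasProd_zero_of_eq_zero {f : ℕ → ℂ} {i0 : ℕ} (h : f i0 = 0) : HasProd f 0 := by
  have hev : ∀ᶠ s : Finset ℕ in atTop, ∏ i ∈ s, f i = 0 := by
    filter_upwards [Filter.eventually_ge_atTop ({i0} : Finset ℕ)] with s hs
    exact Finset.prod_eq_zero (hs (Finset.mem_singleton_self i0)) h
  exact tendsto_const_nhds.congr' (by filter_upwards [hev] with s hs using hs.symm)

lemma multipliable_one_add {u : ℕ → ℂ} (hu : Summable fun n => ‖u n‖) :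
    Multipliable fun n => 1 + u n := by
  by_cases h0 : ∃ i, 1 + u i = 0
  · obtain ⟨i0, hi0⟩ := h0
    exact ⟨0, hasProd_zero_of_eq_zero hi0⟩
  · push_neg at h0
    apply Complex.multipliable_of_summable_log
    apply Summable.of_norm_bounded_eventually_nat (g := fun n => (3/2) * ‖u n‖) (hu.mul_left _)
    have hten : Tendsto (fun n => ‖u n‖) atTop (𝓝 0) := hu.tendsto_atTop_zero
    filter_upwards [hten.eventually_le_const (by norm_num : (0:ℝ) < 1/2)] with n hn
    exact Complex.norm_log_one_add_half_le_self hn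

lemma exp_aux {x c : ℝ} (hx : 0 ≤ x) (hxc : x ≤ c) (hc : c < 1) :
    Real.exp (-(x/(1-c))) ≤ 1 - x := by
  have h1c : 0 < 1 - c := by linarith
  have hx1 : 0 < 1 - x := by linarith
  set u : ℝ := x / (1-c) with hu
  have hu0 : 0 ≤ u := div_nonneg hx h1c.le
  have hxu : x ≤ u * (1 - c) := by rw [hu, div_mul_cancel₀]; exact h1c.ne'
  have h1 : u + 1 ≤ Real.exp u := Real.add_one_le_exp u
  have hE : (1:ℝ) ≤ (1-x) * Real.exp u := by nlinarith
  rw [Real.exp_neg]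
  rw [inv_le_comm₀ (Real.exp_pos u) hx1]
  rw [inv_le_iff_one_le_mul₀ hx1]
  linarith [hE]

lemma summable_abs_int {w z : ℂ} (hw : ‖w‖ < 1) (hz : z ≠ 0) :
    Summable fun n : ℤ => ‖z ^ n * w ^ (n ^ 2)‖ := by
  set c : ℝ := max ‖z‖ ‖z⁻¹‖ with hc
  have hw2 : ‖w‖^2 < 1 := by nlinarith [norm_nonneg w]
  have key : Summable (fun n : ℕ => c^n * ‖w‖^(n^2)) := by
    apply summable_of_ratio_norm_eventually_le (r := 1/2) (by norm_num)
    have h0 : Tendsto (fun n : ℕ => (c * ‖w‖) * (‖w‖^2)^n) atTop (𝓝 0) := by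
      simpa using (tendsto_pow_atTop_nhds_zero_of_lt_one (by positivity) hw2).const_mul (c * ‖w‖)
    have h0' : Tendsto (fun n : ℕ => c * ‖w‖^(2*n+1)) atTop (𝓝 0) := by
      refine h0.congr fun n => ?_
      rw [← pow_mul, pow_succ]
      ring
    filter_upwards [h0'.eventually_le_const (by norm_num : (0:ℝ) < 1/2)] with n hn
    have hb : (0:ℝ) ≤ c := le_trans (norm_nonneg z) (le_max_left _ _)
    rw [Real.norm_of_nonneg (by positivity), Real.norm_of_nonneg (by positivity)]
    have e1 : c^(n+1) * ‖w‖^((n+1)^2) = (c * ‖w‖^(2*n+1)) * (c^n * ‖w‖^(n^2)) := by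
      rw [show (n+1)^2 = n^2 + (2*n+1) by ring, pow_add ‖w‖, pow_succ c]
      ring
    rw [e1]
    exact mul_le_mul_of_nonneg_right hn (by positivity)
  have habs : ∀ (y : ℂ) (n : ℕ), ‖y‖ ≤ c →
      ‖y ^ (n:ℤ) * w ^ ((n:ℤ))^2‖ ≤ c^n * ‖w‖^(n^2) := by
    intro y n hy
    have h1 : ((n:ℤ))^2 = ((n^2 : ℕ) : ℤ) := by push_cast; ring
    rw [h1, zpow_natCast, zpow_natCast, norm_mul, norm_pow, norm_pow]
    exact mul_le_mul_of_nonneg_right (pow_le_pow_left₀ (norm_nonneg y) hy n)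
      (by positivity)
  apply Summable.of_nat_of_neg
  · apply Summable.of_nonneg_of_le (fun n => norm_nonneg _) ?_ key
    intro n
    exact habs z n (le_max_left _ _)
  · apply Summable.of_nonneg_of_le (fun n => norm_nonneg _) ?_ key
    intro n
    have e : z ^ (-(n:ℤ)) * w ^ ((-(n:ℤ))^2) = z⁻¹ ^ ((n:ℕ):ℤ) * w ^ (((n:ℕ):ℤ))^2 := by
      rw [zpow_neg, ← inv_zpow, neg_sq]
    rw [e]
    exact habs z⁻¹ n (le_max_right _ _)

end Analytic


section Main

open Filter Topology

set_option maxHeartbeats 1000000 in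
theorem jacobi_main {w z : ℂ} (hw : ‖w‖ < 1) (hw0 : w ≠ 0) (hz : z ≠ 0) :
    (∏' n : ℕ,
        (1 - w ^ (2 * (n + 1))) * (1 + z * w ^ (2 * n + 1)) * (1 + z⁻¹ * w ^ (2 * n + 1))) =
      ∑' n : ℤ, z ^ n * w ^ (n ^ 2) := by
  have hct : ‖w^2‖ < 1 := by rw [norm_pow]; nlinarith [norm_nonneg w]
  have htne : ∀ i : ℕ, (w^2) ^ (i+1) ≠ 1 := by
    intro i h
    have h2 : ‖w^2‖^(i+1) < 1 := pow_lt_one₀ (norm_nonneg _) hct (Nat.succ_ne_zero i)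
    rw [← norm_pow, h, norm_one] at h2
    exact lt_irrefl _ h2
  have hgeo : Summable (fun i : ℕ => ‖w^2‖^(i+1)) :=
    ((summable_geometric_of_lt_one (norm_nonneg _) hct).mul_left ‖w^2‖).congr
      fun i => (pow_succ' _ _).symm
  have geo2 : ∀ c : ℂ, Summable fun n : ℕ => ‖c * w^(2*n+1)‖ := by
    intro c
    have he : (fun n : ℕ => ‖c * w^(2*n+1)‖) = fun n => (‖c‖*‖w‖) * (‖w‖^2)^n := by
      funext n
      rw [norm_mul, norm_pow, ← pow_mul, show 2*n+1 = 1 + 2*n by ring, pow_add, pow_one]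
      ring
    rw [he]
    exact (summable_geometric_of_lt_one (by positivity)
      (by rw [← norm_pow]; exact hct)).mul_left _
  have m1 : Multipliable fun n : ℕ => 1 + z * w^(2*n+1) := multipliable_one_add (geo2 z)
  have m2 : Multipliable fun n : ℕ => 1 + z⁻¹ * w^(2*n+1) := multipliable_one_add (geo2 z⁻¹)
  have m3 : Multipliable fun n : ℕ => 1 - (w^2)^(n+1) := by
    have h := multipliable_one_add (u := fun n : ℕ => -((w^2)^(n+1))) (by simpa using hgeo)
    exact h.congr fun n => by ring
  set D : ℂ := ∏' n : ℕ, (1 - (w^2)^(n+1)) with hD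
  have Dlim : Tendsto (fun m => Dp (w^2) m) atTop (𝓝 D) := m3.hasProd.tendsto_prod_nat
  set cc : ℝ := ‖w^2‖ with hcc
  set S0 : ℝ := ∑' i : ℕ, cc^(i+1) with hS0
  set Bq : ℝ := Real.exp (-(S0/(1-cc))) with hBq
  set Aq : ℝ := Real.exp S0 with hAq
  have hccnn : 0 ≤ cc := norm_nonneg _
  have hBpos : 0 < Bq := Real.exp_pos _
  have hDlow : ∀ m, Bq ≤ ‖Dp (w^2) m‖ := by
    intro m
    have h1 : ∏ i ∈ Finset.range m, Real.exp (-(cc^(i+1)/(1-cc)))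
        ≤ ∏ i ∈ Finset.range m, ‖1 - (w^2)^(i+1)‖ := by
      apply Finset.prod_le_prod (fun i _ => (Real.exp_pos _).le)
      intro i _
      have hle : cc^(i+1) ≤ cc := by
        calc cc^(i+1) ≤ cc^1 := pow_le_pow_of_le_one hccnn hct.le (by omega)
          _ = cc := pow_one cc
      calc Real.exp (-(cc^(i+1)/(1-cc))) ≤ 1 - cc^(i+1) :=
            exp_aux (by positivity) hle hct
        _ ≤ ‖1 - (w^2)^(i+1)‖ := by
            have h := norm_sub_norm_le (1 : ℂ) ((w^2)^(i+1))
            rw [norm_one, norm_pow] at h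
            exact h
    have h2 : ∏ i ∈ Finset.range m, Real.exp (-(cc^(i+1)/(1-cc)))
        = Real.exp (∑ i ∈ Finset.range m, -(cc^(i+1)/(1-cc))) := by
      rw [Real.exp_sum]
    have e : ∑ i ∈ Finset.range m, -(cc^(i+1)/(1-cc))
        = -((∑ i ∈ Finset.range m, cc^(i+1))/(1-cc)) := by
      rw [Finset.sum_neg_distrib, ← Finset.sum_div]
    have h1c : 0 < 1 - cc := by linarith
    have hpart : ∑ i ∈ Finset.range m, cc^(i+1) ≤ S0 :=
      Summable.sum_le_tsum _ (fun i _ => by positivity) hgeo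
    have h3 : -(S0/(1-cc)) ≤ ∑ i ∈ Finset.range m, -(cc^(i+1)/(1-cc)) := by
      rw [e]
      apply neg_le_neg
      exact div_le_div_of_nonneg_right hpart h1c.le
    calc Bq ≤ Real.exp (∑ i ∈ Finset.range m, -(cc^(i+1)/(1-cc))) := Real.exp_le_exp.mpr h3
      _ = ∏ i ∈ Finset.range m, Real.exp (-(cc^(i+1)/(1-cc))) := h2.symm
      _ ≤ ∏ i ∈ Finset.range m, ‖1 - (w^2)^(i+1)‖ := h1
      _ = ‖Dp (w^2) m‖ := by rw [Dp, norm_prod]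
  have hDhigh : ∀ m, ‖Dp (w^2) m‖ ≤ Aq := by
    intro m
    have h1 : ‖Dp (w^2) m‖ ≤ ∏ i ∈ Finset.range m, (1 + cc^(i+1)) := by
      rw [Dp, norm_prod]
      apply Finset.prod_le_prod (fun i _ => norm_nonneg _)
      intro i _
      calc ‖1 - (w^2)^(i+1)‖ ≤ ‖(1:ℂ)‖ + ‖(w^2)^(i+1)‖ := norm_sub_le _ _
        _ = 1 + cc^(i+1) := by rw [norm_one, norm_pow]
    have h2 : ∏ i ∈ Finset.range m, (1 + cc^(i+1))
        ≤ Real.exp (∑ i ∈ Finset.range m, cc^(i+1)) := by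
      rw [Real.exp_sum]
      apply Finset.prod_le_prod (fun i _ => by positivity)
      intro i _
      linarith [Real.add_one_le_exp (cc^(i+1))]
    have h3 : Real.exp (∑ i ∈ Finset.range m, cc^(i+1)) ≤ Aq :=
      Real.exp_le_exp.mpr (Summable.sum_le_tsum _ (fun i _ => by positivity) hgeo)
    linarith
  have hDne : D ≠ 0 := by
    have hle : Bq ≤ ‖D‖ := ge_of_tendsto Dlim.norm (Filter.Eventually.of_forall hDlow)
    intro h; rw [h, norm_zero] at hle; linarith
  have hcb : ∀ a k, ‖hc (w^2) a k‖ ≤ Aq / (Bq * Bq) := by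
    intro a k
    rw [hc, norm_div, norm_mul]
    exact div_le_div₀ (by positivity) (hDhigh _) (by positivity)
      (mul_le_mul (hDlow a) (hDlow k) hBpos.le (norm_nonneg _))
  set L : ℂ := D / (D * D) with hL
  have hlim : ∀ j : ℤ, Tendsto
      (fun M : ℕ => hc (w^2) ((M+1 : ℤ) - j).toNat ((M+1 : ℤ) + j).toNat) atTop (𝓝 L) := by
    intro j
    have t1 : Tendsto (fun M : ℕ => ((M+1 : ℤ) - j).toNat) atTop atTop :=
      tendsto_atTop_atTop.mpr fun b => ⟨b + j.natAbs, fun M hM => by omega⟩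
    have t2 : Tendsto (fun M : ℕ => ((M+1 : ℤ) + j).toNat) atTop atTop :=
      tendsto_atTop_atTop.mpr fun b => ⟨b + j.natAbs, fun M hM => by omega⟩
    have t3 : Tendsto (fun M : ℕ => ((M+1 : ℤ) - j).toNat + ((M+1 : ℤ) + j).toNat)
        atTop atTop :=
      tendsto_atTop_atTop.mpr fun b => ⟨b + 2*j.natAbs, fun M hM => by omega⟩
    exact Tendsto.div (Dlim.comp t3) ((Dlim.comp t1).mul (Dlim.comp t2))
      (mul_ne_zero hDne hDne)
  set bound : ℤ → ℝ := fun j => (Aq/(Bq*Bq)) * ‖z^j * w^(j^2)‖ with hbound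
  have hbsum : Summable bound := (summable_abs_int hw hz).mul_left _
  set F : ℕ → ℤ → ℂ := fun M j =>
    if j ∈ Finset.Icc (-(M+1 : ℤ)) (M+1) then
      hc (w^2) ((M+1 : ℤ) - j).toNat ((M+1 : ℤ) + j).toNat * z^j * w^(j^2) else 0 with hF
  have hFsum : ∀ M : ℕ, ∑' j : ℤ, F M j = ∑ j ∈ Finset.Icc (-(M+1 : ℤ)) (M+1),
      hc (w^2) ((M+1 : ℤ) - j).toNat ((M+1 : ℤ) + j).toNat * z^j * w^(j^2) := by
    intro M
    rw [tsum_eq_sum (s := Finset.Icc (-(M+1 : ℤ)) (M+1)) (fun b hb => if_neg hb)]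
    exact Finset.sum_congr rfl fun j hj => if_pos hj
  have hFb : ∀ (M : ℕ) (j : ℤ), ‖F M j‖ ≤ bound j := by
    intro M j
    have hbnn : (0:ℝ) ≤ ‖z^j * w^(j^2)‖ := norm_nonneg _
    show ‖if _ then _ else _‖ ≤ _
    split_ifs with h
    · rw [mul_assoc, norm_mul]
      calc ‖hc (w^2) ((M+1 : ℤ) - j).toNat ((M+1 : ℤ) + j).toNat‖ * ‖z^j * w^(j^2)‖
          ≤ (Aq/(Bq*Bq)) * ‖z^j * w^(j^2)‖ :=
            mul_le_mul_of_nonneg_right (hcb _ _) (norm_nonneg _)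
        _ = bound j := by rw [hbound]
    · rw [norm_zero, hbound]
      positivity
  have hFlim : ∀ j : ℤ, Tendsto (fun M => F M j) atTop (𝓝 (L * z^j * w^(j^2))) := by
    intro j
    have hev : (fun M : ℕ => hc (w^2) ((M+1:ℤ)-j).toNat ((M+1:ℤ)+j).toNat * z^j * w^(j^2))
        =ᶠ[atTop] fun M => F M j := by
      filter_upwards [Filter.eventually_ge_atTop j.natAbs] with M hM
      simp only [hF]
      rw [if_pos (by simp only [Finset.mem_Icc]; omega)]
    exact (((hlim j).mul_const _).mul_const _).congr' hev
  have tann := tendsto_tsum_of_dominated_convergence (𝓕 := atTop) (f := fun M j => F M j)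
      (g := fun j => L * z^j * w^(j^2)) hbsum hFlim
      (Filter.Eventually.of_forall fun M j => hFb M j)
  set S : ℂ := ∑' n : ℤ, z^n * w^(n^2) with hS
  have hgsum : ∑' j : ℤ, L * z^j * w^(j^2) = L * S := by
    rw [hS, ← tsum_mul_left]
    exact tsum_congr fun j => by ring
  have hRHS : Tendsto (fun M : ℕ => ∑ j ∈ Finset.Icc (-(M+1:ℤ)) (M+1),
      hc (w^2) ((M+1:ℤ)-j).toNat ((M+1:ℤ)+j).toNat * z^j * w^(j^2)) atTop (𝓝 (L*S)) := by
    rw [← hgsum]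
    exact tann.congr hFsum
  have hLHS : Tendsto (fun M : ℕ => (∏ m ∈ Finset.range (M+1), (1 + z*w^(2*m+1))) *
      ∏ m ∈ Finset.range (M+1), (1 + z⁻¹*w^(2*m+1))) atTop
      (𝓝 ((∏' n:ℕ, (1 + z*w^(2*n+1))) * ∏' n:ℕ, (1 + z⁻¹*w^(2*n+1)))) := by
    have l1 := m1.hasProd.tendsto_prod_nat.comp (tendsto_add_atTop_nat 1)
    have l2 := m2.hasProd.tendsto_prod_nat.comp (tendsto_add_atTop_nat 1)
    exact l1.mul l2
  have hPP : (∏' n:ℕ, (1 + z*w^(2*n+1))) * (∏' n:ℕ, (1 + z⁻¹*w^(2*n+1))) = L * S :=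
    tendsto_nhds_unique (hLHS.congr (fun M => star hw0 hz htne M)) hRHS
  have m3' : Multipliable fun n : ℕ => 1 - w^(2*(n+1)) := m3.congr fun n => by rw [← pow_mul]
  have msplit : (∏' n : ℕ, (1 - w^(2*(n+1))) * (1 + z*w^(2*n+1)) * (1 + z⁻¹*w^(2*n+1)))
      = (∏' n : ℕ, (1 - w^(2*(n+1)))) * (∏' n:ℕ, (1 + z*w^(2*n+1)))
        * (∏' n:ℕ, (1 + z⁻¹*w^(2*n+1))) := by
    rw [Multipliable.tprod_mul (m3'.mul m1) m2, Multipliable.tprod_mul m3' m1]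
  have hDD : (∏' n : ℕ, (1 - w^(2*(n+1)))) = D := tprod_congr fun n => by rw [pow_mul]
  rw [msplit, hDD, mul_assoc, hPP, hL]
  field_simp

lemma mult_all {w : ℂ} (z : ℂ) (hw : ‖w‖ < 1) : Multipliable fun n : ℕ =>
    (1 - w^(2*(n+1))) * (1 + z*w^(2*n+1)) * (1 + z⁻¹*w^(2*n+1)) := by
  have hct : ‖w^2‖ < 1 := by rw [norm_pow]; nlinarith [norm_nonneg w]
  have hgeo : Summable (fun i : ℕ => ‖w^2‖^(i+1)) :=
    ((summable_geometric_of_lt_one (norm_nonneg _) hct).mul_left ‖w^2‖).congr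
      fun i => (pow_succ' _ _).symm
  have geo2 : ∀ c : ℂ, Summable fun n : ℕ => ‖c * w^(2*n+1)‖ := by
    intro c
    have he : (fun n : ℕ => ‖c * w^(2*n+1)‖) = fun n => (‖c‖*‖w‖) * (‖w‖^2)^n := by
      funext n
      rw [norm_mul, norm_pow, ← pow_mul, show 2*n+1 = 1 + 2*n by ring, pow_add, pow_one]
      ring
    rw [he]
    exact (summable_geometric_of_lt_one (by positivity)
      (by rw [← norm_pow]; exact hct)).mul_left _
  have m1 : Multipliable fun n : ℕ => 1 + z * w^(2*n+1) := multipliable_one_add (geo2 z)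
  have m2 : Multipliable fun n : ℕ => 1 + z⁻¹ * w^(2*n+1) := multipliable_one_add (geo2 z⁻¹)
  have m3 : Multipliable fun n : ℕ => 1 - (w^2)^(n+1) := by
    have h := multipliable_one_add (u := fun n : ℕ => -((w^2)^(n+1))) (by simpa using hgeo)
    exact h.congr fun n => by ring
  have m3' : Multipliable fun n : ℕ => 1 - w^(2*(n+1)) := m3.congr fun n => by rw [← pow_mul]
  exact (m3'.mul m1).mul m2

end Main

end

end JTP

/-- The Jacobi triple product identity: for `|w| < 1` and `z ≠ 0`,
`∏_{n≥1} (1−w^{2n})(1+z·w^{2n−1})(1+z⁻¹·w^{2n−1}) = Σ_{n∈ℤ} z^n w^{n²}`,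
with the product convergent and the bilateral series absolutely convergent. -/
theorem statement10 (w z : ℂ) (hw : ‖w‖ < 1) (hz : z ≠ 0) :
    Multipliable (fun n : ℕ =>
      (1 - w ^ (2 * (n + 1))) * (1 + z * w ^ (2 * n + 1)) * (1 + z⁻¹ * w ^ (2 * n + 1))) ∧
    Summable (fun n : ℤ => ‖z ^ n * w ^ (n ^ 2)‖) ∧
    (∏' n : ℕ,
        (1 - w ^ (2 * (n + 1))) * (1 + z * w ^ (2 * n + 1)) * (1 + z⁻¹ * w ^ (2 * n + 1))) =
      ∑' n : ℤ, z ^ n * w ^ (n ^ 2) := by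
  have hw' : ‖w‖ < 1 := hw
  refine ⟨JTP.mult_all z hw', JTP.summable_abs_int hw' hz, ?_⟩
  by_cases hw0 : w = 0
  · subst hw0
    have hfun : (fun n : ℕ => (1 - (0:ℂ) ^ (2 * (n + 1))) * (1 + z * 0 ^ (2 * n + 1)) *
        (1 + z⁻¹ * 0 ^ (2 * n + 1))) = fun _ => 1 := by
      funext n
      rw [zero_pow (by omega), zero_pow (by omega)]
      ring
    rw [hfun, tprod_one]
    rw [tsum_eq_single (0 : ℤ)]
    · simp
    · intro b hb
      rw [zero_zpow _ (pow_ne_zero 2 hb), mul_zero]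
  · exact JTP.jacobi_main hw' hw0 hz
end

section
/- In ℚ[[q]], with D = q·d/dq the formal derivation sending Σ a_n q^n to Σ n·a_n q^n, the Eisenstein series satisfy D(E_2) = (E_2² − E_4)/12, D(E_4) = (E_2·E_4 − E_6)/3, and D(E_6) = (E_2·E_6 − E_4²)/2. -/
open Finset

def sigma' (k n : ℕ) : ℕ := ∑ d ∈ n.divisors, d ^ k

noncomputable def E₂ : PowerSeries ℚ :=
  PowerSeries.mk fun n => if n = 0 then 1 else -24 * (sigma' 1 n : ℚ)

noncomputable def E₄ : PowerSeries ℚ :=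
  PowerSeries.mk fun n => if n = 0 then 1 else 240 * (sigma' 3 n : ℚ)

noncomputable def E₆ : PowerSeries ℚ :=
  PowerSeries.mk fun n => if n = 0 then 1 else -504 * (sigma' 5 n : ℚ)

/-- The formal derivation `D = q·d/dq` on `ℚ[[q]]`, sending `Σ aₙ qⁿ` to `Σ n·aₙ qⁿ`. -/
noncomputable def Dq (f : PowerSeries ℚ) : PowerSeries ℚ :=
  PowerSeries.mk fun n => (n : ℚ) * PowerSeries.coeff n f


/-- quadruples (a,b,x,y) of positive naturals with a*x+b*y = N -/
def U (N : ℕ) : Finset (ℕ × ℕ × ℕ × ℕ) :=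
  ((range (N+1)) ×ˢ (range (N+1)) ×ˢ (range (N+1)) ×ˢ (range (N+1))).filter
    (fun p => p.1 * p.2.2.1 + p.2.1 * p.2.2.2 = N ∧ p.1 ≠ 0 ∧ p.2.1 ≠ 0 ∧ p.2.2.1 ≠ 0 ∧ p.2.2.2 ≠ 0)

lemma mem_U {N : ℕ} {p : ℕ × ℕ × ℕ × ℕ} :
    p ∈ U N ↔ p.1 * p.2.2.1 + p.2.1 * p.2.2.2 = N ∧ p.1 ≠ 0 ∧ p.2.1 ≠ 0 ∧ p.2.2.1 ≠ 0 ∧ p.2.2.2 ≠ 0 := by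
  obtain ⟨a, b, x, y⟩ := p
  simp only [U, mem_filter, mem_product, mem_range]
  constructor
  · tauto
  · rintro ⟨h, ha, hb, hx, hy⟩
    have h1 : a ≤ a * x := Nat.le_mul_of_pos_right _ (Nat.pos_of_ne_zero hx)
    have h2 : b ≤ b * y := Nat.le_mul_of_pos_right _ (Nat.pos_of_ne_zero hy)
    have h3 : x ≤ a * x := Nat.le_mul_of_pos_left _ (Nat.pos_of_ne_zero ha)
    have h4 : y ≤ b * y := Nat.le_mul_of_pos_left _ (Nat.pos_of_ne_zero hb)
    refine ⟨⟨?_, ?_, ?_, ?_⟩, h, ha, hb, hx, hy⟩ <;> omega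

section sums
variable {N : ℕ}

/-- split a sum over U by comparing first two coordinates -/
lemma split_ab (f : ℕ × ℕ × ℕ × ℕ → ℚ) :
    ∑ p ∈ U N, f p =
      ∑ p ∈ (U N).filter (fun p => p.1 < p.2.1), f p
      + ∑ p ∈ (U N).filter (fun p => p.2.1 < p.1), f p
      + ∑ p ∈ (U N).filter (fun p => p.1 = p.2.1), f p := by
  have h2 := Finset.sum_filter_add_sum_filter_not ((U N).filter (fun p => ¬ p.1 < p.2.1))
        (fun p => p.2.1 < p.1) f
  rw [Finset.filter_filter, Finset.filter_filter,
    (Finset.filter_congr (fun p _ => by omega) :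
      (U N).filter (fun p => ¬ p.1 < p.2.1 ∧ p.2.1 < p.1) = (U N).filter (fun p => p.2.1 < p.1)),
    (Finset.filter_congr (fun p _ => by omega) :
      (U N).filter (fun p => ¬ p.1 < p.2.1 ∧ ¬ p.2.1 < p.1) = (U N).filter (fun p => p.1 = p.2.1))] at h2
  rw [← Finset.sum_filter_add_sum_filter_not (U N) (fun p => p.1 < p.2.1) f, ← h2, add_assoc]

lemma split_xy (f : ℕ × ℕ × ℕ × ℕ → ℚ) :
    ∑ p ∈ U N, f p =
      ∑ p ∈ (U N).filter (fun p => p.2.2.2 < p.2.2.1), f p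
      + ∑ p ∈ (U N).filter (fun p => p.2.2.1 < p.2.2.2), f p
      + ∑ p ∈ (U N).filter (fun p => p.2.2.1 = p.2.2.2), f p := by
  have h2 := Finset.sum_filter_add_sum_filter_not ((U N).filter (fun p => ¬ p.2.2.2 < p.2.2.1))
        (fun p => p.2.2.1 < p.2.2.2) f
  rw [Finset.filter_filter, Finset.filter_filter,
    (Finset.filter_congr (fun p _ => by omega) :
      (U N).filter (fun p => ¬ p.2.2.2 < p.2.2.1 ∧ p.2.2.1 < p.2.2.2) = (U N).filter (fun p => p.2.2.1 < p.2.2.2)),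
    (Finset.filter_congr (fun p _ => by omega) :
      (U N).filter (fun p => ¬ p.2.2.2 < p.2.2.1 ∧ ¬ p.2.2.1 < p.2.2.2) = (U N).filter (fun p => p.2.2.1 = p.2.2.2))] at h2
  rw [← Finset.sum_filter_add_sum_filter_not (U N) (fun p => p.2.2.2 < p.2.2.1) f, ← h2, add_assoc]

/-- swap symmetry (a,b,x,y) ↦ (b,a,y,x) -/
lemma sum_swap' (P : ℕ × ℕ × ℕ × ℕ → Prop) [DecidablePred P] (f : ℕ × ℕ × ℕ × ℕ → ℚ) :
    ∑ p ∈ (U N).filter P, f p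
      = ∑ p ∈ (U N).filter (fun p => P (p.2.1, p.1, p.2.2.2, p.2.2.1)),
          f (p.2.1, p.1, p.2.2.2, p.2.2.1) := by
  refine Finset.sum_nbij' (fun p => (p.2.1, p.1, p.2.2.2, p.2.2.1))
    (fun p => (p.2.1, p.1, p.2.2.2, p.2.2.1)) ?_ ?_ ?_ ?_ ?_
  · rintro ⟨a,b,x,y⟩ hp
    simp only [mem_filter, mem_U] at hp ⊢
    obtain ⟨⟨he, h⟩, hP⟩ := hp
    exact ⟨⟨by omega, by tauto⟩, hP⟩
  · rintro ⟨a,b,x,y⟩ hp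
    simp only [mem_filter, mem_U] at hp ⊢
    obtain ⟨⟨he, h⟩, hP⟩ := hp
    exact ⟨⟨by omega, by tauto⟩, hP⟩
  · rintro ⟨a,b,x,y⟩ _; rfl
  · rintro ⟨a,b,x,y⟩ _; rfl
  · rintro ⟨a,b,x,y⟩ _; rfl

/-- the pivot bijection: on a*x+b*y = N, {y<x} ≃ {a<b} via (a,b,x,y) ↦ (a,a+b,x-y,y) -/
lemma pivot (f : ℕ × ℕ × ℕ × ℕ → ℚ) :
    ∑ p ∈ (U N).filter (fun p => p.2.2.2 < p.2.2.1), f p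
      = ∑ p ∈ (U N).filter (fun p => p.1 < p.2.1),
          f (p.1, p.2.1 - p.1, p.2.2.1 + p.2.2.2, p.2.2.2) := by
  refine Finset.sum_nbij' (fun p => (p.1, p.1 + p.2.1, p.2.2.1 - p.2.2.2, p.2.2.2))
    (fun p => (p.1, p.2.1 - p.1, p.2.2.1 + p.2.2.2, p.2.2.2)) ?_ ?_ ?_ ?_ ?_
  · rintro ⟨a,b,x,y⟩ hp
    simp only [mem_filter, mem_U] at hp ⊢
    obtain ⟨⟨he, ha, hb, hx, hy⟩, hP⟩ := hp
    refine ⟨⟨?_, by omega, by omega, by omega, by omega⟩, by omega⟩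
    have : x - y + y = x := by omega
    calc a * (x - y) + (a + b) * y = a * (x - y + y) + b * y := by ring_nf
      _ = N := by rw [this]; exact he
  · rintro ⟨a,b,x,y⟩ hp
    simp only [mem_filter, mem_U] at hp ⊢
    obtain ⟨⟨he, ha, hb, hx, hy⟩, hP⟩ := hp
    refine ⟨⟨?_, by omega, by omega, by omega, by omega⟩, by omega⟩
    have : b - a + a = b := by omega
    calc a * (x + y) + (b - a) * y = a * x + (b - a + a) * y := by ring_nf
      _ = N := by rw [this]; exact he
  · rintro ⟨a,b,x,y⟩ hp
    simp only [mem_filter, mem_U] at hp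
    obtain ⟨⟨he, h⟩, hP⟩ := hp
    have h1 : a + b - a = b := by omega
    have h2 : x - y + y = x := by omega
    dsimp only
    rw [h1, h2]
  · rintro ⟨a,b,x,y⟩ hp
    simp only [mem_filter, mem_U] at hp
    obtain ⟨⟨he, h⟩, hP⟩ := hp
    have h1 : a + (b - a) = b := by omega
    have h2 : x + y - y = x := by omega
    dsimp only
    rw [h1, h2]
  · rintro ⟨a,b,x,y⟩ hp
    simp only [mem_filter, mem_U] at hp
    obtain ⟨⟨he, h⟩, hP⟩ := hp
    have h1 : a + b - a = b := by omega
    have h2 : x - y + y = x := by omega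
    dsimp only
    rw [h1, h2]

lemma sigma_cast (j n : ℕ) : ((sigma' j n : ℕ) : ℚ) = ∑ d ∈ n.divisors, (d:ℚ)^j := by
  simp [sigma']

lemma antidiag_pow (j : ℕ) : ∑ q ∈ N.divisorsAntidiagonal, ((q.1:ℚ))^j = (sigma' j N : ℚ) := by
  rw [Nat.sum_divisorsAntidiagonal (fun a b => (a:ℚ)^j), sigma_cast]

/-- sum over the diagonal a = b -/
lemma adiag (k : ℕ) :
    ∑ p ∈ (U N).filter (fun p => p.1 = p.2.1), ((p.1:ℚ))^(k+1)
      = (N : ℚ) * (sigma' k N : ℚ) - (sigma' (k+1) N : ℚ) := by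
  have step1 : ∑ p ∈ (U N).filter (fun p => p.1 = p.2.1), ((p.1:ℚ))^(k+1)
      = ∑ v ∈ (N.divisorsAntidiagonal).sigma (fun q => Icc 1 (q.2 - 1)), ((v.1.1:ℚ))^(k+1) := by
    refine Finset.sum_nbij' (fun p => ⟨(p.1, p.2.2.1 + p.2.2.2), p.2.2.2⟩)
      (fun v => (v.1.1, v.1.1, v.1.2 - v.2, v.2)) ?_ ?_ ?_ ?_ ?_
    · rintro ⟨a,b,x,y⟩ hp
      simp only [mem_filter, mem_U] at hp
      obtain ⟨⟨he, ha, hb, hx, hy⟩, hab⟩ := hp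
      subst hab
      simp only [Finset.mem_sigma, Nat.mem_divisorsAntidiagonal, mem_Icc]
      have hax : a * x ≠ 0 := Nat.mul_ne_zero ha hx
      refine ⟨⟨by rw [← he]; ring, by omega⟩, by omega, by omega⟩
    · rintro ⟨⟨d,e⟩,y⟩ hv
      simp only [Finset.mem_sigma, Nat.mem_divisorsAntidiagonal, mem_Icc] at hv
      obtain ⟨⟨he, hN⟩, hy1, hy2⟩ := hv
      simp only [mem_filter, mem_U]
      have hd : d ≠ 0 := by rintro rfl; rw [Nat.zero_mul] at he; omega
      have h2 : e - y + y = e := by omega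
      refine ⟨⟨?_, hd, hd, by omega, by omega⟩, trivial⟩
      calc d * (e - y) + d * y = d * (e - y + y) := by ring
        _ = N := by rw [h2]; exact he
    · rintro ⟨a,b,x,y⟩ hp
      simp only [mem_filter, mem_U] at hp
      obtain ⟨⟨he, ha, hb, hx, hy⟩, hab⟩ := hp
      simp only at hab ⊢
      have h2 : x + y - y = x := by omega
      rw [h2, ← hab]
    · rintro ⟨⟨d,e⟩,y⟩ hv
      simp only [Finset.mem_sigma, Nat.mem_divisorsAntidiagonal, mem_Icc] at hv
      simp only
      have h2 : e - y + y = e := by omega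
      rw [h2]
    · rintro ⟨a,b,x,y⟩ _; rfl
  rw [step1, Finset.sum_sigma]
  have step2 : ∀ q ∈ N.divisorsAntidiagonal,
      (∑ y ∈ Icc 1 (q.2 - 1), ((q.1:ℚ))^(k+1)) = (q.1:ℚ)^k * (N:ℚ) - (q.1:ℚ)^(k+1) := by
    rintro ⟨d,e⟩ hq
    simp only [Nat.mem_divisorsAntidiagonal] at hq
    obtain ⟨he, hN⟩ := hq
    simp only [Finset.sum_const, Nat.card_Icc, nsmul_eq_mul]
    have h1 : e ≠ 0 := by rintro rfl; rw [Nat.mul_zero] at he; omega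
    have hc1 : (e - 1 + 1 - 1 : ℕ) = e - 1 := by omega
    rw [hc1, Nat.cast_sub (by omega : 1 ≤ e), Nat.cast_one]
    have hcast : (d:ℚ) * (e:ℚ) = (N:ℚ) := by exact_mod_cast congrArg (Nat.cast (R := ℚ)) he
    calc ((e:ℚ) - 1) * (d:ℚ)^(k+1) = (d:ℚ)^k * ((d:ℚ)*(e:ℚ)) - (d:ℚ)^(k+1) := by ring
      _ = (d:ℚ)^k * (N:ℚ) - (d:ℚ)^(k+1) := by rw [hcast]
  rw [Finset.sum_congr rfl step2, Finset.sum_sub_distrib]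
  rw [← Finset.sum_mul, antidiag_pow, antidiag_pow]
  ring

/-- sum over the diagonal x = y, as a double sum over divisors -/
lemma xdiag_bij (f : ℕ → ℕ → ℚ) :
    ∑ p ∈ (U N).filter (fun p => p.2.2.1 = p.2.2.2), f p.1 p.2.1
      = ∑ q ∈ N.divisorsAntidiagonal, ∑ a ∈ Icc 1 (q.1 - 1), f a (q.1 - a) := by
  rw [Finset.sum_sigma']
  refine Finset.sum_nbij' (fun p => ⟨(p.1 + p.2.1, p.2.2.1), p.1⟩)
    (fun v => (v.2, v.1.1 - v.2, v.1.2, v.1.2)) ?_ ?_ ?_ ?_ ?_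
  · rintro ⟨a,b,x,y⟩ hp
    simp only [mem_filter, mem_U] at hp
    obtain ⟨⟨he, ha, hb, hx, hy⟩, hxy⟩ := hp
    subst hxy
    simp only [Finset.mem_sigma, Nat.mem_divisorsAntidiagonal, mem_Icc]
    have hax : a * x ≠ 0 := Nat.mul_ne_zero ha hx
    refine ⟨⟨by rw [← he]; ring, by omega⟩, by omega, by omega⟩
  · rintro ⟨⟨e,x⟩,a⟩ hv
    simp only [Finset.mem_sigma, Nat.mem_divisorsAntidiagonal, mem_Icc] at hv
    obtain ⟨⟨he, hN⟩, ha1, ha2⟩ := hv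
    simp only [mem_filter, mem_U]
    have hx : x ≠ 0 := by rintro rfl; rw [Nat.mul_zero] at he; omega
    have h2 : a + (e - a) = e := by omega
    refine ⟨⟨?_, by omega, by omega, hx, hx⟩, trivial⟩
    calc a * x + (e - a) * x = (a + (e - a)) * x := by ring
      _ = N := by rw [h2]; exact he
  · rintro ⟨a,b,x,y⟩ hp
    simp only [mem_filter, mem_U] at hp
    obtain ⟨⟨he, ha, hb, hx, hy⟩, hxy⟩ := hp
    simp only at hxy ⊢
    have h2 : a + b - a = b := by omega
    rw [h2, ← hxy]
  · rintro ⟨⟨e,x⟩,a⟩ hv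
    simp only [Finset.mem_sigma, Nat.mem_divisorsAntidiagonal, mem_Icc] at hv
    simp only
    have h2 : a + (e - a) = e := by omega
    rw [h2]
  · rintro ⟨a,b,x,y⟩ hp
    simp only [mem_filter, mem_U] at hp
    obtain ⟨⟨he, ha, hb, hx, hy⟩, hxy⟩ := hp
    simp only
    have h2 : a + b - a = b := by omega
    rw [h2]

end sums

/-- bridge: convolution of divisor sums = sum over U -/
lemma bridge (u v m : ℕ) :
    ∑ i ∈ range m, ((sigma' u (i+1) : ℕ) : ℚ) * ((sigma' v (m - i) : ℕ) : ℚ)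
      = ∑ p ∈ U (m+1), ((p.1:ℚ))^u * ((p.2.1:ℚ))^v := by
  have h1 : ∀ i ∈ range m, ((sigma' u (i+1) : ℕ) : ℚ) * ((sigma' v (m - i) : ℕ) : ℚ)
      = ∑ q ∈ ((i+1).divisorsAntidiagonal ×ˢ (m - i).divisorsAntidiagonal),
          ((q.1.1:ℚ))^u * ((q.2.1:ℚ))^v := by
    intro i _
    rw [Finset.sum_product]
    rw [← antidiag_pow (N := i+1) u, ← antidiag_pow (N := m - i) v]
    rw [Finset.sum_mul]
    exact Finset.sum_congr rfl (fun q _ => by rw [Finset.mul_sum])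
  rw [Finset.sum_congr rfl h1, Finset.sum_sigma']
  refine Finset.sum_nbij' (fun w => (w.2.1.1, w.2.2.1, w.2.1.2, w.2.2.2))
    (fun p => ⟨p.1 * p.2.2.1 - 1, (p.1, p.2.2.1), (p.2.1, p.2.2.2)⟩) ?_ ?_ ?_ ?_ ?_
  · rintro ⟨i, ⟨a,x⟩, ⟨b,y⟩⟩ hw
    simp only [Finset.mem_sigma, Finset.mem_product, Nat.mem_divisorsAntidiagonal, mem_range] at hw
    obtain ⟨hi, ⟨hax, _⟩, ⟨hby, hmi⟩⟩ := hw
    simp only [mem_U]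
    refine ⟨by omega, ?_, ?_, ?_, ?_⟩
    · rintro rfl; rw [Nat.zero_mul] at hax; omega
    · rintro rfl; rw [Nat.zero_mul] at hby; omega
    · rintro rfl; rw [Nat.mul_zero] at hax; omega
    · rintro rfl; rw [Nat.mul_zero] at hby; omega
  · rintro ⟨a,b,x,y⟩ hp
    simp only [mem_U] at hp
    obtain ⟨he, ha, hb, hx, hy⟩ := hp
    simp only [Finset.mem_sigma, Finset.mem_product, Nat.mem_divisorsAntidiagonal, mem_range]
    have hax : a * x ≠ 0 := Nat.mul_ne_zero ha hx
    have hby : b * y ≠ 0 := Nat.mul_ne_zero hb hy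
    refine ⟨by omega, ⟨by omega, by omega⟩, ⟨by omega, by omega⟩⟩
  · rintro ⟨i, ⟨a,x⟩, ⟨b,y⟩⟩ hw
    simp only [Finset.mem_sigma, Finset.mem_product, Nat.mem_divisorsAntidiagonal, mem_range] at hw
    obtain ⟨hi, ⟨hax, _⟩, ⟨hby, hmi⟩⟩ := hw
    simp only
    have h2 : a * x - 1 = i := by omega
    have h3 : m - (a * x - 1) = b * y := by omega
    rw [h2]
  · rintro ⟨a,b,x,y⟩ hp; rfl
  · rintro ⟨i, ⟨a,x⟩, ⟨b,y⟩⟩ _; rfl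

section part2
variable {N : ℕ}

/-- pivot for the x<y half: (a,b,x,y) ↦ (b,a+b,y-x,x) lands in {a<b} -/
lemma pivot' (f : ℕ × ℕ × ℕ × ℕ → ℚ) :
    ∑ p ∈ (U N).filter (fun p => p.2.2.1 < p.2.2.2), f p
      = ∑ p ∈ (U N).filter (fun p => p.1 < p.2.1),
          f (p.2.1 - p.1, p.1, p.2.2.2, p.2.2.1 + p.2.2.2) := by
  refine Finset.sum_nbij' (fun p => (p.2.1, p.1 + p.2.1, p.2.2.2 - p.2.2.1, p.2.2.1))
    (fun p => (p.2.1 - p.1, p.1, p.2.2.2, p.2.2.1 + p.2.2.2)) ?_ ?_ ?_ ?_ ?_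
  · rintro ⟨a,b,x,y⟩ hp
    simp only [mem_filter, mem_U] at hp ⊢
    obtain ⟨⟨he, ha, hb, hx, hy⟩, hP⟩ := hp
    refine ⟨⟨?_, by omega, by omega, by omega, by omega⟩, by omega⟩
    have h2 : y - x + x = y := by omega
    calc b * (y - x) + (a + b) * x = b * (y - x + x) + a * x := by ring
      _ = N := by rw [h2]; omega
  · rintro ⟨a,b,x,y⟩ hp
    simp only [mem_filter, mem_U] at hp ⊢
    obtain ⟨⟨he, ha, hb, hx, hy⟩, hP⟩ := hp
    refine ⟨⟨?_, by omega, by omega, by omega, by omega⟩, by omega⟩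
    have h2 : b - a + a = b := by omega
    calc (b - a) * y + a * (x + y) = (b - a + a) * y + a * x := by ring
      _ = N := by rw [h2]; omega
  · rintro ⟨a,b,x,y⟩ hp
    simp only [mem_filter, mem_U] at hp
    obtain ⟨⟨he, h⟩, hP⟩ := hp
    have h1 : a + b - b = a := by omega
    have h2 : y - x + x = y := by omega
    dsimp only
    rw [h1, h2]
  · rintro ⟨a,b,x,y⟩ hp
    simp only [mem_filter, mem_U] at hp
    obtain ⟨⟨he, h⟩, hP⟩ := hp
    have h1 : b - a + a = b := by omega
    have h2 : x + y - y = x := by omega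
    dsimp only
    rw [h1, h2]
  · rintro ⟨a,b,x,y⟩ hp
    simp only [mem_filter, mem_U] at hp
    obtain ⟨⟨he, h⟩, hP⟩ := hp
    have h1 : a + b - b = a := by omega
    have h2 : y - x + x = y := by omega
    dsimp only
    rw [h1, h2]

end part2

noncomputable def Asum (N i j : ℕ) : ℚ :=
  ∑ p ∈ (U N).filter (fun p => p.1 < p.2.1), ((p.1:ℚ))^i * ((p.2.1:ℚ))^j

noncomputable def Ssum (N i j : ℕ) : ℚ := ∑ p ∈ U N, ((p.1:ℚ))^i * ((p.2.1:ℚ))^j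

noncomputable def Fdiag (i j N : ℕ) : ℚ :=
  ∑ q ∈ N.divisorsAntidiagonal, ∑ a ∈ Icc 1 (q.1 - 1), ((a:ℚ))^i * (((q.1 - a : ℕ)):ℚ)^j

lemma eqA (i j N : ℕ) (hij : 1 ≤ i + j) :
    Ssum N i j = Asum N i j + Asum N j i
      + ((N:ℚ) * (sigma' (i+j-1) N : ℚ) - (sigma' (i+j) N : ℚ)) := by
  unfold Ssum Asum
  rw [split_ab (fun p => ((p.1:ℚ))^i * ((p.2.1:ℚ))^j)]
  have h2 : ∑ p ∈ (U N).filter (fun p => p.2.1 < p.1), ((p.1:ℚ))^i * ((p.2.1:ℚ))^j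
      = ∑ p ∈ (U N).filter (fun p => p.1 < p.2.1), ((p.1:ℚ))^j * ((p.2.1:ℚ))^i := by
    rw [sum_swap' (fun p => p.2.1 < p.1) (fun p => ((p.1:ℚ))^i * ((p.2.1:ℚ))^j)]
    exact Finset.sum_congr rfl (fun p _ => by dsimp only; ring)
  have h3 : ∑ p ∈ (U N).filter (fun p => p.1 = p.2.1), ((p.1:ℚ))^i * ((p.2.1:ℚ))^j
      = (N:ℚ) * (sigma' (i+j-1) N : ℚ) - (sigma' (i+j) N : ℚ) := by
    have hc : ∀ p ∈ (U N).filter (fun p => p.1 = p.2.1),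
        ((p.1:ℚ))^i * ((p.2.1:ℚ))^j = ((p.1:ℚ))^(i+j-1+1) := by
      rintro ⟨a,b,x,y⟩ hp
      simp only [mem_filter] at hp
      obtain ⟨-, hab⟩ := hp
      dsimp only at hab ⊢
      subst hab
      rw [show i+j-1+1 = i+j from by omega, ← pow_add]
    rw [Finset.sum_congr rfl hc, adiag (i+j-1)]
    rw [show i+j-1+1 = i+j from by omega]
  rw [h2, h3]

lemma eqX (i j N : ℕ) :
    Ssum N i j =
      (∑ p ∈ (U N).filter (fun p => p.1 < p.2.1), ((p.1:ℚ))^i * ((p.2.1:ℚ) - (p.1:ℚ))^j)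
      + (∑ p ∈ (U N).filter (fun p => p.1 < p.2.1), ((p.1:ℚ))^j * ((p.2.1:ℚ) - (p.1:ℚ))^i)
      + Fdiag i j N := by
  unfold Ssum Fdiag
  rw [split_xy (fun p => ((p.1:ℚ))^i * ((p.2.1:ℚ))^j)]
  have h1 : ∑ p ∈ (U N).filter (fun p => p.2.2.2 < p.2.2.1), ((p.1:ℚ))^i * ((p.2.1:ℚ))^j
      = ∑ p ∈ (U N).filter (fun p => p.1 < p.2.1), ((p.1:ℚ))^i * ((p.2.1:ℚ) - (p.1:ℚ))^j := by
    rw [pivot (fun p => ((p.1:ℚ))^i * ((p.2.1:ℚ))^j)]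
    refine Finset.sum_congr rfl fun p hp => ?_
    simp only [mem_filter] at hp
    dsimp only
    rw [Nat.cast_sub (le_of_lt hp.2)]
  have h2 : ∑ p ∈ (U N).filter (fun p => p.2.2.1 < p.2.2.2), ((p.1:ℚ))^i * ((p.2.1:ℚ))^j
      = ∑ p ∈ (U N).filter (fun p => p.1 < p.2.1), ((p.1:ℚ))^j * ((p.2.1:ℚ) - (p.1:ℚ))^i := by
    rw [pivot' (fun p => ((p.1:ℚ))^i * ((p.2.1:ℚ))^j)]
    refine Finset.sum_congr rfl fun p hp => ?_
    simp only [mem_filter] at hp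
    dsimp only
    rw [Nat.cast_sub (le_of_lt hp.2)]
    ring
  have h3 : ∑ p ∈ (U N).filter (fun p => p.2.2.1 = p.2.2.2), ((p.1:ℚ))^i * ((p.2.1:ℚ))^j
      = ∑ q ∈ N.divisorsAntidiagonal, ∑ a ∈ Icc 1 (q.1 - 1), ((a:ℚ))^i * (((q.1 - a : ℕ)):ℚ)^j :=
    xdiag_bij (fun a b => ((a:ℚ))^i * ((b:ℚ))^j)
  rw [h1, h2, h3]

lemma Qpow_0 (m : ℕ) : ∑ a ∈ Icc 1 m, ((a:ℚ))^0 = (1 : ℚ) * (m:ℚ)^1 := by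
  induction m with
  | zero => rw [Finset.Icc_eq_empty (by norm_num)]; norm_num
  | succ n ih => rw [Finset.sum_Icc_succ_top (by omega : 1 ≤ n + 1), ih]; push_cast; ring

lemma Qpow_1 (m : ℕ) : ∑ a ∈ Icc 1 m, ((a:ℚ))^1 = (1/2 : ℚ) * (m:ℚ)^1 + (1/2 : ℚ) * (m:ℚ)^2 := by
  induction m with
  | zero => rw [Finset.Icc_eq_empty (by norm_num)]; norm_num
  | succ n ih => rw [Finset.sum_Icc_succ_top (by omega : 1 ≤ n + 1), ih]; push_cast; ring

lemma Qpow_2 (m : ℕ) : ∑ a ∈ Icc 1 m, ((a:ℚ))^2 = (1/6 : ℚ) * (m:ℚ)^1 + (1/2 : ℚ) * (m:ℚ)^2 + (1/3 : ℚ) * (m:ℚ)^3 := by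
  induction m with
  | zero => rw [Finset.Icc_eq_empty (by norm_num)]; norm_num
  | succ n ih => rw [Finset.sum_Icc_succ_top (by omega : 1 ≤ n + 1), ih]; push_cast; ring

lemma Qpow_3 (m : ℕ) : ∑ a ∈ Icc 1 m, ((a:ℚ))^3 = (1/4 : ℚ) * (m:ℚ)^2 + (1/2 : ℚ) * (m:ℚ)^3 + (1/4 : ℚ) * (m:ℚ)^4 := by
  induction m with
  | zero => rw [Finset.Icc_eq_empty (by norm_num)]; norm_num
  | succ n ih => rw [Finset.sum_Icc_succ_top (by omega : 1 ≤ n + 1), ih]; push_cast; ring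

lemma Qpow_4 (m : ℕ) : ∑ a ∈ Icc 1 m, ((a:ℚ))^4 = (-1/30 : ℚ) * (m:ℚ)^1 + (1/3 : ℚ) * (m:ℚ)^3 + (1/2 : ℚ) * (m:ℚ)^4 + (1/5 : ℚ) * (m:ℚ)^5 := by
  induction m with
  | zero => rw [Finset.Icc_eq_empty (by norm_num)]; norm_num
  | succ n ih => rw [Finset.sum_Icc_succ_top (by omega : 1 ≤ n + 1), ih]; push_cast; ring

lemma Qpow_5 (m : ℕ) : ∑ a ∈ Icc 1 m, ((a:ℚ))^5 = (-1/12 : ℚ) * (m:ℚ)^2 + (5/12 : ℚ) * (m:ℚ)^4 + (1/2 : ℚ) * (m:ℚ)^5 + (1/6 : ℚ) * (m:ℚ)^6 := by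
  induction m with
  | zero => rw [Finset.Icc_eq_empty (by norm_num)]; norm_num
  | succ n ih => rw [Finset.sum_Icc_succ_top (by omega : 1 ≤ n + 1), ih]; push_cast; ring

lemma Qpow_6 (m : ℕ) : ∑ a ∈ Icc 1 m, ((a:ℚ))^6 = (1/42 : ℚ) * (m:ℚ)^1 + (-1/6 : ℚ) * (m:ℚ)^3 + (1/2 : ℚ) * (m:ℚ)^5 + (1/2 : ℚ) * (m:ℚ)^6 + (1/7 : ℚ) * (m:ℚ)^7 := by
  induction m with
  | zero => rw [Finset.Icc_eq_empty (by norm_num)]; norm_num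
  | succ n ih => rw [Finset.sum_Icc_succ_top (by omega : 1 ≤ n + 1), ih]; push_cast; ring

lemma G_0_2 (e : ℕ) (he : 1 ≤ e) :
    ∑ a ∈ Icc 1 (e-1), ((a:ℚ))^0 * ((e:ℚ) - (a:ℚ))^2 = (1/6 : ℚ) * (e:ℚ)^1 + (-1/2 : ℚ) * (e:ℚ)^2 + (1/3 : ℚ) * (e:ℚ)^3 := by
  obtain ⟨m, rfl⟩ : ∃ m, e = m + 1 := ⟨e - 1, by omega⟩
  rw [show m + 1 - 1 = m from rfl]
  have h1 : ∑ a ∈ Icc 1 m, ((a:ℚ))^0 * (((m+1:ℕ):ℚ) - (a:ℚ))^2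
      = ∑ a ∈ Icc 1 m, (((1 : ℚ) * ((m:ℚ) + 1)^2) * ((a:ℚ))^0 + ((-2 : ℚ) * ((m:ℚ) + 1)^1) * ((a:ℚ))^1 + ((1 : ℚ) * ((m:ℚ) + 1)^0) * ((a:ℚ))^2) :=
    Finset.sum_congr rfl fun a _ => by push_cast; ring
  rw [h1]
  simp only [Finset.sum_add_distrib, ← Finset.mul_sum, Qpow_0, Qpow_1, Qpow_2]
  push_cast
  ring

lemma G_1_1 (e : ℕ) (he : 1 ≤ e) :
    ∑ a ∈ Icc 1 (e-1), ((a:ℚ))^1 * ((e:ℚ) - (a:ℚ))^1 = (-1/6 : ℚ) * (e:ℚ)^1 + (1/6 : ℚ) * (e:ℚ)^3 := by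
  obtain ⟨m, rfl⟩ : ∃ m, e = m + 1 := ⟨e - 1, by omega⟩
  rw [show m + 1 - 1 = m from rfl]
  have h1 : ∑ a ∈ Icc 1 m, ((a:ℚ))^1 * (((m+1:ℕ):ℚ) - (a:ℚ))^1
      = ∑ a ∈ Icc 1 m, (((1 : ℚ) * ((m:ℚ) + 1)^1) * ((a:ℚ))^1 + ((-1 : ℚ) * ((m:ℚ) + 1)^0) * ((a:ℚ))^2) :=
    Finset.sum_congr rfl fun a _ => by push_cast; ring
  rw [h1]
  simp only [Finset.sum_add_distrib, ← Finset.mul_sum, Qpow_1, Qpow_2]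
  push_cast
  ring

lemma G_0_4 (e : ℕ) (he : 1 ≤ e) :
    ∑ a ∈ Icc 1 (e-1), ((a:ℚ))^0 * ((e:ℚ) - (a:ℚ))^4 = (-1/30 : ℚ) * (e:ℚ)^1 + (1/3 : ℚ) * (e:ℚ)^3 + (-1/2 : ℚ) * (e:ℚ)^4 + (1/5 : ℚ) * (e:ℚ)^5 := by
  obtain ⟨m, rfl⟩ : ∃ m, e = m + 1 := ⟨e - 1, by omega⟩
  rw [show m + 1 - 1 = m from rfl]
  have h1 : ∑ a ∈ Icc 1 m, ((a:ℚ))^0 * (((m+1:ℕ):ℚ) - (a:ℚ))^4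
      = ∑ a ∈ Icc 1 m, (((1 : ℚ) * ((m:ℚ) + 1)^4) * ((a:ℚ))^0 + ((-4 : ℚ) * ((m:ℚ) + 1)^3) * ((a:ℚ))^1 + ((6 : ℚ) * ((m:ℚ) + 1)^2) * ((a:ℚ))^2 + ((-4 : ℚ) * ((m:ℚ) + 1)^1) * ((a:ℚ))^3 + ((1 : ℚ) * ((m:ℚ) + 1)^0) * ((a:ℚ))^4) :=
    Finset.sum_congr rfl fun a _ => by push_cast; ring
  rw [h1]
  simp only [Finset.sum_add_distrib, ← Finset.mul_sum, Qpow_0, Qpow_1, Qpow_2, Qpow_3, Qpow_4]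
  push_cast
  ring

lemma G_1_3 (e : ℕ) (he : 1 ≤ e) :
    ∑ a ∈ Icc 1 (e-1), ((a:ℚ))^1 * ((e:ℚ) - (a:ℚ))^3 = (1/30 : ℚ) * (e:ℚ)^1 + (-1/12 : ℚ) * (e:ℚ)^3 + (1/20 : ℚ) * (e:ℚ)^5 := by
  obtain ⟨m, rfl⟩ : ∃ m, e = m + 1 := ⟨e - 1, by omega⟩
  rw [show m + 1 - 1 = m from rfl]
  have h1 : ∑ a ∈ Icc 1 m, ((a:ℚ))^1 * (((m+1:ℕ):ℚ) - (a:ℚ))^3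
      = ∑ a ∈ Icc 1 m, (((1 : ℚ) * ((m:ℚ) + 1)^3) * ((a:ℚ))^1 + ((-3 : ℚ) * ((m:ℚ) + 1)^2) * ((a:ℚ))^2 + ((3 : ℚ) * ((m:ℚ) + 1)^1) * ((a:ℚ))^3 + ((-1 : ℚ) * ((m:ℚ) + 1)^0) * ((a:ℚ))^4) :=
    Finset.sum_congr rfl fun a _ => by push_cast; ring
  rw [h1]
  simp only [Finset.sum_add_distrib, ← Finset.mul_sum, Qpow_1, Qpow_2, Qpow_3, Qpow_4]
  push_cast
  ring

lemma G_2_2 (e : ℕ) (he : 1 ≤ e) :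
    ∑ a ∈ Icc 1 (e-1), ((a:ℚ))^2 * ((e:ℚ) - (a:ℚ))^2 = (-1/30 : ℚ) * (e:ℚ)^1 + (1/30 : ℚ) * (e:ℚ)^5 := by
  obtain ⟨m, rfl⟩ : ∃ m, e = m + 1 := ⟨e - 1, by omega⟩
  rw [show m + 1 - 1 = m from rfl]
  have h1 : ∑ a ∈ Icc 1 m, ((a:ℚ))^2 * (((m+1:ℕ):ℚ) - (a:ℚ))^2
      = ∑ a ∈ Icc 1 m, (((1 : ℚ) * ((m:ℚ) + 1)^2) * ((a:ℚ))^2 + ((-2 : ℚ) * ((m:ℚ) + 1)^1) * ((a:ℚ))^3 + ((1 : ℚ) * ((m:ℚ) + 1)^0) * ((a:ℚ))^4) :=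
    Finset.sum_congr rfl fun a _ => by push_cast; ring
  rw [h1]
  simp only [Finset.sum_add_distrib, ← Finset.mul_sum, Qpow_2, Qpow_3, Qpow_4]
  push_cast
  ring

lemma G_0_6 (e : ℕ) (he : 1 ≤ e) :
    ∑ a ∈ Icc 1 (e-1), ((a:ℚ))^0 * ((e:ℚ) - (a:ℚ))^6 = (1/42 : ℚ) * (e:ℚ)^1 + (-1/6 : ℚ) * (e:ℚ)^3 + (1/2 : ℚ) * (e:ℚ)^5 + (-1/2 : ℚ) * (e:ℚ)^6 + (1/7 : ℚ) * (e:ℚ)^7 := by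
  obtain ⟨m, rfl⟩ : ∃ m, e = m + 1 := ⟨e - 1, by omega⟩
  rw [show m + 1 - 1 = m from rfl]
  have h1 : ∑ a ∈ Icc 1 m, ((a:ℚ))^0 * (((m+1:ℕ):ℚ) - (a:ℚ))^6
      = ∑ a ∈ Icc 1 m, (((1 : ℚ) * ((m:ℚ) + 1)^6) * ((a:ℚ))^0 + ((-6 : ℚ) * ((m:ℚ) + 1)^5) * ((a:ℚ))^1 + ((15 : ℚ) * ((m:ℚ) + 1)^4) * ((a:ℚ))^2 + ((-20 : ℚ) * ((m:ℚ) + 1)^3) * ((a:ℚ))^3 + ((15 : ℚ) * ((m:ℚ) + 1)^2) * ((a:ℚ))^4 + ((-6 : ℚ) * ((m:ℚ) + 1)^1) * ((a:ℚ))^5 + ((1 : ℚ) * ((m:ℚ) + 1)^0) * ((a:ℚ))^6) :=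
    Finset.sum_congr rfl fun a _ => by push_cast; ring
  rw [h1]
  simp only [Finset.sum_add_distrib, ← Finset.mul_sum, Qpow_0, Qpow_1, Qpow_2, Qpow_3, Qpow_4, Qpow_5, Qpow_6]
  push_cast
  ring

lemma G_1_5 (e : ℕ) (he : 1 ≤ e) :
    ∑ a ∈ Icc 1 (e-1), ((a:ℚ))^1 * ((e:ℚ) - (a:ℚ))^5 = (-1/42 : ℚ) * (e:ℚ)^1 + (1/12 : ℚ) * (e:ℚ)^3 + (-1/12 : ℚ) * (e:ℚ)^5 + (1/42 : ℚ) * (e:ℚ)^7 := by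
  obtain ⟨m, rfl⟩ : ∃ m, e = m + 1 := ⟨e - 1, by omega⟩
  rw [show m + 1 - 1 = m from rfl]
  have h1 : ∑ a ∈ Icc 1 m, ((a:ℚ))^1 * (((m+1:ℕ):ℚ) - (a:ℚ))^5
      = ∑ a ∈ Icc 1 m, (((1 : ℚ) * ((m:ℚ) + 1)^5) * ((a:ℚ))^1 + ((-5 : ℚ) * ((m:ℚ) + 1)^4) * ((a:ℚ))^2 + ((10 : ℚ) * ((m:ℚ) + 1)^3) * ((a:ℚ))^3 + ((-10 : ℚ) * ((m:ℚ) + 1)^2) * ((a:ℚ))^4 + ((5 : ℚ) * ((m:ℚ) + 1)^1) * ((a:ℚ))^5 + ((-1 : ℚ) * ((m:ℚ) + 1)^0) * ((a:ℚ))^6) :=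
    Finset.sum_congr rfl fun a _ => by push_cast; ring
  rw [h1]
  simp only [Finset.sum_add_distrib, ← Finset.mul_sum, Qpow_1, Qpow_2, Qpow_3, Qpow_4, Qpow_5, Qpow_6]
  push_cast
  ring

lemma G_2_4 (e : ℕ) (he : 1 ≤ e) :
    ∑ a ∈ Icc 1 (e-1), ((a:ℚ))^2 * ((e:ℚ) - (a:ℚ))^4 = (1/42 : ℚ) * (e:ℚ)^1 + (-1/30 : ℚ) * (e:ℚ)^3 + (1/105 : ℚ) * (e:ℚ)^7 := by
  obtain ⟨m, rfl⟩ : ∃ m, e = m + 1 := ⟨e - 1, by omega⟩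
  rw [show m + 1 - 1 = m from rfl]
  have h1 : ∑ a ∈ Icc 1 m, ((a:ℚ))^2 * (((m+1:ℕ):ℚ) - (a:ℚ))^4
      = ∑ a ∈ Icc 1 m, (((1 : ℚ) * ((m:ℚ) + 1)^4) * ((a:ℚ))^2 + ((-4 : ℚ) * ((m:ℚ) + 1)^3) * ((a:ℚ))^3 + ((6 : ℚ) * ((m:ℚ) + 1)^2) * ((a:ℚ))^4 + ((-4 : ℚ) * ((m:ℚ) + 1)^1) * ((a:ℚ))^5 + ((1 : ℚ) * ((m:ℚ) + 1)^0) * ((a:ℚ))^6) :=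
    Finset.sum_congr rfl fun a _ => by push_cast; ring
  rw [h1]
  simp only [Finset.sum_add_distrib, ← Finset.mul_sum, Qpow_2, Qpow_3, Qpow_4, Qpow_5, Qpow_6]
  push_cast
  ring

lemma G_3_3 (e : ℕ) (he : 1 ≤ e) :
    ∑ a ∈ Icc 1 (e-1), ((a:ℚ))^3 * ((e:ℚ) - (a:ℚ))^3 = (-1/42 : ℚ) * (e:ℚ)^1 + (1/60 : ℚ) * (e:ℚ)^3 + (1/140 : ℚ) * (e:ℚ)^7 := by
  obtain ⟨m, rfl⟩ : ∃ m, e = m + 1 := ⟨e - 1, by omega⟩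
  rw [show m + 1 - 1 = m from rfl]
  have h1 : ∑ a ∈ Icc 1 m, ((a:ℚ))^3 * (((m+1:ℕ):ℚ) - (a:ℚ))^3
      = ∑ a ∈ Icc 1 m, (((1 : ℚ) * ((m:ℚ) + 1)^3) * ((a:ℚ))^3 + ((-3 : ℚ) * ((m:ℚ) + 1)^2) * ((a:ℚ))^4 + ((3 : ℚ) * ((m:ℚ) + 1)^1) * ((a:ℚ))^5 + ((-1 : ℚ) * ((m:ℚ) + 1)^0) * ((a:ℚ))^6) :=
    Finset.sum_congr rfl fun a _ => by push_cast; ring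
  rw [h1]
  simp only [Finset.sum_add_distrib, ← Finset.mul_sum, Qpow_3, Qpow_4, Qpow_5, Qpow_6]
  push_cast
  ring

lemma Fdiag_eval_0_2 (N : ℕ) :
    Fdiag 0 2 N = (1/6 : ℚ) * ((sigma' 1 N : ℕ) : ℚ) + (-1/2 : ℚ) * ((sigma' 2 N : ℕ) : ℚ) + (1/3 : ℚ) * ((sigma' 3 N : ℕ) : ℚ) := by
  unfold Fdiag
  have h1 : ∀ q ∈ N.divisorsAntidiagonal,
      (∑ a ∈ Icc 1 (q.1 - 1), ((a:ℚ))^0 * (((q.1 - a : ℕ)):ℚ)^2) = (1/6 : ℚ) * ((q.1:ℚ))^1 + (-1/2 : ℚ) * ((q.1:ℚ))^2 + (1/3 : ℚ) * ((q.1:ℚ))^3 := by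
    rintro ⟨e, x⟩ hq
    simp only [Nat.mem_divisorsAntidiagonal] at hq
    have he : 1 ≤ e := by
      rcases Nat.eq_zero_or_pos e with h | h
      · exfalso; subst h; rw [Nat.zero_mul] at hq; omega
      · exact h
    have h2 : ∀ a ∈ Icc 1 (e - 1), ((a:ℚ))^0 * (((e - a : ℕ)):ℚ)^2 = ((a:ℚ))^0 * ((e:ℚ) - (a:ℚ))^2 := by
      intro a ha
      simp only [mem_Icc] at ha
      rw [Nat.cast_sub (by omega)]
    rw [Finset.sum_congr rfl h2, G_0_2 e he]
  rw [Finset.sum_congr rfl h1]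
  simp only [Finset.sum_add_distrib, ← Finset.mul_sum, antidiag_pow]
  all_goals ring

lemma Fdiag_eval_1_1 (N : ℕ) :
    Fdiag 1 1 N = (-1/6 : ℚ) * ((sigma' 1 N : ℕ) : ℚ) + (1/6 : ℚ) * ((sigma' 3 N : ℕ) : ℚ) := by
  unfold Fdiag
  have h1 : ∀ q ∈ N.divisorsAntidiagonal,
      (∑ a ∈ Icc 1 (q.1 - 1), ((a:ℚ))^1 * (((q.1 - a : ℕ)):ℚ)^1) = (-1/6 : ℚ) * ((q.1:ℚ))^1 + (1/6 : ℚ) * ((q.1:ℚ))^3 := by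
    rintro ⟨e, x⟩ hq
    simp only [Nat.mem_divisorsAntidiagonal] at hq
    have he : 1 ≤ e := by
      rcases Nat.eq_zero_or_pos e with h | h
      · exfalso; subst h; rw [Nat.zero_mul] at hq; omega
      · exact h
    have h2 : ∀ a ∈ Icc 1 (e - 1), ((a:ℚ))^1 * (((e - a : ℕ)):ℚ)^1 = ((a:ℚ))^1 * ((e:ℚ) - (a:ℚ))^1 := by
      intro a ha
      simp only [mem_Icc] at ha
      rw [Nat.cast_sub (by omega)]
    rw [Finset.sum_congr rfl h2, G_1_1 e he]
  rw [Finset.sum_congr rfl h1]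
  simp only [Finset.sum_add_distrib, ← Finset.mul_sum, antidiag_pow]
  all_goals ring

lemma Fdiag_eval_0_4 (N : ℕ) :
    Fdiag 0 4 N = (-1/30 : ℚ) * ((sigma' 1 N : ℕ) : ℚ) + (1/3 : ℚ) * ((sigma' 3 N : ℕ) : ℚ) + (-1/2 : ℚ) * ((sigma' 4 N : ℕ) : ℚ) + (1/5 : ℚ) * ((sigma' 5 N : ℕ) : ℚ) := by
  unfold Fdiag
  have h1 : ∀ q ∈ N.divisorsAntidiagonal,
      (∑ a ∈ Icc 1 (q.1 - 1), ((a:ℚ))^0 * (((q.1 - a : ℕ)):ℚ)^4) = (-1/30 : ℚ) * ((q.1:ℚ))^1 + (1/3 : ℚ) * ((q.1:ℚ))^3 + (-1/2 : ℚ) * ((q.1:ℚ))^4 + (1/5 : ℚ) * ((q.1:ℚ))^5 := by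
    rintro ⟨e, x⟩ hq
    simp only [Nat.mem_divisorsAntidiagonal] at hq
    have he : 1 ≤ e := by
      rcases Nat.eq_zero_or_pos e with h | h
      · exfalso; subst h; rw [Nat.zero_mul] at hq; omega
      · exact h
    have h2 : ∀ a ∈ Icc 1 (e - 1), ((a:ℚ))^0 * (((e - a : ℕ)):ℚ)^4 = ((a:ℚ))^0 * ((e:ℚ) - (a:ℚ))^4 := by
      intro a ha
      simp only [mem_Icc] at ha
      rw [Nat.cast_sub (by omega)]
    rw [Finset.sum_congr rfl h2, G_0_4 e he]
  rw [Finset.sum_congr rfl h1]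
  simp only [Finset.sum_add_distrib, ← Finset.mul_sum, antidiag_pow]
  all_goals ring

lemma Fdiag_eval_1_3 (N : ℕ) :
    Fdiag 1 3 N = (1/30 : ℚ) * ((sigma' 1 N : ℕ) : ℚ) + (-1/12 : ℚ) * ((sigma' 3 N : ℕ) : ℚ) + (1/20 : ℚ) * ((sigma' 5 N : ℕ) : ℚ) := by
  unfold Fdiag
  have h1 : ∀ q ∈ N.divisorsAntidiagonal,
      (∑ a ∈ Icc 1 (q.1 - 1), ((a:ℚ))^1 * (((q.1 - a : ℕ)):ℚ)^3) = (1/30 : ℚ) * ((q.1:ℚ))^1 + (-1/12 : ℚ) * ((q.1:ℚ))^3 + (1/20 : ℚ) * ((q.1:ℚ))^5 := by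
    rintro ⟨e, x⟩ hq
    simp only [Nat.mem_divisorsAntidiagonal] at hq
    have he : 1 ≤ e := by
      rcases Nat.eq_zero_or_pos e with h | h
      · exfalso; subst h; rw [Nat.zero_mul] at hq; omega
      · exact h
    have h2 : ∀ a ∈ Icc 1 (e - 1), ((a:ℚ))^1 * (((e - a : ℕ)):ℚ)^3 = ((a:ℚ))^1 * ((e:ℚ) - (a:ℚ))^3 := by
      intro a ha
      simp only [mem_Icc] at ha
      rw [Nat.cast_sub (by omega)]
    rw [Finset.sum_congr rfl h2, G_1_3 e he]
  rw [Finset.sum_congr rfl h1]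
  simp only [Finset.sum_add_distrib, ← Finset.mul_sum, antidiag_pow]
  all_goals ring

lemma Fdiag_eval_2_2 (N : ℕ) :
    Fdiag 2 2 N = (-1/30 : ℚ) * ((sigma' 1 N : ℕ) : ℚ) + (1/30 : ℚ) * ((sigma' 5 N : ℕ) : ℚ) := by
  unfold Fdiag
  have h1 : ∀ q ∈ N.divisorsAntidiagonal,
      (∑ a ∈ Icc 1 (q.1 - 1), ((a:ℚ))^2 * (((q.1 - a : ℕ)):ℚ)^2) = (-1/30 : ℚ) * ((q.1:ℚ))^1 + (1/30 : ℚ) * ((q.1:ℚ))^5 := by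
    rintro ⟨e, x⟩ hq
    simp only [Nat.mem_divisorsAntidiagonal] at hq
    have he : 1 ≤ e := by
      rcases Nat.eq_zero_or_pos e with h | h
      · exfalso; subst h; rw [Nat.zero_mul] at hq; omega
      · exact h
    have h2 : ∀ a ∈ Icc 1 (e - 1), ((a:ℚ))^2 * (((e - a : ℕ)):ℚ)^2 = ((a:ℚ))^2 * ((e:ℚ) - (a:ℚ))^2 := by
      intro a ha
      simp only [mem_Icc] at ha
      rw [Nat.cast_sub (by omega)]
    rw [Finset.sum_congr rfl h2, G_2_2 e he]
  rw [Finset.sum_congr rfl h1]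
  simp only [Finset.sum_add_distrib, ← Finset.mul_sum, antidiag_pow]
  all_goals ring

lemma Fdiag_eval_0_6 (N : ℕ) :
    Fdiag 0 6 N = (1/42 : ℚ) * ((sigma' 1 N : ℕ) : ℚ) + (-1/6 : ℚ) * ((sigma' 3 N : ℕ) : ℚ) + (1/2 : ℚ) * ((sigma' 5 N : ℕ) : ℚ) + (-1/2 : ℚ) * ((sigma' 6 N : ℕ) : ℚ) + (1/7 : ℚ) * ((sigma' 7 N : ℕ) : ℚ) := by
  unfold Fdiag
  have h1 : ∀ q ∈ N.divisorsAntidiagonal,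
      (∑ a ∈ Icc 1 (q.1 - 1), ((a:ℚ))^0 * (((q.1 - a : ℕ)):ℚ)^6) = (1/42 : ℚ) * ((q.1:ℚ))^1 + (-1/6 : ℚ) * ((q.1:ℚ))^3 + (1/2 : ℚ) * ((q.1:ℚ))^5 + (-1/2 : ℚ) * ((q.1:ℚ))^6 + (1/7 : ℚ) * ((q.1:ℚ))^7 := by
    rintro ⟨e, x⟩ hq
    simp only [Nat.mem_divisorsAntidiagonal] at hq
    have he : 1 ≤ e := by
      rcases Nat.eq_zero_or_pos e with h | h
      · exfalso; subst h; rw [Nat.zero_mul] at hq; omega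
      · exact h
    have h2 : ∀ a ∈ Icc 1 (e - 1), ((a:ℚ))^0 * (((e - a : ℕ)):ℚ)^6 = ((a:ℚ))^0 * ((e:ℚ) - (a:ℚ))^6 := by
      intro a ha
      simp only [mem_Icc] at ha
      rw [Nat.cast_sub (by omega)]
    rw [Finset.sum_congr rfl h2, G_0_6 e he]
  rw [Finset.sum_congr rfl h1]
  simp only [Finset.sum_add_distrib, ← Finset.mul_sum, antidiag_pow]
  all_goals ring

lemma Fdiag_eval_1_5 (N : ℕ) :
    Fdiag 1 5 N = (-1/42 : ℚ) * ((sigma' 1 N : ℕ) : ℚ) + (1/12 : ℚ) * ((sigma' 3 N : ℕ) : ℚ) + (-1/12 : ℚ) * ((sigma' 5 N : ℕ) : ℚ) + (1/42 : ℚ) * ((sigma' 7 N : ℕ) : ℚ) := by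
  unfold Fdiag
  have h1 : ∀ q ∈ N.divisorsAntidiagonal,
      (∑ a ∈ Icc 1 (q.1 - 1), ((a:ℚ))^1 * (((q.1 - a : ℕ)):ℚ)^5) = (-1/42 : ℚ) * ((q.1:ℚ))^1 + (1/12 : ℚ) * ((q.1:ℚ))^3 + (-1/12 : ℚ) * ((q.1:ℚ))^5 + (1/42 : ℚ) * ((q.1:ℚ))^7 := by
    rintro ⟨e, x⟩ hq
    simp only [Nat.mem_divisorsAntidiagonal] at hq
    have he : 1 ≤ e := by
      rcases Nat.eq_zero_or_pos e with h | h
      · exfalso; subst h; rw [Nat.zero_mul] at hq; omega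
      · exact h
    have h2 : ∀ a ∈ Icc 1 (e - 1), ((a:ℚ))^1 * (((e - a : ℕ)):ℚ)^5 = ((a:ℚ))^1 * ((e:ℚ) - (a:ℚ))^5 := by
      intro a ha
      simp only [mem_Icc] at ha
      rw [Nat.cast_sub (by omega)]
    rw [Finset.sum_congr rfl h2, G_1_5 e he]
  rw [Finset.sum_congr rfl h1]
  simp only [Finset.sum_add_distrib, ← Finset.mul_sum, antidiag_pow]
  all_goals ring

lemma Fdiag_eval_2_4 (N : ℕ) :
    Fdiag 2 4 N = (1/42 : ℚ) * ((sigma' 1 N : ℕ) : ℚ) + (-1/30 : ℚ) * ((sigma' 3 N : ℕ) : ℚ) + (1/105 : ℚ) * ((sigma' 7 N : ℕ) : ℚ) := by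
  unfold Fdiag
  have h1 : ∀ q ∈ N.divisorsAntidiagonal,
      (∑ a ∈ Icc 1 (q.1 - 1), ((a:ℚ))^2 * (((q.1 - a : ℕ)):ℚ)^4) = (1/42 : ℚ) * ((q.1:ℚ))^1 + (-1/30 : ℚ) * ((q.1:ℚ))^3 + (1/105 : ℚ) * ((q.1:ℚ))^7 := by
    rintro ⟨e, x⟩ hq
    simp only [Nat.mem_divisorsAntidiagonal] at hq
    have he : 1 ≤ e := by
      rcases Nat.eq_zero_or_pos e with h | h
      · exfalso; subst h; rw [Nat.zero_mul] at hq; omega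
      · exact h
    have h2 : ∀ a ∈ Icc 1 (e - 1), ((a:ℚ))^2 * (((e - a : ℕ)):ℚ)^4 = ((a:ℚ))^2 * ((e:ℚ) - (a:ℚ))^4 := by
      intro a ha
      simp only [mem_Icc] at ha
      rw [Nat.cast_sub (by omega)]
    rw [Finset.sum_congr rfl h2, G_2_4 e he]
  rw [Finset.sum_congr rfl h1]
  simp only [Finset.sum_add_distrib, ← Finset.mul_sum, antidiag_pow]
  all_goals ring

lemma Fdiag_eval_3_3 (N : ℕ) :
    Fdiag 3 3 N = (-1/42 : ℚ) * ((sigma' 1 N : ℕ) : ℚ) + (1/60 : ℚ) * ((sigma' 3 N : ℕ) : ℚ) + (1/140 : ℚ) * ((sigma' 7 N : ℕ) : ℚ) := by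
  unfold Fdiag
  have h1 : ∀ q ∈ N.divisorsAntidiagonal,
      (∑ a ∈ Icc 1 (q.1 - 1), ((a:ℚ))^3 * (((q.1 - a : ℕ)):ℚ)^3) = (-1/42 : ℚ) * ((q.1:ℚ))^1 + (1/60 : ℚ) * ((q.1:ℚ))^3 + (1/140 : ℚ) * ((q.1:ℚ))^7 := by
    rintro ⟨e, x⟩ hq
    simp only [Nat.mem_divisorsAntidiagonal] at hq
    have he : 1 ≤ e := by
      rcases Nat.eq_zero_or_pos e with h | h
      · exfalso; subst h; rw [Nat.zero_mul] at hq; omega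
      · exact h
    have h2 : ∀ a ∈ Icc 1 (e - 1), ((a:ℚ))^3 * (((e - a : ℕ)):ℚ)^3 = ((a:ℚ))^3 * ((e:ℚ) - (a:ℚ))^3 := by
      intro a ha
      simp only [mem_Icc] at ha
      rw [Nat.cast_sub (by omega)]
    rw [Finset.sum_congr rfl h2, G_3_3 e he]
  rw [Finset.sum_congr rfl h1]
  simp only [Finset.sum_add_distrib, ← Finset.mul_sum, antidiag_pow]
  all_goals ring

lemma Xexp_0_2 (N : ℕ) :
    (∑ p ∈ (U N).filter (fun p => p.1 < p.2.1), ((p.1:ℚ))^0 * ((p.2.1:ℚ) - (p.1:ℚ))^2) = (1 : ℚ) * Asum N 0 2 + (-2 : ℚ) * Asum N 1 1 + (1 : ℚ) * Asum N 2 0 := by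
  unfold Asum
  simp only [Finset.mul_sum, ← Finset.sum_add_distrib]
  exact Finset.sum_congr rfl fun p _ => by ring

lemma Xexp_0_4 (N : ℕ) :
    (∑ p ∈ (U N).filter (fun p => p.1 < p.2.1), ((p.1:ℚ))^0 * ((p.2.1:ℚ) - (p.1:ℚ))^4) = (1 : ℚ) * Asum N 0 4 + (-4 : ℚ) * Asum N 1 3 + (6 : ℚ) * Asum N 2 2 + (-4 : ℚ) * Asum N 3 1 + (1 : ℚ) * Asum N 4 0 := by
  unfold Asum
  simp only [Finset.mul_sum, ← Finset.sum_add_distrib]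
  exact Finset.sum_congr rfl fun p _ => by ring

lemma Xexp_0_6 (N : ℕ) :
    (∑ p ∈ (U N).filter (fun p => p.1 < p.2.1), ((p.1:ℚ))^0 * ((p.2.1:ℚ) - (p.1:ℚ))^6) = (1 : ℚ) * Asum N 0 6 + (-6 : ℚ) * Asum N 1 5 + (15 : ℚ) * Asum N 2 4 + (-20 : ℚ) * Asum N 3 3 + (15 : ℚ) * Asum N 4 2 + (-6 : ℚ) * Asum N 5 1 + (1 : ℚ) * Asum N 6 0 := by
  unfold Asum
  simp only [Finset.mul_sum, ← Finset.sum_add_distrib]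
  exact Finset.sum_congr rfl fun p _ => by ring

lemma Xexp_1_1 (N : ℕ) :
    (∑ p ∈ (U N).filter (fun p => p.1 < p.2.1), ((p.1:ℚ))^1 * ((p.2.1:ℚ) - (p.1:ℚ))^1) = (1 : ℚ) * Asum N 1 1 + (-1 : ℚ) * Asum N 2 0 := by
  unfold Asum
  simp only [Finset.mul_sum, ← Finset.sum_add_distrib]
  exact Finset.sum_congr rfl fun p _ => by ring

lemma Xexp_1_3 (N : ℕ) :
    (∑ p ∈ (U N).filter (fun p => p.1 < p.2.1), ((p.1:ℚ))^1 * ((p.2.1:ℚ) - (p.1:ℚ))^3) = (1 : ℚ) * Asum N 1 3 + (-3 : ℚ) * Asum N 2 2 + (3 : ℚ) * Asum N 3 1 + (-1 : ℚ) * Asum N 4 0 := by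
  unfold Asum
  simp only [Finset.mul_sum, ← Finset.sum_add_distrib]
  exact Finset.sum_congr rfl fun p _ => by ring

lemma Xexp_1_5 (N : ℕ) :
    (∑ p ∈ (U N).filter (fun p => p.1 < p.2.1), ((p.1:ℚ))^1 * ((p.2.1:ℚ) - (p.1:ℚ))^5) = (1 : ℚ) * Asum N 1 5 + (-5 : ℚ) * Asum N 2 4 + (10 : ℚ) * Asum N 3 3 + (-10 : ℚ) * Asum N 4 2 + (5 : ℚ) * Asum N 5 1 + (-1 : ℚ) * Asum N 6 0 := by
  unfold Asum
  simp only [Finset.mul_sum, ← Finset.sum_add_distrib]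
  exact Finset.sum_congr rfl fun p _ => by ring

lemma Xexp_2_0 (N : ℕ) :
    (∑ p ∈ (U N).filter (fun p => p.1 < p.2.1), ((p.1:ℚ))^2 * ((p.2.1:ℚ) - (p.1:ℚ))^0) = (1 : ℚ) * Asum N 2 0 := by
  unfold Asum
  simp only [Finset.mul_sum, ← Finset.sum_add_distrib]
  exact Finset.sum_congr rfl fun p _ => by ring

lemma Xexp_2_2 (N : ℕ) :
    (∑ p ∈ (U N).filter (fun p => p.1 < p.2.1), ((p.1:ℚ))^2 * ((p.2.1:ℚ) - (p.1:ℚ))^2) = (1 : ℚ) * Asum N 2 2 + (-2 : ℚ) * Asum N 3 1 + (1 : ℚ) * Asum N 4 0 := by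
  unfold Asum
  simp only [Finset.mul_sum, ← Finset.sum_add_distrib]
  exact Finset.sum_congr rfl fun p _ => by ring

lemma Xexp_2_4 (N : ℕ) :
    (∑ p ∈ (U N).filter (fun p => p.1 < p.2.1), ((p.1:ℚ))^2 * ((p.2.1:ℚ) - (p.1:ℚ))^4) = (1 : ℚ) * Asum N 2 4 + (-4 : ℚ) * Asum N 3 3 + (6 : ℚ) * Asum N 4 2 + (-4 : ℚ) * Asum N 5 1 + (1 : ℚ) * Asum N 6 0 := by
  unfold Asum
  simp only [Finset.mul_sum, ← Finset.sum_add_distrib]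
  exact Finset.sum_congr rfl fun p _ => by ring

lemma Xexp_3_1 (N : ℕ) :
    (∑ p ∈ (U N).filter (fun p => p.1 < p.2.1), ((p.1:ℚ))^3 * ((p.2.1:ℚ) - (p.1:ℚ))^1) = (1 : ℚ) * Asum N 3 1 + (-1 : ℚ) * Asum N 4 0 := by
  unfold Asum
  simp only [Finset.mul_sum, ← Finset.sum_add_distrib]
  exact Finset.sum_congr rfl fun p _ => by ring

lemma Xexp_3_3 (N : ℕ) :
    (∑ p ∈ (U N).filter (fun p => p.1 < p.2.1), ((p.1:ℚ))^3 * ((p.2.1:ℚ) - (p.1:ℚ))^3) = (1 : ℚ) * Asum N 3 3 + (-3 : ℚ) * Asum N 4 2 + (3 : ℚ) * Asum N 5 1 + (-1 : ℚ) * Asum N 6 0 := by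
  unfold Asum
  simp only [Finset.mul_sum, ← Finset.sum_add_distrib]
  exact Finset.sum_congr rfl fun p _ => by ring

lemma Xexp_4_0 (N : ℕ) :
    (∑ p ∈ (U N).filter (fun p => p.1 < p.2.1), ((p.1:ℚ))^4 * ((p.2.1:ℚ) - (p.1:ℚ))^0) = (1 : ℚ) * Asum N 4 0 := by
  unfold Asum
  simp only [Finset.mul_sum, ← Finset.sum_add_distrib]
  exact Finset.sum_congr rfl fun p _ => by ring

lemma Xexp_4_2 (N : ℕ) :
    (∑ p ∈ (U N).filter (fun p => p.1 < p.2.1), ((p.1:ℚ))^4 * ((p.2.1:ℚ) - (p.1:ℚ))^2) = (1 : ℚ) * Asum N 4 2 + (-2 : ℚ) * Asum N 5 1 + (1 : ℚ) * Asum N 6 0 := by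
  unfold Asum
  simp only [Finset.mul_sum, ← Finset.sum_add_distrib]
  exact Finset.sum_congr rfl fun p _ => by ring

lemma Xexp_5_1 (N : ℕ) :
    (∑ p ∈ (U N).filter (fun p => p.1 < p.2.1), ((p.1:ℚ))^5 * ((p.2.1:ℚ) - (p.1:ℚ))^1) = (1 : ℚ) * Asum N 5 1 + (-1 : ℚ) * Asum N 6 0 := by
  unfold Asum
  simp only [Finset.mul_sum, ← Finset.sum_add_distrib]
  exact Finset.sum_congr rfl fun p _ => by ring

lemma Xexp_6_0 (N : ℕ) :
    (∑ p ∈ (U N).filter (fun p => p.1 < p.2.1), ((p.1:ℚ))^6 * ((p.2.1:ℚ) - (p.1:ℚ))^0) = (1 : ℚ) * Asum N 6 0 := by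
  unfold Asum
  simp only [Finset.mul_sum, ← Finset.sum_add_distrib]
  exact Finset.sum_congr rfl fun p _ => by ring

lemma conv1 (N : ℕ) : 12 * Ssum N 1 1
    = 5 * ((sigma' 3 N : ℕ) : ℚ) + ((sigma' 1 N : ℕ) : ℚ) - 6 * (N:ℚ) * ((sigma' 1 N : ℕ) : ℚ) := by
  have e1 := eqA 0 2 N (by norm_num)
  have e2 := eqX 0 2 N
  have e3 := eqA 1 1 N (by norm_num)
  have e4 := eqX 1 1 N
  norm_num at e1 e3
  have x1 := Xexp_0_2 N
  have x2 := Xexp_2_0 N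
  have x3 := Xexp_1_1 N
  have f1 := Fdiag_eval_0_2 N
  have f2 := Fdiag_eval_1_1 N
  linarith [e1, e2, e3, e4, x1, x2, x3, f1, f2]

lemma conv2 (N : ℕ) : 240 * Ssum N 1 3
    = 21 * ((sigma' 5 N : ℕ) : ℚ) + 10 * ((sigma' 3 N : ℕ) : ℚ)
      - 30 * (N:ℚ) * ((sigma' 3 N : ℕ) : ℚ) - ((sigma' 1 N : ℕ) : ℚ) := by
  have e1 := eqA 0 4 N (by norm_num)
  have e2 := eqX 0 4 N
  have e3 := eqA 1 3 N (by norm_num)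
  have e4 := eqX 1 3 N
  have e5 := eqA 2 2 N (by norm_num)
  have e6 := eqX 2 2 N
  norm_num at e1 e3 e5
  have x1 := Xexp_0_4 N
  have x2 := Xexp_4_0 N
  have x3 := Xexp_1_3 N
  have x4 := Xexp_3_1 N
  have x5 := Xexp_2_2 N
  have f1 := Fdiag_eval_0_4 N
  have f2 := Fdiag_eval_1_3 N
  have f3 := Fdiag_eval_2_2 N
  linarith [e1, e2, e3, e4, e5, e6, x1, x2, x3, x4, x5, f1, f2, f3]

lemma conv3 (N : ℕ) : 504 * Ssum N 1 5 - 2400 * Ssum N 3 3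
    = 20 * ((sigma' 3 N : ℕ) : ℚ) + 21 * ((sigma' 5 N : ℕ) : ℚ)
      - 42 * (N:ℚ) * ((sigma' 5 N : ℕ) : ℚ) + ((sigma' 1 N : ℕ) : ℚ) := by
  have e1 := eqA 0 6 N (by norm_num)
  have e2 := eqX 0 6 N
  have e3 := eqA 1 5 N (by norm_num)
  have e4 := eqX 1 5 N
  have e5 := eqA 2 4 N (by norm_num)
  have e6 := eqX 2 4 N
  have e7 := eqA 3 3 N (by norm_num)
  have e8 := eqX 3 3 N
  norm_num at e1 e3 e5 e7
  have x1 := Xexp_0_6 N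
  have x2 := Xexp_6_0 N
  have x3 := Xexp_1_5 N
  have x4 := Xexp_5_1 N
  have x5 := Xexp_2_4 N
  have x6 := Xexp_4_2 N
  have x7 := Xexp_3_3 N
  have f1 := Fdiag_eval_0_6 N
  have f2 := Fdiag_eval_1_5 N
  have f3 := Fdiag_eval_2_4 N
  have f4 := Fdiag_eval_3_3 N
  linarith [e1, e2, e3, e4, e5, e6, e7, e8, x1, x2, x3, x4, x5, x6, x7, f1, f2, f3, f4]

lemma coeff_E₂ (n : ℕ) : PowerSeries.coeff n E₂ = if n = 0 then 1 else -24 * (sigma' 1 n : ℚ) := by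
  rw [E₂, PowerSeries.coeff_mk]
lemma coeff_E₄ (n : ℕ) : PowerSeries.coeff n E₄ = if n = 0 then 1 else 240 * (sigma' 3 n : ℚ) := by
  rw [E₄, PowerSeries.coeff_mk]
lemma coeff_E₆ (n : ℕ) : PowerSeries.coeff n E₆ = if n = 0 then 1 else -504 * (sigma' 5 n : ℚ) := by
  rw [E₆, PowerSeries.coeff_mk]

lemma part1 : Dq E₂ = (1 / 12 : ℚ) • (E₂ ^ 2 - E₄) := by
  refine PowerSeries.ext fun n => ?_
  simp only [map_smul, map_sub, smul_eq_mul, pow_two, PowerSeries.coeff_mul,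
    Finset.Nat.sum_antidiagonal_eq_sum_range_succ_mk, Dq, PowerSeries.coeff_mk]
  cases n with
  | zero => simp [coeff_E₂, coeff_E₄]
  | succ m =>
    rw [Finset.sum_range_succ, Finset.sum_range_succ']
    have hset : ∀ k ∈ range m, PowerSeries.coeff (k+1) E₂ * PowerSeries.coeff (m+1-(k+1)) E₂
        = (576:ℚ) * (((sigma' 1 (k+1) : ℕ):ℚ) * ((sigma' 1 (m-k) : ℕ):ℚ)) := by
      intro k hk
      simp only [mem_range] at hk
      rw [coeff_E₂, coeff_E₂, if_neg (by omega), if_neg (by omega),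
        show m+1-(k+1) = m-k from by omega]
      ring
    rw [Finset.sum_congr rfl hset, ← Finset.mul_sum, bridge 1 1 m,
      show (∑ p ∈ U (m+1), ((p.1:ℚ))^1 * ((p.2.1:ℚ))^1) = Ssum (m+1) 1 1 from rfl]
    have h1 : PowerSeries.coeff (m+1) E₂ = -24 * ((sigma' 1 (m+1) : ℕ):ℚ) := by
      rw [coeff_E₂, if_neg (by omega)]
    have h0 : PowerSeries.coeff 0 E₂ = 1 := by rw [coeff_E₂, if_pos rfl]
    have h4 : PowerSeries.coeff (m+1) E₄ = 240 * ((sigma' 3 (m+1) : ℕ):ℚ) := by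
      rw [coeff_E₄, if_neg (by omega)]
    rw [show m+1-(m+1) = 0 from by omega, show m+1-0 = m+1 from by omega, h0, h1, h4]
    linarith [conv1 (m+1)]

lemma part2 : Dq E₄ = (1 / 3 : ℚ) • (E₂ * E₄ - E₆) := by
  refine PowerSeries.ext fun n => ?_
  simp only [map_smul, map_sub, smul_eq_mul, PowerSeries.coeff_mul,
    Finset.Nat.sum_antidiagonal_eq_sum_range_succ_mk, Dq, PowerSeries.coeff_mk]
  cases n with
  | zero => simp [coeff_E₂, coeff_E₄, coeff_E₆]
  | succ m =>
    rw [Finset.sum_range_succ, Finset.sum_range_succ']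
    have hset : ∀ k ∈ range m, PowerSeries.coeff (k+1) E₂ * PowerSeries.coeff (m+1-(k+1)) E₄
        = (-5760:ℚ) * (((sigma' 1 (k+1) : ℕ):ℚ) * ((sigma' 3 (m-k) : ℕ):ℚ)) := by
      intro k hk
      simp only [mem_range] at hk
      rw [coeff_E₂, coeff_E₄, if_neg (by omega), if_neg (by omega),
        show m+1-(k+1) = m-k from by omega]
      ring
    rw [Finset.sum_congr rfl hset, ← Finset.mul_sum, bridge 1 3 m,
      show (∑ p ∈ U (m+1), ((p.1:ℚ))^1 * ((p.2.1:ℚ))^3) = Ssum (m+1) 1 3 from rfl]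
    have h1 : PowerSeries.coeff (m+1) E₂ = -24 * ((sigma' 1 (m+1) : ℕ):ℚ) := by
      rw [coeff_E₂, if_neg (by omega)]
    have h0 : PowerSeries.coeff 0 E₂ = 1 := by rw [coeff_E₂, if_pos rfl]
    have h4 : PowerSeries.coeff (m+1) E₄ = 240 * ((sigma' 3 (m+1) : ℕ):ℚ) := by
      rw [coeff_E₄, if_neg (by omega)]
    have h40 : PowerSeries.coeff 0 E₄ = 1 := by rw [coeff_E₄, if_pos rfl]
    have h6 : PowerSeries.coeff (m+1) E₆ = -504 * ((sigma' 5 (m+1) : ℕ):ℚ) := by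
      rw [coeff_E₆, if_neg (by omega)]
    rw [show m+1-(m+1) = 0 from by omega, show m+1-0 = m+1 from by omega, h0, h1, h4, h40, h6]
    linarith [conv2 (m+1)]

lemma part3 : Dq E₆ = (1 / 2 : ℚ) • (E₂ * E₆ - E₄ ^ 2) := by
  refine PowerSeries.ext fun n => ?_
  simp only [map_smul, map_sub, smul_eq_mul, pow_two, PowerSeries.coeff_mul,
    Finset.Nat.sum_antidiagonal_eq_sum_range_succ_mk, Dq, PowerSeries.coeff_mk]
  cases n with
  | zero => simp [coeff_E₂, coeff_E₄, coeff_E₆]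
  | succ m =>
    rw [Finset.sum_range_succ, Finset.sum_range_succ', Finset.sum_range_succ (n := m+1),
      Finset.sum_range_succ']
    have hset : ∀ k ∈ range m, PowerSeries.coeff (k+1) E₂ * PowerSeries.coeff (m+1-(k+1)) E₆
        = (12096:ℚ) * (((sigma' 1 (k+1) : ℕ):ℚ) * ((sigma' 5 (m-k) : ℕ):ℚ)) := by
      intro k hk
      simp only [mem_range] at hk
      rw [coeff_E₂, coeff_E₆, if_neg (by omega), if_neg (by omega),
        show m+1-(k+1) = m-k from by omega]
      ring
    have hset2 : ∀ k ∈ range m, PowerSeries.coeff (k+1) E₄ * PowerSeries.coeff (m+1-(k+1)) E₄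
        = (57600:ℚ) * (((sigma' 3 (k+1) : ℕ):ℚ) * ((sigma' 3 (m-k) : ℕ):ℚ)) := by
      intro k hk
      simp only [mem_range] at hk
      rw [coeff_E₄, coeff_E₄, if_neg (by omega), if_neg (by omega),
        show m+1-(k+1) = m-k from by omega]
      ring
    rw [Finset.sum_congr rfl hset, Finset.sum_congr rfl hset2, ← Finset.mul_sum, ← Finset.mul_sum,
      bridge 1 5 m, bridge 3 3 m,
      show (∑ p ∈ U (m+1), ((p.1:ℚ))^1 * ((p.2.1:ℚ))^5) = Ssum (m+1) 1 5 from rfl,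
      show (∑ p ∈ U (m+1), ((p.1:ℚ))^3 * ((p.2.1:ℚ))^3) = Ssum (m+1) 3 3 from rfl]
    have h1 : PowerSeries.coeff (m+1) E₂ = -24 * ((sigma' 1 (m+1) : ℕ):ℚ) := by
      rw [coeff_E₂, if_neg (by omega)]
    have h0 : PowerSeries.coeff 0 E₂ = 1 := by rw [coeff_E₂, if_pos rfl]
    have h4 : PowerSeries.coeff (m+1) E₄ = 240 * ((sigma' 3 (m+1) : ℕ):ℚ) := by
      rw [coeff_E₄, if_neg (by omega)]
    have h40 : PowerSeries.coeff 0 E₄ = 1 := by rw [coeff_E₄, if_pos rfl]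
    have h6 : PowerSeries.coeff (m+1) E₆ = -504 * ((sigma' 5 (m+1) : ℕ):ℚ) := by
      rw [coeff_E₆, if_neg (by omega)]
    have h60 : PowerSeries.coeff 0 E₆ = 1 := by rw [coeff_E₆, if_pos rfl]
    rw [show m+1-(m+1) = 0 from by omega, show m+1-0 = m+1 from by omega,
      h0, h1, h4, h40, h6, h60]
    linarith [conv3 (m+1)]


/-- Ramanujan's identities: `D(E₂) = (E₂² − E₄)/12`, `D(E₄) = (E₂E₄ − E₆)/3`,
`D(E₆) = (E₂E₆ − E₄²)/2`. -/
theorem statement11 :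
    Dq E₂ = (1 / 12 : ℚ) • (E₂ ^ 2 - E₄) ∧
    Dq E₄ = (1 / 3 : ℚ) • (E₂ * E₄ - E₆) ∧
    Dq E₆ = (1 / 2 : ℚ) • (E₂ * E₆ - E₄ ^ 2) := by
  exact ⟨part1, part2, part3⟩
end
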